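/- arXiv:2212.03113 — 8 statements merged into one kernel-verified Lean document; each statement's English description precedes it below -/
import Mathlib

section
/- Let W : ℤ → ℝ, E ∈ ℝ, and let N₁ ≤ N₂ be integers with N = N₂ − N₁ + 1 and det(H_{[N₁,N₂]} − E·I) ≠ 0. Then for all integers n₁, n₂ with N₁ ≤ n₁ ≤ n₂ ≤ N₂, |G_{[N₁,N₂]}(E)(n₁,n₂)| = |P_{n₁−N₁}^W(E, N₁) · P_{N₂−n₂}^W(E, n₂+1)| / |P_N^W(E, N₁)|. -/
noncomputable section

/-- The restriction `H_{[N₁,N₂]}` of the discrete Schrödinger operator with potential `W`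
to the box `[N₁,N₂]` with Dirichlet boundary conditions: the tridiagonal matrix with
diagonal `W(N₁), …, W(N₂)` and `1` on the sub- and super-diagonals. -/
def boxH (W : ℤ → ℝ) (N₁ N₂ : ℤ) :
    Matrix (Fin (N₂ - N₁ + 1).toNat) (Fin (N₂ - N₁ + 1).toNat) ℝ :=
  fun i j =>
    if i = j then W (N₁ + (i : ℕ))
    else if ((i : ℕ) : ℤ) = ((j : ℕ) : ℤ) + 1 ∨ ((j : ℕ) : ℤ) = ((i : ℕ) : ℤ) + 1 then 1
    else 0

/-- The Green's function of the box restriction: the matrix inverse of `H_{[N₁,N₂]} − E·I`. -/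
def boxGreen (W : ℤ → ℝ) (N₁ N₂ : ℤ) (E : ℝ) :
    Matrix (Fin (N₂ - N₁ + 1).toNat) (Fin (N₂ - N₁ + 1).toNat) ℝ :=
  (boxH W N₁ N₂ - E • (1 : Matrix (Fin (N₂ - N₁ + 1).toNat) (Fin (N₂ - N₁ + 1).toNat) ℝ))⁻¹

/-- The `k × k` tridiagonal matrix `D_k^W(n)` with diagonal `W(n), …, W(n+k-1)` and
`1` on the sub- and super-diagonals. -/
def jacBox (W : ℤ → ℝ) (k : ℕ) (n : ℤ) : Matrix (Fin k) (Fin k) ℝ :=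
  fun i j =>
    if i = j then W (n + (i : ℕ))
    else if ((i : ℕ) : ℤ) = ((j : ℕ) : ℤ) + 1 ∨ ((j : ℕ) : ℤ) = ((i : ℕ) : ℤ) + 1 then 1
    else 0

/-- `P_k^W(E,n) = det(E·I_k − D_k^W(n))` for `k ≥ 0`, with the convention `P_k = 0` for
`k < 0` (and `P_0 = 1`, the determinant of the empty matrix). -/
def Pdet (W : ℤ → ℝ) (E : ℝ) (k : ℤ) (n : ℤ) : ℝ :=
  if 0 ≤ k then
    Matrix.det (E • (1 : Matrix (Fin k.toNat) (Fin k.toNat) ℝ) - jacBox W k.toNat n)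
  else 0

namespace Stmt8Aux

/-- entry function on ℕ for a tridiagonal matrix -/
def ent (d : ℤ → ℝ) (s : ℤ) (p q : ℕ) : ℝ :=
  if p = q then d (s + p) else if p = q + 1 ∨ q = p + 1 then 1 else 0

/-- abstract tridiagonal matrix with diagonal `d(s), d(s+1), …` and 1 off-diagonals -/
def trid (d : ℤ → ℝ) (k : ℕ) (s : ℤ) : Matrix (Fin k) (Fin k) ℝ :=
  fun i j => ent d s (i : ℕ) (j : ℕ)

lemma ent_shift (d : ℤ → ℝ) (s : ℤ) (t p q : ℕ) :
    ent d s (t + p) (t + q) = ent d (s + t) p q := by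
  have h1 : (t + p = t + q) ↔ (p = q) := by omega
  have h2 : (t + p = t + q + 1 ∨ t + q = t + p + 1) ↔ (p = q + 1 ∨ q = p + 1) := by omega
  have h3 : (s + ((t + p : ℕ) : ℤ)) = (s + (t : ℕ)) + (p : ℕ) := by push_cast; ring
  simp only [ent, h1, h2, h3]

lemma succAbove_val {n : ℕ} (p : Fin (n + 1)) (i : Fin n) :
    ((p.succAbove i : Fin (n + 1)) : ℕ) = if (i : ℕ) < (p : ℕ) then (i : ℕ) else (i : ℕ) + 1 := by
  rw [Fin.succAbove]
  by_cases h : (i : ℕ) < (p : ℕ)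
  · rw [if_pos (by simpa [Fin.lt_def] using h), if_pos h]; rfl
  · rw [if_neg (by simpa [Fin.lt_def] using h), if_neg h]; rfl

lemma minor_det (d : ℤ → ℝ) (n : ℕ) (s : ℤ) (a b : Fin (n + 1)) (hab : a ≤ b) :
    ((trid d (n + 1) s).submatrix b.succAbove a.succAbove).det
      = (trid d (a : ℕ) s).det * (trid d (n - (b : ℕ)) (s + (b : ℕ) + 1)).det := by
  set M := (trid d (n + 1) s).submatrix b.succAbove a.succAbove with hM
  have hb : (b : ℕ) ≤ n := Nat.lt_succ_iff.mp b.isLt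
  have hab' : (a : ℕ) ≤ (b : ℕ) := hab
  set a' := (a : ℕ) with ha'
  set b' := (b : ℕ) with hb'
  have hMval : ∀ i j : Fin n, M i j =
      ent d s (if (i : ℕ) < b' then (i : ℕ) else (i : ℕ) + 1)
        (if (j : ℕ) < a' then (j : ℕ) else (j : ℕ) + 1) := by
    intro i j
    show ent d s ((b.succAbove i : Fin (n+1)) : ℕ) ((a.succAbove j : Fin (n+1)) : ℕ) = _
    rw [succAbove_val, succAbove_val]
  have h1 : a' + ((b' - a') + (n - b')) = n := by omega
  let e : Fin a' ⊕ Fin ((b' - a') + (n - b')) ≃ Fin n := finSumFinEquiv.trans (finCongr h1)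
  have he_inl : ∀ i : Fin a', ((e (Sum.inl i)) : ℕ) = (i : ℕ) := by
    intro i; simp [e]
  have he_inr : ∀ j : Fin ((b' - a') + (n - b')), ((e (Sum.inr j)) : ℕ) = a' + (j : ℕ) := by
    intro j; simp [e]
  rw [← Matrix.det_submatrix_equiv_self e M]
  have h11 : Matrix.toBlocks₁₁ (M.submatrix e e) = trid d a' s := by
    ext i j
    have hi : (i : ℕ) < a' := i.isLt
    have hj : (j : ℕ) < a' := j.isLt
    show M (e (Sum.inl i)) (e (Sum.inl j)) = _
    rw [hMval, he_inl, he_inl, if_pos (by omega), if_pos (by omega)]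
    rfl
  have h12 : Matrix.toBlocks₁₂ (M.submatrix e e) = 0 := by
    ext i j
    have hi : (i : ℕ) < a' := i.isLt
    show M (e (Sum.inl i)) (e (Sum.inr j)) = 0
    rw [hMval, he_inl, he_inr, if_pos (by omega), if_neg (by omega)]
    simp only [ent]
    rw [if_neg (by omega), if_neg (by omega)]
  have hblock : (M.submatrix e e) = Matrix.fromBlocks
      (Matrix.toBlocks₁₁ (M.submatrix e e)) 0
      (Matrix.toBlocks₂₁ (M.submatrix e e)) (Matrix.toBlocks₂₂ (M.submatrix e e)) := by
    rw [← h12, Matrix.fromBlocks_toBlocks]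
  rw [hblock, Matrix.det_fromBlocks_zero₁₂, h11]
  congr 1
  -- second split
  set B := Matrix.toBlocks₂₂ (M.submatrix e e) with hB
  have hBval : ∀ i j : Fin ((b' - a') + (n - b')), B i j =
      ent d s (if a' + (i : ℕ) < b' then a' + (i : ℕ) else a' + (i : ℕ) + 1)
        (a' + (j : ℕ) + 1) := by
    intro i j
    show M (e (Sum.inr i)) (e (Sum.inr j)) = _
    rw [hMval, he_inr, he_inr,
      show (if a' + (j : ℕ) < a' then a' + (j : ℕ) else a' + (j : ℕ) + 1) = a' + (j : ℕ) + 1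
        from if_neg (by omega)]
  let e₂ : Fin (b' - a') ⊕ Fin (n - b') ≃ Fin ((b' - a') + (n - b')) := finSumFinEquiv
  have he2_inl : ∀ i : Fin (b' - a'), ((e₂ (Sum.inl i)) : ℕ) = (i : ℕ) := by
    intro i; simp [e₂]
  have he2_inr : ∀ j : Fin (n - b'), ((e₂ (Sum.inr j)) : ℕ) = (b' - a') + (j : ℕ) := by
    intro j; simp [e₂]
  rw [← Matrix.det_submatrix_equiv_self e₂ B]
  have g12 : Matrix.toBlocks₁₂ (B.submatrix e₂ e₂) = 0 := by
    ext i j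
    have hi : (i : ℕ) < b' - a' := i.isLt
    show B (e₂ (Sum.inl i)) (e₂ (Sum.inr j)) = 0
    rw [hBval, he2_inl, he2_inr, if_pos (by omega)]
    simp only [ent]
    rw [if_neg (by omega), if_neg (by omega)]
  have g22 : Matrix.toBlocks₂₂ (B.submatrix e₂ e₂) = trid d (n - b') (s + b' + 1) := by
    ext i j
    show B (e₂ (Sum.inr i)) (e₂ (Sum.inr j)) = _
    rw [hBval, he2_inr, he2_inr, if_neg (by omega)]
    have hr : a' + ((b' - a') + (i : ℕ)) + 1 = (b' + 1) + (i : ℕ) := by omega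
    have hc : a' + ((b' - a') + (j : ℕ)) + 1 = (b' + 1) + (j : ℕ) := by omega
    rw [hr, hc, ent_shift]
    show ent d (s + ((b' : ℕ) + 1 : ℕ)) _ _ = ent d (s + (b' : ℕ) + 1) _ _
    congr 1
    push_cast
    ring
  have gblock : (B.submatrix e₂ e₂) = Matrix.fromBlocks
      (Matrix.toBlocks₁₁ (B.submatrix e₂ e₂)) 0
      (Matrix.toBlocks₂₁ (B.submatrix e₂ e₂)) (Matrix.toBlocks₂₂ (B.submatrix e₂ e₂)) := by
    rw [← g12, Matrix.fromBlocks_toBlocks]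
  rw [gblock, Matrix.det_fromBlocks_zero₁₂, g22]
  have gL : (Matrix.toBlocks₁₁ (B.submatrix e₂ e₂)).det = 1 := by
    have hlow : (Matrix.toBlocks₁₁ (B.submatrix e₂ e₂)).BlockTriangular OrderDual.toDual := by
      intro i j hij
      have hij' : (i : ℕ) < (j : ℕ) := hij
      have hi : (i : ℕ) < b' - a' := i.isLt
      show B (e₂ (Sum.inl i)) (e₂ (Sum.inl j)) = 0
      rw [hBval, he2_inl, he2_inl, if_pos (by omega)]
      simp only [ent]
      rw [if_neg (by omega), if_neg (by omega)]
    rw [Matrix.det_of_lowerTriangular _ hlow]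
    apply Finset.prod_eq_one
    intro i _
    have hi : (i : ℕ) < b' - a' := i.isLt
    show B (e₂ (Sum.inl i)) (e₂ (Sum.inl i)) = 1
    rw [hBval, he2_inl,
      show (if a' + (i : ℕ) < b' then a' + (i : ℕ) else a' + (i : ℕ) + 1) = a' + (i : ℕ)
        from if_pos (by omega)]
    simp only [ent]
    rw [if_neg (show ¬(a' + (i : ℕ) = a' + (i : ℕ) + 1) by omega)]
    simp
  rw [gL, one_mul]

lemma inv_abs (d : ℤ → ℝ) (n : ℕ) (s : ℤ) (a b : Fin (n + 1)) (hab : a ≤ b)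
    (hdet : (trid d (n + 1) s).det ≠ 0) :
    |(trid d (n + 1) s)⁻¹ a b| =
      |(trid d (a : ℕ) s).det| * |(trid d (n - (b : ℕ)) (s + (b : ℕ) + 1)).det| /
        |(trid d (n + 1) s).det| := by
  rw [Matrix.inv_def]
  have : (Ring.inverse (trid d (n + 1) s).det • (trid d (n + 1) s).adjugate) a b
      = Ring.inverse (trid d (n + 1) s).det * (trid d (n + 1) s).adjugate a b := rfl
  rw [this, Ring.inverse_eq_inv, Matrix.adjugate_fin_succ_eq_det_submatrix,
    minor_det d n s a b hab]
  rw [abs_mul, abs_mul, abs_mul, abs_inv, abs_pow, abs_neg, abs_one, one_pow, one_mul,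
    div_eq_mul_inv]
  ring

lemma inv_abs' (d : ℤ → ℝ) (k : ℕ) (s : ℤ) (x y : ℕ) (hxy : x ≤ y) (hy : y < k)
    (hdet : (trid d k s).det ≠ 0) :
    |(trid d k s)⁻¹ ⟨x, by omega⟩ ⟨y, hy⟩| =
      |(trid d x s).det| * |(trid d (k - 1 - y) (s + y + 1)).det| / |(trid d k s).det| := by
  obtain ⟨n, rfl⟩ : ∃ n, k = n + 1 := ⟨k - 1, by omega⟩
  have h := inv_abs d n s ⟨x, by omega⟩ ⟨y, hy⟩ hxy hdet
  simpa [show n + 1 - 1 - y = n - y by omega] using h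

lemma boxH_eq (W : ℤ → ℝ) (N₁ N₂ : ℤ) (E : ℝ) :
    boxH W N₁ N₂ - E • (1 : Matrix (Fin (N₂ - N₁ + 1).toNat) (Fin (N₂ - N₁ + 1).toNat) ℝ)
      = trid (fun m => W m - E) (N₂ - N₁ + 1).toNat N₁ := by
  ext i j
  simp only [boxH, trid, ent, Matrix.sub_apply, Matrix.smul_apply, Matrix.one_apply,
    smul_eq_mul, Fin.ext_iff]
  split_ifs <;> (try ring) <;> exfalso <;> omega

lemma Pdet_abs (W : ℤ → ℝ) (E : ℝ) (k : ℤ) (n : ℤ) (hk : 0 ≤ k) :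
    |Pdet W E k n| = |(trid (fun m => W m - E) k.toNat n).det| := by
  rw [Pdet, if_pos hk]
  have h : E • (1 : Matrix (Fin k.toNat) (Fin k.toNat) ℝ) - jacBox W k.toNat n
      = -(trid (fun m => W m - E) k.toNat n) := by
    ext i j
    simp only [jacBox, trid, ent, Matrix.sub_apply, Matrix.smul_apply, Matrix.one_apply,
      Matrix.neg_apply, smul_eq_mul, Fin.ext_iff]
    split_ifs <;> (try ring) <;> exfalso <;> omega
  rw [h, Matrix.det_neg, abs_mul, abs_pow, abs_neg, abs_one, one_pow, one_mul]

end Stmt8Aux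

open Stmt8Aux

theorem stmt8 (W : ℤ → ℝ) (E : ℝ) (N₁ N₂ : ℤ) (hN : N₁ ≤ N₂)
    (hdet : (boxH W N₁ N₂ -
      E • (1 : Matrix (Fin (N₂ - N₁ + 1).toNat) (Fin (N₂ - N₁ + 1).toNat) ℝ)).det ≠ 0)
    (n₁ n₂ : ℤ) (h1 : N₁ ≤ n₁) (h12 : n₁ ≤ n₂) (h2 : n₂ ≤ N₂) :
    |boxGreen W N₁ N₂ E ⟨(n₁ - N₁).toNat, by omega⟩ ⟨(n₂ - N₁).toNat, by omega⟩| =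
      |Pdet W E (n₁ - N₁) N₁ * Pdet W E (N₂ - n₂) (n₂ + 1)| /
        |Pdet W E (N₂ - N₁ + 1) N₁| := by
  have hA := boxH_eq W N₁ N₂ E
  rw [hA] at hdet
  have key := inv_abs' (fun m => W m - E) (N₂ - N₁ + 1).toNat N₁
    (n₁ - N₁).toNat (n₂ - N₁).toNat (by omega) (by omega) hdet
  rw [show (N₂ - N₁ + 1).toNat - 1 - (n₂ - N₁).toNat = (N₂ - n₂).toNat by omega,
    show N₁ + ((n₂ - N₁).toNat : ℤ) + 1 = n₂ + 1 by omega] at key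
  rw [show boxGreen W N₁ N₂ E = (trid (fun m => W m - E) (N₂ - N₁ + 1).toNat N₁)⁻¹ by
      rw [boxGreen, hA]]
  rw [key, abs_mul,
    Pdet_abs W E (n₁ - N₁) N₁ (by omega),
    Pdet_abs W E (N₂ - n₂) (n₂ + 1) (by omega),
    Pdet_abs W E (N₂ - N₁ + 1) N₁ (by omega)]
end
end

section
/- Let V, g : ℤ → ℝ and E ∈ ℝ. Suppose there is C' > 0 such that the unperturbed transfer matrices satisfy ‖M_k(n)‖ ≤ C'·k for every n ∈ ℤ and every k ≥ 1 (at most linear growth, as holds for every energy in the spectrum in the almost reducible regime), and suppose Σ_{n∈ℤ} (1+|n|)·|g(n)| < ∞. Then there is a constant C'' > 0, depending only on C' and Σ_{n∈ℤ}(1+|n|)|g(n)|, such that the perturbed transfer matrices satisfy ‖M̃_k(0)‖ ≤ C''·k for every k ≥ 1. -/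
attribute [local instance] Matrix.normedAddCommGroup

noncomputable section

/-- The `k`-step transfer matrix of the potential `W` at energy `E`, starting at site `n`:
`M_k(n) = S(n+k-1) ⋯ S(n)` where `S(j) = [[E - W j, -1], [1, 0]]`, and `M_0(n) = I`. -/
def tm (W : ℤ → ℝ) (E : ℝ) : ℕ → ℤ → Matrix (Fin 2) (Fin 2) ℝ
  | 0, _ => 1
  | k + 1, n => tm W E k (n + 1) * !![E - W n, -1; 1, 0]

private lemma tm_succ_left (W : ℤ → ℝ) (E : ℝ) (k : ℕ) (n : ℤ) :
    tm W E (k+1) n = !![E - W (n+k), -1; 1, 0] * tm W E k n := by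
  induction k generalizing n with
  | zero => simp [tm]
  | succ k ih =>
    show tm W E (k+1) (n+1) * !![E - W n, -1; 1, 0] = _
    rw [ih (n+1)]
    have h : (n + 1 + (k:ℤ)) = n + ((k+1:ℕ):ℤ) := by push_cast; ring
    rw [h, mul_assoc]
    rfl

private lemma duhamel (V g : ℤ → ℝ) (E : ℝ) (k : ℕ) (n : ℤ) :
    tm (fun j => V j + g j) E k n = tm V E k n +
      ∑ j ∈ Finset.range k,
        tm V E (k-1-j) (n+j+1) * !![-(g (n+j)), 0; 0, 0] * tm (fun j => V j + g j) E j n := by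
  induction k with
  | zero => simp [tm]
  | succ k ih =>
    have hS : !![E - (V (n+(k:ℤ)) + g (n+(k:ℤ))), -1; 1, 0]
        = !![E - V (n+(k:ℤ)), -1; 1, 0] + !![-(g (n+(k:ℤ))), 0; 0, 0] := by
      ext i j
      fin_cases i <;> fin_cases j <;> simp <;> ring
    have hsum : ∀ j ∈ Finset.range k,
        tm V E (k+1-1-j) (n+j+1) * !![-(g (n+j)), 0; 0, 0] * tm (fun j => V j + g j) E j n
        = !![E - V (n+(k:ℤ)), -1; 1, 0] *
          (tm V E (k-1-j) (n+j+1) * !![-(g (n+j)), 0; 0, 0] * tm (fun j => V j + g j) E j n) := by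
      intro j hj
      rw [Finset.mem_range] at hj
      have h1 : k + 1 - 1 - j = (k - 1 - j) + 1 := by omega
      have h2 : (n + j + 1) + ((k-1-j : ℕ) : ℤ) = n + k := by omega
      rw [h1, tm_succ_left, h2, mul_assoc, mul_assoc, mul_assoc]
    have hlast : tm V E (k+1-1-k) (n+(k:ℤ)+1) * !![-(g (n+(k:ℤ))), 0; 0, 0] *
        tm (fun j => V j + g j) E k n
        = !![-(g (n+(k:ℤ))), 0; 0, 0] * tm (fun j => V j + g j) E k n := by
      have hzero : k + 1 - 1 - k = 0 := by omega
      rw [hzero]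
      show (1 : Matrix (Fin 2) (Fin 2) ℝ) * _ * _ = _
      rw [one_mul]
    rw [tm_succ_left (fun j => V j + g j) E k n]
    simp only [hS]
    rw [add_mul, Finset.sum_range_succ, tm_succ_left V E k n,
      Finset.sum_congr rfl hsum, hlast, ← Finset.mul_sum, ih, mul_add, add_assoc]

private lemma norm_mul_le2 (A B : Matrix (Fin 2) (Fin 2) ℝ) : ‖A * B‖ ≤ 2 * ‖A‖ * ‖B‖ := by
  rw [Matrix.norm_le_iff (by positivity)]
  intro i j
  rw [Matrix.mul_apply]
  calc ‖∑ k, A i k * B k j‖ ≤ ∑ k, ‖A i k * B k j‖ := norm_sum_le _ _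
    _ ≤ ∑ _k : Fin 2, ‖A‖ * ‖B‖ := Finset.sum_le_sum fun k _ => by
        rw [norm_mul]
        exact mul_le_mul (Matrix.norm_entry_le_entrywise_sup_norm A)
          (Matrix.norm_entry_le_entrywise_sup_norm B) (norm_nonneg _) (norm_nonneg _)
    _ = 2 * ‖A‖ * ‖B‖ := by simp; ring

private lemma norm_one_le2 : ‖(1 : Matrix (Fin 2) (Fin 2) ℝ)‖ ≤ 1 := by
  rw [Matrix.norm_le_iff (by norm_num)]
  intro i j
  rw [Matrix.one_apply]
  split <;> simp

private lemma norm_pert_le (x : ℝ) : ‖!![-x, 0; 0, 0]‖ ≤ |x| := by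
  rw [Matrix.norm_le_iff (abs_nonneg x)]
  intro i j
  fin_cases i <;> fin_cases j <;> simp

theorem stmt9 (V g : ℤ → ℝ) (E : ℝ) (C' : ℝ) (hC' : 0 < C')
    (hM : ∀ n : ℤ, ∀ k : ℕ, 1 ≤ k → ‖tm V E k n‖ ≤ C' * k)
    (hg : Summable fun n : ℤ => (1 + |(n : ℝ)|) * |g n|) :
    ∃ C'' > 0, ∀ k : ℕ, 1 ≤ k → ‖tm (fun j => V j + g j) E k 0‖ ≤ C'' * k := by
  set D := max C' 1 with hDdef
  have hD1 : (1:ℝ) ≤ D := le_max_right _ _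
  have hD0 : (0:ℝ) < D := lt_of_lt_of_le one_pos hD1
  have hCD : C' ≤ D := le_max_left _ _
  set S := ∑' n : ℤ, (1 + |(n:ℝ)|) * |g n| with hSdef
  have hS0 : 0 ≤ S := tsum_nonneg fun n => by positivity
  set w : ℕ → ℝ := fun j => (1 + (j:ℝ)) * |g (j:ℤ)| with hwdef
  have hw0 : ∀ j, 0 ≤ w j := fun j => by simp only [hwdef]; positivity
  -- partial sums of w are bounded by S
  have hpart : ∀ k : ℕ, ∑ j ∈ Finset.range k, w j ≤ S := by
    intro k
    have h := Summable.sum_le_tsum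
      ((Finset.range k).map ⟨(Nat.cast : ℕ → ℤ), Nat.cast_injective⟩)
      (fun n _ => by positivity) hg
    rw [Finset.sum_map] at h
    refine le_trans (le_of_eq (Finset.sum_congr rfl fun j _ => ?_)) h
    simp [hwdef, abs_of_nonneg]
  set Pp : ℕ → ℝ := fun k => ∏ j ∈ Finset.range k, (1 + 4*D*w j) with hPdef
  have hP1 : ∀ k, (1:ℝ) ≤ Pp k := by
    intro k
    simp only [hPdef]
    calc (1:ℝ) = ∏ _j ∈ Finset.range k, (1:ℝ) := by simp
      _ ≤ ∏ j ∈ Finset.range k, (1 + 4*D*w j) :=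
          Finset.prod_le_prod (fun j _ => by norm_num) (fun j _ => by nlinarith [hw0 j])
  have hPle : ∀ k, Pp k ≤ Real.exp (4*D*S) := by
    intro k
    have h1 : Pp k ≤ ∏ j ∈ Finset.range k, Real.exp (4*D*w j) := by
      simp only [hPdef]
      apply Finset.prod_le_prod
      · intro j _; nlinarith [hw0 j]
      · intro j _
        have := Real.add_one_le_exp (4*D*w j)
        linarith
    rw [← Real.exp_sum] at h1
    refine h1.trans (Real.exp_le_exp.mpr ?_)
    rw [← Finset.mul_sum]
    have := hpart k
    nlinarith [hpart k]
  have hPsucc : ∀ j, Pp (j+1) - Pp j = 4*D*w j * Pp j := by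
    intro j
    have : Pp (j+1) = Pp j * (1 + 4*D*w j) := Finset.prod_range_succ _ j
    rw [this]; ring
  -- uniform bound on unperturbed transfer matrices
  have htm : ∀ (m : ℕ) (x : ℤ), ‖tm V E m x‖ ≤ D * (m + 1) := by
    intro m x
    cases m with
    | zero =>
      refine le_trans norm_one_le2 ?_
      simp only [Nat.cast_zero]
      nlinarith
    | succ m =>
      have h := hM x (m+1) (by omega)
      refine h.trans ?_
      have : (0:ℝ) ≤ ((m:ℝ)+1) := by positivity
      push_cast
      nlinarith
  set u : ℕ → ℝ := fun k => ‖tm (fun j => V j + g j) E k 0‖ with hudef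
  have hu0 : u 0 ≤ 1 := norm_one_le2
  -- main claim by strong induction
  have main : ∀ k : ℕ, 1 ≤ k → u k ≤ D * k * Pp k := by
    intro k
    induction k using Nat.strong_induction_on with
    | _ k ih =>
      intro hk
      -- per-term bound
      have hterm : ∀ j ∈ Finset.range k,
          ‖tm V E (k-1-j) ((0:ℤ)+j+1) * !![-(g ((0:ℤ)+j)), 0; 0, 0] *
            tm (fun j => V j + g j) E j 0‖ ≤ (k:ℝ) * D * (4*D*w j * Pp j) := by
        intro j hj
        rw [Finset.mem_range] at hj
        have hA : ‖tm V E (k-1-j) ((0:ℤ)+j+1)‖ ≤ D * ((k:ℝ) - j) := by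
          have := htm (k-1-j) ((0:ℤ)+j+1)
          have hc : ((k-1-j : ℕ) : ℝ) + 1 = (k:ℝ) - j := by
            have : ((k-1-j : ℕ) : ℤ) = (k:ℤ) - 1 - j := by omega
            have h2 : ((k-1-j : ℕ) : ℝ) = (k:ℝ) - 1 - j := by
              exact_mod_cast congrArg (fun z : ℤ => (z:ℝ)) this
            rw [h2]; ring
          rwa [hc] at this
        have hPn : ‖!![-(g ((0:ℤ)+j)), 0; 0, 0]‖ ≤ |g (j:ℤ)| := by
          have := norm_pert_le (g ((0:ℤ)+j))
          simpa using this
        have hMj : ((k:ℝ) - j) * u j ≤ (k:ℝ) * (1 + j) * (D * Pp j) := by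
          rcases Nat.eq_zero_or_pos j with hj0 | hj1
          · subst hj0
            have hp : Pp 0 = 1 := by simp [hPdef]
            have hk0' : (0:ℝ) ≤ (k:ℝ) := by positivity
            have hu0' : (0:ℝ) ≤ u 0 := norm_nonneg _
            rw [hp]
            simp only [Nat.cast_zero, sub_zero, add_zero, mul_one]
            nlinarith [mul_le_mul_of_nonneg_left (hu0.trans hD1) hk0']
          · have hih := ih j hj hj1
            have hj1' : (1:ℝ) ≤ (j:ℝ) := by exact_mod_cast hj1
            have hkj : (0:ℝ) ≤ (k:ℝ) - j := by
              have : (j:ℝ) ≤ k := by exact_mod_cast hj.le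
              linarith
            calc ((k:ℝ) - j) * u j ≤ ((k:ℝ) - j) * (D * j * Pp j) :=
                  mul_le_mul_of_nonneg_left hih hkj
              _ ≤ (k:ℝ) * (1 + j) * (D * Pp j) := by
                  have hPj := hP1 j
                  have hDP : (0:ℝ) ≤ D * Pp j := by nlinarith
                  have hjk : ((k:ℝ) - j) * (j:ℝ) ≤ (k:ℝ) * (1 + j) := by
                    have hj0' : (0:ℝ) ≤ (j:ℝ) := by positivity
                    have hk0' : (0:ℝ) ≤ (k:ℝ) := by positivity
                    nlinarith [sq_nonneg (j:ℝ)]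
                  calc ((k:ℝ) - j) * (D * j * Pp j)
                      = (((k:ℝ) - j) * j) * (D * Pp j) := by ring
                    _ ≤ ((k:ℝ) * (1 + j)) * (D * Pp j) :=
                        mul_le_mul_of_nonneg_right hjk hDP
                    _ = (k:ℝ) * (1 + j) * (D * Pp j) := by ring
        calc ‖tm V E (k-1-j) ((0:ℤ)+j+1) * !![-(g ((0:ℤ)+j)), 0; 0, 0] *
              tm (fun j => V j + g j) E j 0‖
            ≤ 2 * ‖tm V E (k-1-j) ((0:ℤ)+j+1) * !![-(g ((0:ℤ)+j)), 0; 0, 0]‖ * u j :=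
              norm_mul_le2 _ _
          _ ≤ 2 * (2 * ‖tm V E (k-1-j) ((0:ℤ)+j+1)‖ * ‖!![-(g ((0:ℤ)+j)), 0; 0, 0]‖) * u j := by
              have := norm_mul_le2 (tm V E (k-1-j) ((0:ℤ)+j+1)) !![-(g ((0:ℤ)+j)), 0; 0, 0]
              have hu : 0 ≤ u j := norm_nonneg _
              nlinarith
          _ ≤ (k:ℝ) * D * (4*D*w j * Pp j) := by
              have hu : 0 ≤ u j := norm_nonneg _
              have hAn : 0 ≤ ‖tm V E (k-1-j) ((0:ℤ)+j+1)‖ := norm_nonneg _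
              have hPn0 : 0 ≤ ‖!![-(g ((0:ℤ)+j)), 0; 0, 0]‖ := norm_nonneg _
              have step1 : 2 * (2 * ‖tm V E (k-1-j) ((0:ℤ)+j+1)‖ *
                  ‖!![-(g ((0:ℤ)+j)), 0; 0, 0]‖) * u j
                  ≤ 4 * (D * ((k:ℝ) - j)) * |g (j:ℤ)| * u j := by
                have hg0 : (0:ℝ) ≤ |g (j:ℤ)| := abs_nonneg _
                have hDk : 0 ≤ D * ((k:ℝ) - j) := le_trans hAn hA
                nlinarith [mul_le_mul hA hPn hPn0 hDk]
              refine step1.trans ?_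
              have : 4 * (D * ((k:ℝ) - j)) * |g (j:ℤ)| * u j
                  = 4 * D * |g (j:ℤ)| * (((k:ℝ) - j) * u j) := by ring
              rw [this]
              have hg0 : (0:ℝ) ≤ |g (j:ℤ)| := abs_nonneg _
              calc 4 * D * |g (j:ℤ)| * (((k:ℝ) - j) * u j)
                  ≤ 4 * D * |g (j:ℤ)| * ((k:ℝ) * (1 + j) * (D * Pp j)) := by
                    apply mul_le_mul_of_nonneg_left hMj (by positivity)
                _ = (k:ℝ) * D * (4*D*w j * Pp j) := by
                    simp only [hwdef]; ring
      -- assemble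
      have hdu := duhamel V g E k 0
      have hnorm : u k ≤ ‖tm V E k 0‖ +
          ∑ j ∈ Finset.range k, ‖tm V E (k-1-j) ((0:ℤ)+j+1) * !![-(g ((0:ℤ)+j)), 0; 0, 0] *
            tm (fun j => V j + g j) E j 0‖ := by
        rw [hudef]
        simp only
        rw [hdu]
        exact le_trans (norm_add_le _ _) (by gcongr; exact norm_sum_le _ _)
      have hsum2 : ∑ j ∈ Finset.range k, ‖tm V E (k-1-j) ((0:ℤ)+j+1) *
            !![-(g ((0:ℤ)+j)), 0; 0, 0] * tm (fun j => V j + g j) E j 0‖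
          ≤ (k:ℝ) * D * (Pp k - 1) := by
        calc _ ≤ ∑ j ∈ Finset.range k, (k:ℝ) * D * (4*D*w j * Pp j) :=
              Finset.sum_le_sum hterm
          _ = (k:ℝ) * D * ∑ j ∈ Finset.range k, (Pp (j+1) - Pp j) := by
              rw [← Finset.mul_sum]
              congr 1
              exact Finset.sum_congr rfl fun j _ => (hPsucc j).symm
          _ = (k:ℝ) * D * (Pp k - 1) := by
              rw [Finset.sum_range_sub (fun j => Pp j)]
              norm_num [hPdef]
      have hMk : ‖tm V E k 0‖ ≤ D * k := by
        refine (hM 0 k hk).trans ?_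
        have : (0:ℝ) ≤ (k:ℝ) := by positivity
        nlinarith
      calc u k ≤ D * k + (k:ℝ) * D * (Pp k - 1) := by linarith
        _ = D * k * Pp k := by ring
  refine ⟨D * Real.exp (4*D*S), by positivity, ?_⟩
  intro k hk
  have h1 := main k hk
  have h2 : D * k * Pp k ≤ D * Real.exp (4*D*S) * k := by
    have hk0 : (0:ℝ) ≤ (k:ℝ) := by positivity
    have heq : D * Real.exp (4*D*S) * k = D * (k:ℝ) * Real.exp (4*D*S) := by ring
    rw [heq]
    exact mul_le_mul_of_nonneg_left (hPle k) (mul_nonneg hD0.le hk0)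
  exact le_trans h1 h2

end
end

section
/- Let a ∈ {1, −1}, let c ∈ ℝ with c ≠ 0, set A = [[a, c], [0, a]], and let R : ℕ → M₂(ℝ) satisfy Σ_{n≥0} (n+1)·‖R(n)‖ < ∞ and det(A + R(n)) ≠ 0 for every n. Then no solution φ : ℕ → ℝ² of φ(n+1) = (A + R(n))·φ(n) with φ(0) ≠ 0 converges to the zero vector as n → ∞. -/
attribute [local instance] Matrix.normedAddCommGroup

noncomputable section

open Filter Finset

private lemma stmt10_shift_tsum (f : ℕ → ℝ) (D : ℕ) :
    ∑' j, f (D + j) = ∑' j, (if D ≤ j then f j else 0) := by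
  have hinj : Function.Injective (fun j : ℕ => D + j) := add_right_injective D
  have h2 : (Function.support fun j => if D ≤ j then f j else 0)
      ⊆ Set.range (fun j : ℕ => D + j) := by
    intro b hb
    simp only [Function.mem_support, ne_eq, ite_eq_right_iff, not_forall] at hb
    obtain ⟨hDb, -⟩ := hb
    exact ⟨b - D, by show D + (b - D) = b; omega⟩
  have := hinj.tsum_eq (f := fun j => if D ≤ j then f j else 0) h2
  rw [← this]
  apply tsum_congr
  intro j
  simp

private lemma stmt10_card_filter_le (D j : ℕ) :
    ((((Finset.range D).filter (fun d => d ≤ j)).card : ℝ)) ≤ (j : ℝ) + 1 := by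
  have h1 : (Finset.range D).filter (fun d => d ≤ j) ⊆ Finset.range (j+1) := by
    intro x hx; simp at hx ⊢; omega
  have := Finset.card_le_card h1
  simp only [Finset.card_range] at this
  exact_mod_cast this

private lemma stmt10_ite_sum_eq (f : ℕ → ℝ) (D j : ℕ) :
    ∑ d ∈ Finset.range D, (if d ≤ j then f j else 0)
      = (((Finset.range D).filter (fun d => d ≤ j)).card : ℝ) * f j := by
  rw [← Finset.sum_filter, Finset.sum_const, nsmul_eq_mul]

private lemma stmt10_sum_tails_le (f : ℕ → ℝ) (h0 : ∀ i, 0 ≤ f i)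
    (hf : Summable fun i : ℕ => ((i : ℝ) + 1) * f i) (D : ℕ) :
    ∑ d ∈ Finset.range D, (∑' j, f (d + j)) ≤ ∑' j : ℕ, ((j : ℝ) + 1) * f j := by
  have hle : ∀ i : ℕ, f i ≤ ((i : ℝ) + 1) * f i := by
    intro i
    nlinarith [h0 i, (Nat.cast_nonneg i : (0:ℝ) ≤ (i:ℝ))]
  have hsf : Summable f := Summable.of_nonneg_of_le h0 hle hf
  have hsum_ite : ∀ d : ℕ, Summable (fun j => if d ≤ j then f j else 0) := by
    intro d
    apply Summable.of_nonneg_of_le _ _ hsf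
    · intro j; split <;> simp [h0 j]
    · intro j; split <;> simp [h0 j]
  have hbd : ∀ j : ℕ, ∑ d ∈ Finset.range D, (if d ≤ j then f j else 0)
      ≤ ((j : ℝ) + 1) * f j := by
    intro j
    rw [stmt10_ite_sum_eq]
    exact mul_le_mul_of_nonneg_right (stmt10_card_filter_le D j) (h0 j)
  calc ∑ d ∈ Finset.range D, (∑' j, f (d + j))
      = ∑' j, ∑ d ∈ Finset.range D, (if d ≤ j then f j else 0) := by
        rw [Summable.tsum_finsetSum (fun d _ => hsum_ite d)]
        exact Finset.sum_congr rfl fun d _ => stmt10_shift_tsum f d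
    _ ≤ ∑' j : ℕ, ((j : ℝ) + 1) * f j := by
        apply Summable.tsum_le_tsum hbd _ hf
        apply Summable.of_nonneg_of_le _ hbd hf
        intro j
        apply Finset.sum_nonneg; intro d _; split <;> simp [h0 j]

theorem stmt10 (a c : ℝ) (ha : a = 1 ∨ a = -1) (hc : c ≠ 0)
    (R : ℕ → Matrix (Fin 2) (Fin 2) ℝ)
    (hR : Summable fun n : ℕ => ((n : ℝ) + 1) * ‖R n‖)
    (hdet : ∀ n : ℕ, (!![a, c; 0, a] + R n).det ≠ 0)
    (φ : ℕ → Fin 2 → ℝ)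
    (hφ : ∀ n : ℕ, φ (n + 1) = (!![a, c; 0, a] + R n).mulVec (φ n))
    (h0 : φ 0 ≠ 0) :
    ¬ Filter.Tendsto φ Filter.atTop (nhds 0) := by
  intro h
  -- basic facts about a
  have ha2 : a * a = 1 := by rcases ha with h'|h' <;> simp [h'] <;> norm_num
  have haabs : |a| = 1 := by rcases ha with h'|h' <;> simp [h']
  have hapow : ∀ n : ℕ, |a ^ n| = 1 := fun n => by rw [abs_pow, haabs, one_pow]
  -- φ tends to 0 in norm
  have hnorm : Tendsto (fun n => ‖φ n‖) atTop (nhds 0) := by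
    simpa using h.norm
  -- boundedness
  obtain ⟨B, hB⟩ := hnorm.bddAbove_range
  have hBb : ∀ n, ‖φ n‖ ≤ B := fun n => hB ⟨n, rfl⟩
  have hB0 : 0 ≤ B := le_trans (norm_nonneg (φ 0)) (hBb 0)
  -- the key sequences
  set g : ℕ → ℝ := fun n => ‖R n‖ * ‖φ n‖ with hgdef
  have hg0 : ∀ n, 0 ≤ g n := fun n => mul_nonneg (norm_nonneg _) (norm_nonneg _)
  set f : ℕ → ℝ := fun n => ((n : ℝ) + 1) * g n with hfdef
  have hf0 : ∀ n, 0 ≤ f n := fun n => mul_nonneg (by positivity) (hg0 n)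
  have hfsum : Summable f := by
    apply Summable.of_nonneg_of_le hf0 _ (hR.mul_left B)
    intro n
    have h1 : g n ≤ ‖R n‖ * B := mul_le_mul_of_nonneg_left (hBb n) (norm_nonneg _)
    have h2 : (0:ℝ) ≤ (n:ℝ) + 1 := by positivity
    calc f n = ((n:ℝ)+1) * g n := rfl
      _ ≤ ((n:ℝ)+1) * (‖R n‖ * B) := mul_le_mul_of_nonneg_left h1 h2
      _ = B * (((n:ℝ)+1) * ‖R n‖) := by ring
  have hgle : ∀ n, g n ≤ f n := by
    intro n
    show g n ≤ ((n:ℝ) + 1) * g n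
    nlinarith [hg0 n, (Nat.cast_nonneg n : (0:ℝ) ≤ (n:ℝ))]
  have hgsum : Summable g := Summable.of_nonneg_of_le hg0 hgle hfsum
  -- tail sums
  set t : ℕ → ℝ := fun n => ∑' j, g (n + j) with htdef
  set T : ℕ → ℝ := fun n => ∑' j, f (n + j) with hTdef
  have hgshift : ∀ n : ℕ, Summable fun j => g (n + j) :=
    fun n => ((summable_nat_add_iff n).2 hgsum).congr (fun j => by rw [add_comm])
  have hfshift : ∀ n : ℕ, Summable fun j => f (n + j) :=
    fun n => ((summable_nat_add_iff n).2 hfsum).congr (fun j => by rw [add_comm])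
  have ht0 : ∀ n, 0 ≤ t n := fun n => tsum_nonneg (fun j => hg0 _)
  have hT0 : ∀ n, 0 ≤ T n := fun n => tsum_nonneg (fun j => hf0 _)
  have htT : ∀ n, t n ≤ T n :=
    fun n => Summable.tsum_le_tsum (fun j => hgle (n + j)) (hgshift n) (hfshift n)
  -- T is antitone
  have hTanti : ∀ n m, n ≤ m → T m ≤ T n := by
    intro n m hnm
    have hF : Summable fun j => f (n + j) := hfshift n
    have key := Summable.sum_add_tsum_nat_add (f := fun j => f (n + j)) (m - n) hF
    have h1 : ∑' i, f (n + (i + (m - n))) = T m := by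
      apply tsum_congr
      intro i
      exact congrArg f (by omega)
    rw [h1] at key
    have h2 : 0 ≤ ∑ i ∈ Finset.range (m - n), f (n + i) :=
      Finset.sum_nonneg fun i _ => hf0 _
    calc T m ≤ ∑ i ∈ Finset.range (m - n), f (n + i) + T m := by linarith
      _ = T n := key
  -- entrywise bounds
  have hw : ∀ (n : ℕ) (i : Fin 2), |((R n).mulVec (φ n)) i| ≤ 2 * g n := by
    intro n i
    have h1 : ∀ j, |R n i j| ≤ ‖R n‖ := fun j => by
      simpa [Real.norm_eq_abs] using (R n).norm_entry_le_entrywise_sup_norm (i := i) (j := j)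
    have h2 : ∀ j, |φ n j| ≤ ‖φ n‖ := fun j => by
      simpa [Real.norm_eq_abs] using norm_le_pi_norm (φ n) j
    have hR0 : (0:ℝ) ≤ ‖R n‖ := norm_nonneg _
    have hv0 : (0:ℝ) ≤ ‖φ n‖ := norm_nonneg _
    have hrepr : ((R n).mulVec (φ n)) i = R n i 0 * φ n 0 + R n i 1 * φ n 1 := by
      simp [Matrix.mulVec, dotProduct, Fin.sum_univ_two]
    rw [hrepr]
    calc |R n i 0 * φ n 0 + R n i 1 * φ n 1|
        ≤ |R n i 0| * |φ n 0| + |R n i 1| * |φ n 1| := by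
          refine (abs_add_le _ _).trans ?_
          simp [abs_mul]
      _ ≤ ‖R n‖ * ‖φ n‖ + ‖R n‖ * ‖φ n‖ := by
          gcongr <;> [exact h1 0; exact h2 0; exact h1 1; exact h2 1]
      _ = 2 * g n := by rw [hgdef]; ring
  -- component recursions
  have hrec0 : ∀ n, φ (n+1) 0 = a * φ n 0 + c * φ n 1 + ((R n).mulVec (φ n)) 0 := by
    intro n
    rw [hφ n, Matrix.add_mulVec]
    simp [Matrix.mulVec, dotProduct, Fin.sum_univ_two]
  have hrec1 : ∀ n, φ (n+1) 1 = a * φ n 1 + ((R n).mulVec (φ n)) 1 := by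
    intro n
    rw [hφ n, Matrix.add_mulVec]
    simp [Matrix.mulVec, dotProduct, Fin.sum_univ_two]
  -- sequences u, v
  set u : ℕ → ℝ := fun n => a ^ n * φ n 1 with hudef
  set v : ℕ → ℝ := fun n => a ^ n * φ n 0 with hvdef
  have huabs : ∀ n, |u n| = |φ n 1| := by
    intro n; rw [hudef]; rw [abs_mul, hapow, one_mul]
  have hvabs : ∀ n, |v n| = |φ n 0| := by
    intro n; rw [hvdef]; rw [abs_mul, hapow, one_mul]
  have hu : ∀ n, u (n+1) = u n + a ^ (n+1) * ((R n).mulVec (φ n)) 1 := by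
    intro n
    have : u (n+1) = a ^ (n+1) * (a * φ n 1 + ((R n).mulVec (φ n)) 1) := by
      show a ^ (n+1) * φ (n+1) 1 = _
      rw [hrec1]
    rw [this]
    have : a ^ (n+1) * (a * φ n 1 + ((R n).mulVec (φ n)) 1)
        = (a * a) * (a ^ n * φ n 1) + a ^ (n+1) * ((R n).mulVec (φ n)) 1 := by
      ring
    rw [this, ha2, one_mul]
  have hv : ∀ n, v (n+1) = v n + a ^ (n+1) * (c * φ n 1 + ((R n).mulVec (φ n)) 0) := by
    intro n
    have : v (n+1) = a ^ (n+1) * (a * φ n 0 + (c * φ n 1 + ((R n).mulVec (φ n)) 0)) := by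
      show a ^ (n+1) * φ (n+1) 0 = _
      rw [hrec0]; ring
    rw [this]
    have : a ^ (n+1) * (a * φ n 0 + (c * φ n 1 + ((R n).mulVec (φ n)) 0))
        = (a * a) * (a ^ n * φ n 0) + a ^ (n+1) * (c * φ n 1 + ((R n).mulVec (φ n)) 0) := by
      ring
    rw [this, ha2, one_mul]
  -- telescoping
  have htel_u : ∀ n m, n ≤ m →
      u m = u n + ∑ k ∈ Finset.Ico n m, a ^ (k+1) * ((R k).mulVec (φ k)) 1 := by
    intro n m hnm
    induction m, hnm using Nat.le_induction with
    | base => simp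
    | succ m hnm ih =>
      rw [hu m, ih, Finset.sum_Ico_succ_top hnm]
      ring
  have htel_v : ∀ n m, n ≤ m →
      v m = v n + ∑ k ∈ Finset.Ico n m, a ^ (k+1) * (c * φ k 1 + ((R k).mulVec (φ k)) 0) := by
    intro n m hnm
    induction m, hnm using Nat.le_induction with
    | base => simp
    | succ m hnm ih =>
      rw [hv m, ih, Finset.sum_Ico_succ_top hnm]
      ring
  -- partial sum bounds for g on Ico
  have hIco_g : ∀ n m : ℕ, ∑ k ∈ Finset.Ico n m, g k ≤ t n := by
    intro n m
    rw [Finset.sum_Ico_eq_sum_range]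
    exact Summable.sum_le_tsum (Finset.range (m - n)) (fun i _ => hg0 _) (hgshift n)
  -- |u n| ≤ 2 t n
  have hu_le : ∀ n, |φ n 1| ≤ 2 * t n := by
    intro n
    rw [← huabs]
    have hbound : ∀ m, n ≤ m → |u n| ≤ |u m| + 2 * t n := by
      intro m hnm
      have := htel_u n m hnm
      have habs : |u n| ≤ |u m| + |∑ k ∈ Finset.Ico n m, a ^ (k+1) * ((R k).mulVec (φ k)) 1| := by
        have : u n = u m - ∑ k ∈ Finset.Ico n m, a ^ (k+1) * ((R k).mulVec (φ k)) 1 := by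
          rw [this]; ring
        rw [this]
        exact (abs_sub _ _).trans (by rfl)
      refine habs.trans ?_
      gcongr
      calc |∑ k ∈ Finset.Ico n m, a ^ (k+1) * ((R k).mulVec (φ k)) 1|
          ≤ ∑ k ∈ Finset.Ico n m, |a ^ (k+1) * ((R k).mulVec (φ k)) 1| :=
            Finset.abs_sum_le_sum_abs _ _
        _ ≤ ∑ k ∈ Finset.Ico n m, 2 * g k := by
            apply Finset.sum_le_sum
            intro k _
            rw [abs_mul, hapow, one_mul]
            exact hw k 1
        _ = 2 * ∑ k ∈ Finset.Ico n m, g k := by rw [Finset.mul_sum]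
        _ ≤ 2 * t n := by linarith [hIco_g n m]
    have hlim : Tendsto (fun m => |u m| + 2 * t n) atTop (nhds (0 + 2 * t n)) := by
      apply Tendsto.add _ tendsto_const_nhds
      apply squeeze_zero (fun m => abs_nonneg _) _ hnorm
      intro m
      rw [huabs]
      simpa [Real.norm_eq_abs] using norm_le_pi_norm (φ m) 1
    have := ge_of_tendsto hlim ((eventually_ge_atTop n).mono (fun m hm => hbound m hm))
    linarith
  -- sum of tails t over Ico is ≤ T n
  have hIco_t : ∀ n m : ℕ, ∑ k ∈ Finset.Ico n m, t k ≤ T n := by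
    intro n m
    rw [Finset.sum_Ico_eq_sum_range]
    have hrw : ∀ d, t (n + d) = ∑' j, (fun i => g (n + i)) (d + j) := by
      intro d
      apply tsum_congr
      intro j
      exact congrArg g (by omega)
    calc ∑ d ∈ Finset.range (m - n), t (n + d)
        = ∑ d ∈ Finset.range (m - n), ∑' j, (fun i => g (n + i)) (d + j) :=
          Finset.sum_congr rfl fun d _ => hrw d
      _ ≤ ∑' j : ℕ, ((j : ℝ) + 1) * g (n + j) := by
          apply stmt10_sum_tails_le (fun i => g (n + i)) (fun i => hg0 _)
          apply Summable.of_nonneg_of_le _ _ (hfshift n)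
          · intro j
            exact mul_nonneg (by positivity) (hg0 _)
          · intro j
            apply mul_le_mul_of_nonneg_right _ (hg0 _)
            have : ((j:ℝ)) ≤ ((n + j : ℕ) : ℝ) := by exact_mod_cast Nat.le_add_left j n
            push_cast at this ⊢
            linarith
      _ ≤ T n := by
          apply Summable.tsum_le_tsum _ _ (hfshift n)
          · intro j
            apply mul_le_mul_of_nonneg_right _ (hg0 _)
            push_cast
            linarith [(Nat.cast_nonneg n : (0:ℝ) ≤ (n:ℝ))]
          · apply Summable.of_nonneg_of_le _ _ (hfshift n)
            · intro j
              exact mul_nonneg (by positivity) (hg0 _)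
            · intro j
              apply mul_le_mul_of_nonneg_right _ (hg0 _)
              push_cast
              linarith [(Nat.cast_nonneg n : (0:ℝ) ≤ (n:ℝ))]
  -- |v n| ≤ 2|c| T n + 2 t n
  have hv_le : ∀ n, |φ n 0| ≤ 2 * |c| * T n + 2 * t n := by
    intro n
    rw [← hvabs]
    have hbound : ∀ m, n ≤ m → |v n| ≤ |v m| + (2 * |c| * T n + 2 * t n) := by
      intro m hnm
      have hteq := htel_v n m hnm
      have habs : |v n| ≤ |v m| +
          |∑ k ∈ Finset.Ico n m, a ^ (k+1) * (c * φ k 1 + ((R k).mulVec (φ k)) 0)| := by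
        have : v n = v m - ∑ k ∈ Finset.Ico n m, a ^ (k+1) * (c * φ k 1 + ((R k).mulVec (φ k)) 0) := by
          rw [hteq]; ring
        rw [this]
        exact (abs_sub _ _).trans (by rfl)
      refine habs.trans ?_
      gcongr
      calc |∑ k ∈ Finset.Ico n m, a ^ (k+1) * (c * φ k 1 + ((R k).mulVec (φ k)) 0)|
          ≤ ∑ k ∈ Finset.Ico n m, |a ^ (k+1) * (c * φ k 1 + ((R k).mulVec (φ k)) 0)| :=
            Finset.abs_sum_le_sum_abs _ _
        _ ≤ ∑ k ∈ Finset.Ico n m, (2 * |c| * t k + 2 * g k) := by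
            apply Finset.sum_le_sum
            intro k _
            rw [abs_mul, hapow, one_mul]
            calc |c * φ k 1 + ((R k).mulVec (φ k)) 0|
                ≤ |c| * |φ k 1| + |((R k).mulVec (φ k)) 0| := by
                  refine (abs_add_le _ _).trans ?_
                  rw [abs_mul]
              _ ≤ |c| * (2 * t k) + 2 * g k := by
                  gcongr
                  · exact hu_le k
                  · exact hw k 0
              _ = 2 * |c| * t k + 2 * g k := by ring
        _ = 2 * |c| * (∑ k ∈ Finset.Ico n m, t k) + 2 * (∑ k ∈ Finset.Ico n m, g k) := by
            rw [Finset.sum_add_distrib, Finset.mul_sum, Finset.mul_sum]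
        _ ≤ 2 * |c| * T n + 2 * t n := by
            have h1 := hIco_t n m
            have h2 := hIco_g n m
            have hc0 : (0:ℝ) ≤ |c| := abs_nonneg c
            nlinarith
    have hlim : Tendsto (fun m => |v m| + (2 * |c| * T n + 2 * t n)) atTop
        (nhds (0 + (2 * |c| * T n + 2 * t n))) := by
      apply Tendsto.add _ tendsto_const_nhds
      apply squeeze_zero (fun m => abs_nonneg _) _ hnorm
      intro m
      rw [hvabs]
      simpa [Real.norm_eq_abs] using norm_le_pi_norm (φ m) 0
    have := ge_of_tendsto hlim ((eventually_ge_atTop n).mono (fun m hm => hbound m hm))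
    linarith
  -- norm bound
  set C : ℝ := 2 * |c| + 2 with hCdef
  have hC0 : (0:ℝ) ≤ C := by positivity
  have hφnorm : ∀ n, ‖φ n‖ ≤ C * T n := by
    intro n
    have hCT0 : 0 ≤ C * T n := mul_nonneg hC0 (hT0 n)
    rw [pi_norm_le_iff_of_nonneg hCT0]
    have hb0 : |φ n 0| ≤ C * T n := by
      have h1 := hv_le n
      have h2 := htT n
      have hc0 : (0:ℝ) ≤ |c| := abs_nonneg c
      have h3 := ht0 n
      rw [hCdef]
      nlinarith
    have hb1 : |φ n 1| ≤ C * T n := by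
      have h1 := hu_le n
      have h2 := htT n
      have hc0 : (0:ℝ) ≤ |c| := abs_nonneg c
      have h3 := hT0 n
      rw [hCdef]
      nlinarith
    refine Fin.forall_fin_two.mpr ⟨?_, ?_⟩
    · rw [Real.norm_eq_abs]; exact hb0
    · rw [Real.norm_eq_abs]; exact hb1
  -- the epsilon sequence
  set r : ℕ → ℝ := fun n => ((n : ℝ) + 1) * ‖R n‖ with hrdef
  have hr0 : ∀ n, 0 ≤ r n := fun n => mul_nonneg (by positivity) (norm_nonneg _)
  set ε : ℕ → ℝ := fun n => ∑' j, r (n + j) with hεdef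
  have hrshift : ∀ n : ℕ, Summable fun j => r (n + j) :=
    fun n => ((summable_nat_add_iff n).2 hR).congr (fun j => by rw [add_comm])
  have hεtend : Tendsto ε atTop (nhds 0) := by
    have := tendsto_sum_nat_add r
    apply this.congr
    intro n
    apply tsum_congr
    intro j
    exact congrArg r (by omega)
  have hε0 : ∀ n, 0 ≤ ε n := fun n => tsum_nonneg (fun j => hr0 _)
  -- choose N with C * ε N < 1
  have hCpos : (0:ℝ) < C := by positivity
  obtain ⟨N, hN⟩ : ∃ N, ε N < 1 / C := by
    have := hεtend.eventually (gt_mem_nhds (by positivity : (0:ℝ) < 1 / C))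
    exact this.exists
  have hCεN : C * ε N < 1 := by
    rw [← lt_div_iff₀' hCpos]
    exact hN
  -- T N ≤ ε N * (C * T N)
  have hTN_le : T N ≤ ε N * (C * T N) := by
    have hCT0 : 0 ≤ C * T N := mul_nonneg hC0 (hT0 N)
    have hterm : ∀ j : ℕ, f (N + j) ≤ r (N + j) * (C * T N) := by
      intro j
      have h1 : ‖φ (N + j)‖ ≤ C * T (N + j) := hφnorm (N + j)
      have h2 : T (N + j) ≤ T N := hTanti N (N + j) (Nat.le_add_right N j)
      have h3 : ‖φ (N + j)‖ ≤ C * T N := h1.trans (mul_le_mul_of_nonneg_left h2 hC0)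
      have h4 : (0:ℝ) ≤ ((N + j : ℕ):ℝ) + 1 := by positivity
      calc f (N + j) = (((N + j : ℕ):ℝ) + 1) * (‖R (N + j)‖ * ‖φ (N + j)‖) := rfl
        _ ≤ (((N + j : ℕ):ℝ) + 1) * (‖R (N + j)‖ * (C * T N)) := by
            apply mul_le_mul_of_nonneg_left _ h4
            exact mul_le_mul_of_nonneg_left h3 (norm_nonneg _)
        _ = r (N + j) * (C * T N) := by rw [hrdef]; ring
    calc T N = ∑' j, f (N + j) := rfl
      _ ≤ ∑' j, r (N + j) * (C * T N) :=
          Summable.tsum_le_tsum hterm (hfshift N) ((hrshift N).mul_right _)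
      _ = ε N * (C * T N) := by rw [tsum_mul_right]
  -- conclude T N = 0
  have hTN0 : T N = 0 := by
    have h1 := hT0 N
    have h2 := hε0 N
    nlinarith
  -- φ N = 0
  have hφN : φ N = 0 := by
    have := hφnorm N
    rw [hTN0, mul_zero] at this
    exact norm_le_zero_iff.mp this
  -- propagate backwards: all φ n nonzero
  have hstep : ∀ n, φ n ≠ 0 → φ (n+1) ≠ 0 := by
    intro n hn hcontra
    apply hn
    set M := !![a, c; 0, a] + R n with hM
    have hMdet : M.det ≠ 0 := hdet n
    have hMu : IsUnit M.det := isUnit_iff_ne_zero.2 hMdet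
    have : M⁻¹.mulVec (M.mulVec (φ n)) = φ n := by
      rw [Matrix.mulVec_mulVec, Matrix.nonsing_inv_mul M hMu, Matrix.one_mulVec]
    rw [← hφ n] at this
    rw [hcontra, Matrix.mulVec_zero] at this
    exact this.symm
  have hall : ∀ n, φ n ≠ 0 := by
    intro n
    induction n with
    | zero => exact h0
    | succ n ih => exact hstep n ih
  exact hall N hφN

end
end

section
/- Let c ∈ ℝ with c ≠ 0, set A = [[1, c], [0, 1]], and let R : ℕ → M₂(ℝ) satisfy Σ_{n≥0} (n+1)·‖R(n)‖ < ∞ and det(A + R(n)) ≠ 0 for every n. Then for every ε > 0 there exists a solution φ : ℕ → ℝ² of φ(n+1) = (A + R(n))·φ(n) such that limsup_{n→∞} ‖φ(n) − (1, 0)ᵀ‖ ≤ ε. -/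
attribute [local instance] Matrix.normedAddCommGroup

noncomputable section

namespace Stmt11Aux

def e1 : Fin 2 → ℝ := ![1, 0]

def Mmat (c : ℝ) (n k : ℕ) : Matrix (Fin 2) (Fin 2) ℝ := !![1, c * ((n:ℝ) - k - 1); 0, 1]

lemma norm_e1_le : ‖e1‖ ≤ 1 := by
  rw [pi_norm_le_iff_of_nonneg (by norm_num)]
  intro i
  fin_cases i <;> simp [e1]

lemma mulVec_norm_le (A : Matrix (Fin 2) (Fin 2) ℝ) (v : Fin 2 → ℝ) :
    ‖A.mulVec v‖ ≤ 2 * ‖A‖ * ‖v‖ := by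
  have h2 : (0:ℝ) ≤ 2 * ‖A‖ * ‖v‖ := by positivity
  rw [pi_norm_le_iff_of_nonneg h2]
  intro i
  calc ‖A.mulVec v i‖ = ‖A i 0 * v 0 + A i 1 * v 1‖ := by
        simp [Matrix.mulVec, dotProduct, Fin.sum_univ_two]
    _ ≤ ‖A i 0 * v 0‖ + ‖A i 1 * v 1‖ := norm_add_le _ _
    _ = ‖A i 0‖ * ‖v 0‖ + ‖A i 1‖ * ‖v 1‖ := by simp [norm_mul]
    _ ≤ ‖A‖ * ‖v‖ + ‖A‖ * ‖v‖ := by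
        gcongr <;>
          first
            | exact A.norm_entry_le_entrywise_sup_norm
            | exact norm_le_pi_norm v _
    _ = 2 * ‖A‖ * ‖v‖ := by ring

lemma Mmat_norm_le (c : ℝ) {n k : ℕ} (h : n ≤ k) :
    ‖Mmat c n k‖ ≤ 1 + |c| * ((k:ℝ) + 1) := by
  have hk : (n:ℝ) ≤ k := by exact_mod_cast h
  have hn : (0:ℝ) ≤ n := Nat.cast_nonneg n
  have habs : |(n:ℝ) - (k:ℝ) - 1| ≤ (k:ℝ) + 1 := by
    rw [abs_le]; constructor <;> linarith
  have hcnn : (0:ℝ) ≤ |c| := abs_nonneg c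
  rw [Matrix.norm_le_iff (by positivity)]
  intro i j
  fin_cases i <;> fin_cases j <;> simp [Mmat, abs_mul] <;>
    nlinarith [mul_le_mul_of_nonneg_left habs hcnn]

lemma Amat_mul_Mmat (c : ℝ) (n k : ℕ) :
    !![(1:ℝ), c; 0, 1] * Mmat c n k = Mmat c (n+1) k := by
  simp [Mmat, Matrix.mul_fin_two]
  ring

lemma Mmat_succ_self (c : ℝ) (n : ℕ) : Mmat c (n+1) n = 1 := by
  have h : c * (((n+1:ℕ):ℝ) - n - 1) = 0 := by push_cast; ring
  rw [Mmat, h, Matrix.one_fin_two]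

lemma Amat_mulVec_e1 (c : ℝ) : (!![(1:ℝ), c; 0, 1]).mulVec e1 = e1 := by
  ext i
  fin_cases i <;> simp [e1, Matrix.mulVec, dotProduct, Fin.sum_univ_two]

/-- The weight sequence, cut off below `N`. -/
def Dfun (c : ℝ) (R : ℕ → Matrix (Fin 2) (Fin 2) ℝ) (N : ℕ) (k : ℕ) : ℝ :=
  if N ≤ k then 4 * (1 + |c| * ((k:ℝ) + 1)) * ‖R k‖ else 0

lemma Dfun_nonneg (c R N k) : 0 ≤ Dfun c R N k := by
  unfold Dfun; split
  · positivity
  · exact le_refl 0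

/-- The series term. -/
def gfun (c : ℝ) (R : ℕ → Matrix (Fin 2) (Fin 2) ℝ) (N : ℕ)
    (ψ : BoundedContinuousFunction ℕ (Fin 2 → ℝ)) (n k : ℕ) : Fin 2 → ℝ :=
  if N ≤ k ∧ n ≤ k then (Mmat c n k).mulVec ((R k).mulVec (e1 + ψ k)) else 0

lemma gfun_norm_le (c R N) (ψ : BoundedContinuousFunction ℕ (Fin 2 → ℝ)) (n k : ℕ) :
    ‖gfun c R N ψ n k‖ ≤ Dfun c R N k * (1 + ‖ψ‖) := by
  unfold gfun Dfun
  by_cases h : N ≤ k ∧ n ≤ k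
  · rw [if_pos h, if_pos h.1]
    have h1 : ‖e1 + ψ k‖ ≤ 1 + ‖ψ‖ :=
      (norm_add_le _ _).trans (by gcongr; exacts [norm_e1_le, ψ.norm_coe_le_norm k])
    calc ‖(Mmat c n k).mulVec ((R k).mulVec (e1 + ψ k))‖
        ≤ 2 * ‖Mmat c n k‖ * ‖(R k).mulVec (e1 + ψ k)‖ := mulVec_norm_le _ _
      _ ≤ 2 * (1 + |c| * ((k:ℝ) + 1)) * (2 * ‖R k‖ * (1 + ‖ψ‖)) := by
          have hM := Mmat_norm_le c h.2
          have h2 : ‖(R k).mulVec (e1 + ψ k)‖ ≤ 2 * ‖R k‖ * (1 + ‖ψ‖) := by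
            calc ‖(R k).mulVec (e1 + ψ k)‖ ≤ 2 * ‖R k‖ * ‖e1 + ψ k‖ := mulVec_norm_le _ _
              _ ≤ 2 * ‖R k‖ * (1 + ‖ψ‖) := by gcongr
          exact mul_le_mul (by linarith) h2 (norm_nonneg _) (by positivity)
      _ = 4 * (1 + |c| * ((k:ℝ) + 1)) * ‖R k‖ * (1 + ‖ψ‖) := by ring
  · rw [if_neg h]
    have : ¬ N ≤ k ∨ (N ≤ k) := em (N ≤ k) |>.symm
    by_cases hN : N ≤ k
    · rw [if_pos hN]
      have : (0:ℝ) ≤ 4 * (1 + |c| * ((k:ℝ) + 1)) * ‖R k‖ * (1 + ‖ψ‖) := by positivity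
      simpa using this
    · rw [if_neg hN]
      simp

lemma gfun_sub_norm_le (c R N) (ψ ψ' : BoundedContinuousFunction ℕ (Fin 2 → ℝ)) (n k : ℕ) :
    ‖gfun c R N ψ n k - gfun c R N ψ' n k‖ ≤ Dfun c R N k * ‖ψ - ψ'‖ := by
  unfold gfun Dfun
  by_cases h : N ≤ k ∧ n ≤ k
  · rw [if_pos h, if_pos h, if_pos h.1]
    have hsub : (Mmat c n k).mulVec ((R k).mulVec (e1 + ψ k))
        - (Mmat c n k).mulVec ((R k).mulVec (e1 + ψ' k))
        = (Mmat c n k).mulVec ((R k).mulVec (ψ k - ψ' k)) := by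
      rw [← Matrix.mulVec_sub, ← Matrix.mulVec_sub]
      congr 1
      abel
    rw [hsub]
    have h3 : ‖ψ k - ψ' k‖ ≤ ‖ψ - ψ'‖ := by
      have := (ψ - ψ').norm_coe_le_norm k
      simpa using this
    calc ‖(Mmat c n k).mulVec ((R k).mulVec (ψ k - ψ' k))‖
        ≤ 2 * ‖Mmat c n k‖ * ‖(R k).mulVec (ψ k - ψ' k)‖ := mulVec_norm_le _ _
      _ ≤ 2 * (1 + |c| * ((k:ℝ) + 1)) * (2 * ‖R k‖ * ‖ψ - ψ'‖) := by
          have hM := Mmat_norm_le c h.2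
          have h2 : ‖(R k).mulVec (ψ k - ψ' k)‖ ≤ 2 * ‖R k‖ * ‖ψ - ψ'‖ := by
            calc ‖(R k).mulVec (ψ k - ψ' k)‖ ≤ 2 * ‖R k‖ * ‖ψ k - ψ' k‖ := mulVec_norm_le _ _
              _ ≤ 2 * ‖R k‖ * ‖ψ - ψ'‖ := by gcongr
          exact mul_le_mul (by linarith) h2 (norm_nonneg _) (by positivity)
      _ = 4 * (1 + |c| * ((k:ℝ) + 1)) * ‖R k‖ * ‖ψ - ψ'‖ := by ring
  · rw [if_neg h, if_neg h]
    by_cases hN : N ≤ k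
    · rw [if_pos hN]
      have : (0:ℝ) ≤ 4 * (1 + |c| * ((k:ℝ) + 1)) * ‖R k‖ * ‖ψ - ψ'‖ := by positivity
      simpa using this
    · rw [if_neg hN]
      simp

lemma exists_psi (c : ℝ) (R : ℕ → Matrix (Fin 2) (Fin 2) ℝ) (N : ℕ) (δ : ℝ)
    (hδ : 0 < δ) (hδ2 : δ ≤ 1/2)
    (hDsum : Summable (Dfun c R N)) (hDle : ∑' k, Dfun c R N k ≤ δ) :
    ∃ ψ : ℕ → Fin 2 → ℝ, (∀ n, ‖ψ n‖ ≤ 2 * δ) ∧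
      ∀ n, N ≤ n → e1 + ψ (n+1) = (!![(1:ℝ), c; 0, 1] + R n).mulVec (e1 + ψ n) := by
  classical
  have hDnn := Dfun_nonneg c R N
  have hgsum : ∀ (ψ : BoundedContinuousFunction ℕ (Fin 2 → ℝ)) (n : ℕ),
      Summable (fun k => gfun c R N ψ n k) := by
    intro ψ n
    exact Summable.of_norm_bounded (hDsum.mul_right (1 + ‖ψ‖)) (gfun_norm_le c R N ψ n)
  have hnormsum : ∀ (ψ : BoundedContinuousFunction ℕ (Fin 2 → ℝ)) (n : ℕ),
      Summable (fun k => ‖gfun c R N ψ n k‖) := by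
    intro ψ n
    exact Summable.of_nonneg_of_le (fun k => norm_nonneg _) (gfun_norm_le c R N ψ n)
      (hDsum.mul_right (1 + ‖ψ‖))
  have hTb : ∀ (ψ : BoundedContinuousFunction ℕ (Fin 2 → ℝ)) (n : ℕ),
      ‖-∑' k, gfun c R N ψ n k‖ ≤ δ * (1 + ‖ψ‖) := by
    intro ψ n
    rw [norm_neg]
    calc ‖∑' k, gfun c R N ψ n k‖ ≤ ∑' k, ‖gfun c R N ψ n k‖ :=
          norm_tsum_le_tsum_norm (hnormsum ψ n)
      _ ≤ ∑' k, Dfun c R N k * (1 + ‖ψ‖) :=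
          Summable.tsum_le_tsum (gfun_norm_le c R N ψ n) (hnormsum ψ n) (hDsum.mul_right _)
      _ = (∑' k, Dfun c R N k) * (1 + ‖ψ‖) := tsum_mul_right
      _ ≤ δ * (1 + ‖ψ‖) := by
          have : (0:ℝ) ≤ 1 + ‖ψ‖ := by positivity
          exact mul_le_mul_of_nonneg_right hDle this
  set T : BoundedContinuousFunction ℕ (Fin 2 → ℝ) → BoundedContinuousFunction ℕ (Fin 2 → ℝ) :=
    fun ψ => BoundedContinuousFunction.ofNormedAddCommGroup
      (fun n => -∑' k, gfun c R N ψ n k) continuous_of_discreteTopology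
      (δ * (1 + ‖ψ‖)) (hTb ψ) with hT
  have hTcoe : ∀ ψ n, T ψ n = -∑' k, gfun c R N ψ n k := fun _ _ => rfl
  have hlip : LipschitzWith (1/2 : NNReal) T := by
    apply LipschitzWith.of_dist_le_mul
    intro ψ ψ'
    rw [BoundedContinuousFunction.dist_le (by positivity)]
    intro n
    rw [dist_eq_norm]
    have hsub : T ψ n - T ψ' n = -∑' k, (gfun c R N ψ n k - gfun c R N ψ' n k) := by
      rw [hTcoe, hTcoe, Summable.tsum_sub (hgsum ψ n) (hgsum ψ' n)]
      abel
    rw [hsub, norm_neg]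
    have hsum1 : Summable (fun k => ‖gfun c R N ψ n k - gfun c R N ψ' n k‖) :=
      Summable.of_nonneg_of_le (fun k => norm_nonneg _) (gfun_sub_norm_le c R N ψ ψ' n)
        (hDsum.mul_right _)
    calc ‖∑' k, (gfun c R N ψ n k - gfun c R N ψ' n k)‖
        ≤ ∑' k, ‖gfun c R N ψ n k - gfun c R N ψ' n k‖ :=
          norm_tsum_le_tsum_norm hsum1
      _ ≤ ∑' k, Dfun c R N k * ‖ψ - ψ'‖ :=
          Summable.tsum_le_tsum (gfun_sub_norm_le c R N ψ ψ' n) hsum1 (hDsum.mul_right _)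
      _ = (∑' k, Dfun c R N k) * ‖ψ - ψ'‖ := tsum_mul_right
      _ ≤ δ * ‖ψ - ψ'‖ := mul_le_mul_of_nonneg_right hDle (norm_nonneg _)
      _ ≤ (1/2 : NNReal) * dist ψ ψ' := by
          rw [dist_eq_norm]
          have : ((1/2 : NNReal) : ℝ) = 1/2 := by norm_num
          rw [this]
          exact mul_le_mul_of_nonneg_right (by linarith) (norm_nonneg _)
  have hcontr : ContractingWith (1/2 : NNReal) T := ⟨one_half_lt_one, hlip⟩
  set ψb := hcontr.fixedPoint with hψbdef
  have hfix : T ψb = ψb := hcontr.fixedPoint_isFixedPt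
  have hψnorm : ‖ψb‖ ≤ 2 * δ := by
    have h1 : ‖ψb‖ ≤ δ * (1 + ‖ψb‖) := by
      conv_lhs => rw [← hfix]
      exact BoundedContinuousFunction.norm_ofNormedAddCommGroup_le
        continuous_of_discreteTopology (by positivity) (hTb ψb)
    nlinarith [norm_nonneg ψb]
  have hrec : ∀ n, N ≤ n → ψb (n+1) =
      (!![(1:ℝ), c; 0, 1]).mulVec (ψb n) + (R n).mulVec (e1 + ψb n) := by
    intro n hn
    set A : Matrix (Fin 2) (Fin 2) ℝ := !![(1:ℝ), c; 0, 1] with hA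
    set u : Fin 2 → ℝ := (R n).mulVec (e1 + ψb n) with hu
    have hpt : ∀ k, A.mulVec (gfun c R N ψb n k)
        = gfun c R N ψb (n+1) k + (if k = n then u else 0) := by
      intro k
      by_cases hk : k = n
      · rw [hk, if_pos rfl]
        have hcond : N ≤ n ∧ n ≤ n := ⟨hn, le_refl _⟩
        have hcond' : ¬ (N ≤ n ∧ n + 1 ≤ n) := by omega
        rw [gfun, gfun, if_pos hcond, if_neg hcond', Matrix.mulVec_mulVec,
          Amat_mul_Mmat, Mmat_succ_self, Matrix.one_mulVec, zero_add]
      · rw [if_neg hk, add_zero, gfun, gfun]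
        by_cases hcond : N ≤ k ∧ n ≤ k
        · have hcond' : N ≤ k ∧ n + 1 ≤ k := by omega
          rw [if_pos hcond, if_pos hcond', Matrix.mulVec_mulVec, Amat_mul_Mmat]
        · have hcond' : ¬ (N ≤ k ∧ n + 1 ≤ k) := by omega
          rw [if_neg hcond, if_neg hcond', Matrix.mulVec_zero]
    have hmap : A.mulVec (∑' k, gfun c R N ψb n k) = ∑' k, A.mulVec (gfun c R N ψb n k) := by
      let L : (Fin 2 → ℝ) →L[ℝ] (Fin 2 → ℝ) := LinearMap.toContinuousLinearMap A.mulVecLin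
      have : ∀ v, A.mulVec v = L v := fun v => rfl
      rw [this]
      rw [L.map_tsum (hgsum ψb n)]
      exact tsum_congr fun k => (this _).symm
    have hψn : ψb n = -∑' k, gfun c R N ψb n k := by
      have h := hTcoe ψb n; rwa [hfix] at h
    have hψn1 : ψb (n+1) = -∑' k, gfun c R N ψb (n+1) k := by
      have h := hTcoe ψb (n+1); rwa [hfix] at h
    have hsumite : Summable (fun k => if k = n then u else 0) := (hasSum_ite_eq n u).summable
    have : A.mulVec (ψb n) = -(∑' k, gfun c R N ψb (n+1) k) - u := by
      rw [hψn, Matrix.mulVec_neg, hmap]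
      rw [tsum_congr hpt, Summable.tsum_add (hgsum ψb (n+1)) hsumite, (hasSum_ite_eq n u).tsum_eq]
      abel
    rw [this, ← hψn1]
    abel
  refine ⟨fun n => ψb n, fun n => (ψb.norm_coe_le_norm n).trans hψnorm, ?_⟩
  intro n hn
  show e1 + ψb (n+1) = _
  rw [Matrix.add_mulVec, Matrix.mulVec_add, Amat_mulVec_e1, hrec n hn]
  abel

end Stmt11Aux

open Stmt11Aux

theorem stmt11 (c : ℝ) (hc : c ≠ 0)
    (R : ℕ → Matrix (Fin 2) (Fin 2) ℝ)
    (hR : Summable fun n : ℕ => ((n : ℝ) + 1) * ‖R n‖)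
    (hdet : ∀ n : ℕ, (!![(1 : ℝ), c; 0, 1] + R n).det ≠ 0)
    (ε : ℝ) (hε : 0 < ε) :
    ∃ φ : ℕ → Fin 2 → ℝ,
      (∀ n : ℕ, φ (n + 1) = (!![(1 : ℝ), c; 0, 1] + R n).mulVec (φ n)) ∧
      Filter.limsup (fun n : ℕ => ‖φ n - ![1, 0]‖) Filter.atTop ≤ ε := by
  classical
  set δ : ℝ := min (1/2) (ε/2) with hδdef
  have hδ : 0 < δ := lt_min (by norm_num) (by linarith)
  have hδ2 : δ ≤ 1/2 := min_le_left _ _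
  set C : ℕ → ℝ := fun k => 4 * (1 + |c| * ((k:ℝ) + 1)) * ‖R k‖ with hCdef
  have hCnn : ∀ k, 0 ≤ C k := fun k => by positivity
  have hRsum : Summable fun k => ‖R k‖ := by
    apply Summable.of_nonneg_of_le (fun k => norm_nonneg _) _ hR
    intro k
    have h1 : (1:ℝ) ≤ (k:ℝ) + 1 := by have := Nat.cast_nonneg (α := ℝ) k; linarith
    nlinarith [norm_nonneg (R k)]
  have hCsum : Summable C := by
    have h2 : Summable fun k => 4 * ‖R k‖ + (4 * |c|) * (((k:ℝ) + 1) * ‖R k‖) :=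
      (hRsum.mul_left 4).add (hR.mul_left (4 * |c|))
    apply h2.congr
    intro k
    simp only [hCdef]
    ring
  -- choose N with tail small
  obtain ⟨N, hN⟩ : ∃ N : ℕ, ∑' k, C (k + N) < δ := by
    have ht := tendsto_sum_nat_add C
    have := ht.eventually_lt_const hδ
    exact this.exists
  have hDsum : Summable (Dfun c R N) := by
    apply Summable.of_nonneg_of_le (Dfun_nonneg c R N) _ hCsum
    intro k
    unfold Dfun
    split
    · exact le_refl _
    · exact hCnn k
  have hDle : ∑' k, Dfun c R N k ≤ δ := by
    have hkey := Summable.sum_add_tsum_nat_add N hDsum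
    have h0 : ∑ i ∈ Finset.range N, Dfun c R N i = 0 := by
      apply Finset.sum_eq_zero
      intro i hi
      have : ¬ N ≤ i := by
        simp only [Finset.mem_range] at hi
        omega
      simp [Dfun, this]
    have h1 : (fun k => Dfun c R N (k + N)) = fun k => C (k + N) := by
      funext k
      have : N ≤ k + N := Nat.le_add_left _ _
      simp [Dfun, this, hCdef]
    rw [h0, zero_add] at hkey
    rw [← hkey, h1]
    exact le_of_lt hN
  obtain ⟨ψ, hψbound, hψrec⟩ := exists_psi c R N δ hδ hδ2 hDsum hDle
  -- backward extension
  set A : Matrix (Fin 2) (Fin 2) ℝ := !![(1 : ℝ), c; 0, 1] with hA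
  set Q : ℕ → Matrix (Fin 2) (Fin 2) ℝ :=
    fun n => Nat.rec 1 (fun m Qm => (A + R m) * Qm) n with hQ
  have hQsucc : ∀ n, Q (n+1) = (A + R n) * Q n := fun n => rfl
  have hQdet : ∀ n, IsUnit (Q n).det := by
    intro n
    induction n with
    | zero => simp [hQ]
    | succ m ih =>
        rw [hQsucc m, Matrix.det_mul]
        exact (isUnit_iff_ne_zero.mpr (hdet m)).mul ih
  set w : Fin 2 → ℝ := ((Q N)⁻¹).mulVec (e1 + ψ N) with hw
  set φ : ℕ → Fin 2 → ℝ := fun n => (Q n).mulVec w with hφ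
  have hφrec : ∀ n, φ (n+1) = (A + R n).mulVec (φ n) := by
    intro n
    show (Q (n+1)).mulVec w = (A + R n).mulVec ((Q n).mulVec w)
    rw [hQsucc n, ← Matrix.mulVec_mulVec]
  have hφN : φ N = e1 + ψ N := by
    show (Q N).mulVec (((Q N)⁻¹).mulVec (e1 + ψ N)) = e1 + ψ N
    rw [Matrix.mulVec_mulVec, Matrix.mul_nonsing_inv _ (hQdet N), Matrix.one_mulVec]
  have hagree : ∀ n, N ≤ n → φ n = e1 + ψ n := by
    intro n hn
    induction n, hn using Nat.le_induction with
    | base => exact hφN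
    | succ m hm ih =>
        rw [hφrec m, ih, ← hψrec m hm]
  refine ⟨φ, hφrec, ?_⟩
  apply Filter.limsup_le_of_le (Filter.isCoboundedUnder_le_of_le Filter.atTop
    (fun n => norm_nonneg _))
  rw [Filter.eventually_atTop]
  refine ⟨N, fun n hn => ?_⟩
  rw [hagree n hn]
  have he : e1 + ψ n - ![1, 0] = ψ n := by
    rw [show (![1, 0] : Fin 2 → ℝ) = e1 from rfl]
    exact add_sub_cancel_left e1 (ψ n)
  rw [he]
  calc ‖ψ n‖ ≤ 2 * δ := hψbound n
    _ ≤ 2 * (ε/2) := by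
        have := min_le_right (1/2 : ℝ) (ε/2)
        linarith
    _ = ε := by ring
end
end

section
/- Let c ∈ ℝ with c ≠ 0, set A = [[1, c], [0, 1]], and let R : ℕ → M₂(ℝ) satisfy Σ_{n≥0} (n+1)·‖R(n)‖ < ∞ and det(A + R(n)) ≠ 0 for every n. Then there exists a solution ψ : ℕ → ℝ² of ψ(n+1) = (A + R(n))·ψ(n) such that (1/n)·‖ψ(n) − (c·n, 1)ᵀ‖ → 0 as n → ∞; in particular ‖ψ(n)‖ = O(n). -/
attribute [local instance] Matrix.normedAddCommGroup

noncomputable section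

namespace Stmt12Aux

open Filter Finset

lemma mulVec_norm_le (M : Matrix (Fin 2) (Fin 2) ℝ) (x : Fin 2 → ℝ) :
    ‖M.mulVec x‖ ≤ 2 * ‖M‖ * ‖x‖ := by
  have hnn : (0:ℝ) ≤ 2 * ‖M‖ * ‖x‖ := by positivity
  rw [pi_norm_le_iff_of_nonneg hnn]
  intro i
  have he : M.mulVec x i = M i 0 * x 0 + M i 1 * x 1 := by
    simp [Matrix.mulVec, dotProduct, Fin.sum_univ_two]
  have h0 : ‖M i 0 * x 0‖ ≤ ‖M‖ * ‖x‖ := by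
    rw [norm_mul]
    exact mul_le_mul (M.norm_entry_le_entrywise_sup_norm) (norm_le_pi_norm x 0)
      (norm_nonneg _) (norm_nonneg _)
  have h1 : ‖M i 1 * x 1‖ ≤ ‖M‖ * ‖x‖ := by
    rw [norm_mul]
    exact mul_le_mul (M.norm_entry_le_entrywise_sup_norm) (norm_le_pi_norm x 1)
      (norm_nonneg _) (norm_nonneg _)
  calc ‖M.mulVec x i‖ ≤ ‖M i 0 * x 0‖ + ‖M i 1 * x 1‖ := by rw [he]; exact norm_add_le _ _
    _ ≤ 2 * ‖M‖ * ‖x‖ := by linarith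

def Amat (c : ℝ) : Matrix (Fin 2) (Fin 2) ℝ := !![1, c; 0, 1]

def G1 (c : ℝ) (k : ℕ) : Matrix (Fin 2) (Fin 2) ℝ := !![1, -c * ((k : ℝ) + 1); 0, 0]

def G2 (c : ℝ) (m : ℕ) : Matrix (Fin 2) (Fin 2) ℝ := !![0, c * (m : ℝ); 0, 1]

def wv (c : ℝ) (n₀ m : ℕ) : Fin 2 → ℝ := ![c * ((n₀ : ℝ) + (m : ℝ)), 1]

lemma A_mulVec_w (c : ℝ) (n₀ m : ℕ) :
    (Amat c).mulVec (wv c n₀ m) = wv c n₀ (m + 1) := by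
  funext i
  fin_cases i <;>
    simp [Amat, wv, Matrix.mulVec, dotProduct, Fin.sum_univ_two] <;> push_cast <;> ring

lemma A_mul_G1 (c : ℝ) (k : ℕ) : Amat c * G1 c k = G1 c k := by
  ext i j
  fin_cases i <;> fin_cases j <;>
    simp [Amat, G1, Matrix.mul_apply, Fin.sum_univ_two]

lemma A_mul_G2 (c : ℝ) (m : ℕ) : Amat c * G2 c m = G2 c (m + 1) := by
  ext i j
  fin_cases i <;> fin_cases j <;>
    simp [Amat, G2, Matrix.mul_apply, Fin.sum_univ_two] <;> push_cast <;> ring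

lemma G1_add_G2 (c : ℝ) (m : ℕ) : G1 c m + G2 c (m + 1) = 1 := by
  ext i j
  fin_cases i <;> fin_cases j <;>
    simp [G1, G2, Matrix.one_apply] <;> push_cast <;> ring

lemma norm_G1_le (c : ℝ) (k : ℕ) : ‖G1 c k‖ ≤ max 1 |c| * ((k : ℝ) + 1) := by
  have hk : (1 : ℝ) ≤ (k : ℝ) + 1 := by have := Nat.cast_nonneg (α := ℝ) k; linarith
  have hC : (1 : ℝ) ≤ max 1 |c| := le_max_left _ _
  have hc : |c| ≤ max 1 |c| := le_max_right _ _
  have habs : |(k : ℝ) + 1| = (k : ℝ) + 1 := abs_of_nonneg (by positivity)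
  have hnn : (0 : ℝ) ≤ max 1 |c| * ((k : ℝ) + 1) := mul_nonneg (le_trans zero_le_one hC) (by positivity)
  rw [Matrix.norm_le_iff hnn]
  intro i j
  fin_cases i <;> fin_cases j <;> simp [G1, abs_mul, habs] <;>
    nlinarith [abs_nonneg c, Nat.cast_nonneg (α := ℝ) k]

lemma norm_G2_le (c : ℝ) (m : ℕ) : ‖G2 c m‖ ≤ max 1 |c| * ((m : ℝ) + 1) := by
  have hm : (1 : ℝ) ≤ (m : ℝ) + 1 := by have := Nat.cast_nonneg (α := ℝ) m; linarith
  have hC : (1 : ℝ) ≤ max 1 |c| := le_max_left _ _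
  have hc : |c| ≤ max 1 |c| := le_max_right _ _
  have habs : |(m : ℝ)| = (m : ℝ) := abs_of_nonneg (by positivity)
  have hnn : (0 : ℝ) ≤ max 1 |c| * ((m : ℝ) + 1) := mul_nonneg (le_trans zero_le_one hC) (by positivity)
  rw [Matrix.norm_le_iff hnn]
  intro i j
  fin_cases i <;> fin_cases j <;> simp [G2, abs_mul, habs] <;>
    nlinarith [abs_nonneg c, Nat.cast_nonneg (α := ℝ) m]

lemma norm_wv_le (c : ℝ) (n₀ m : ℕ) :
    ‖wv c n₀ m‖ ≤ max 1 |c| * ((m : ℝ) + (n₀ : ℝ) + 1) := by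
  have hm : (1 : ℝ) ≤ (m : ℝ) + (n₀ : ℝ) + 1 := by have := Nat.cast_nonneg (α := ℝ) m; have := Nat.cast_nonneg (α := ℝ) n₀; linarith
  have hC : (1 : ℝ) ≤ max 1 |c| := le_max_left _ _
  have hc : |c| ≤ max 1 |c| := le_max_right _ _
  have habs : |(n₀ : ℝ) + (m : ℝ)| = (n₀ : ℝ) + (m : ℝ) := abs_of_nonneg (by positivity)
  have hnn : (0 : ℝ) ≤ max 1 |c| * ((m : ℝ) + (n₀ : ℝ) + 1) := mul_nonneg (le_trans zero_le_one hC) (by positivity)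
  rw [pi_norm_le_iff_of_nonneg hnn]
  intro i
  fin_cases i <;> simp [wv, abs_mul, habs] <;>
    nlinarith [abs_nonneg c, Nat.cast_nonneg (α := ℝ) m, Nat.cast_nonneg (α := ℝ) n₀]

lemma sum_weighted_eq (a : ℕ → ℝ) (n : ℕ) :
    ∑ j ∈ range n, ((j : ℝ) + 1) * a j = ∑ k ∈ range n, ∑ j ∈ Ico k n, a j := by
  induction n with
  | zero => simp
  | succ n ih =>
    rw [Finset.sum_range_succ, ih, Finset.sum_range_succ]
    have h1 : ∀ k ∈ range n, ∑ j ∈ Ico k (n + 1), a j = (∑ j ∈ Ico k n, a j) + a n := by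
      intro k hk
      rw [Finset.sum_Ico_succ_top (le_of_lt (Finset.mem_range.mp hk))]
    rw [Finset.sum_congr rfl h1, Finset.sum_add_distrib]
    have h2 : ∑ j ∈ Ico n (n + 1), a j = a n := by simp
    rw [h2]
    simp only [Finset.sum_const, Finset.card_range, nsmul_eq_mul]
    push_cast
    ring

lemma kron {a : ℕ → ℝ} (ha : ∀ n, 0 ≤ a n) (hs : Summable a) :
    Tendsto (fun n : ℕ => ((n : ℝ))⁻¹ * ∑ j ∈ range n, ((j : ℝ) + 1) * a j) atTop (nhds 0) := by
  have hb0 : Tendsto (fun i : ℕ => ∑' k, a (k + i)) atTop (nhds 0) := tendsto_sum_nat_add a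
  have hces := hb0.cesaro
  refine squeeze_zero (fun n => ?_) (fun n => ?_) hces
  · have : (0:ℝ) ≤ ∑ j ∈ range n, ((j : ℝ) + 1) * a j :=
      Finset.sum_nonneg fun j _ => by have := ha j; positivity
    positivity
  · have hle : ∑ j ∈ range n, ((j : ℝ) + 1) * a j ≤ ∑ k ∈ range n, ∑' j, a (j + k) := by
      rw [sum_weighted_eq]
      refine Finset.sum_le_sum fun k _ => ?_
      rw [Finset.sum_Ico_eq_sum_range]
      have hsk : Summable fun j => a (j + k) := (summable_nat_add_iff k).2 hs
      have := Summable.sum_le_tsum (range (n - k)) (fun j _ => ha (j + k)) hsk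
      refine le_trans (le_of_eq ?_) this
      exact Finset.sum_congr rfl fun j _ => by rw [Nat.add_comm k j]
    have hinv : (0:ℝ) ≤ ((n : ℝ))⁻¹ := by positivity
    calc ((n : ℝ))⁻¹ * ∑ j ∈ range n, ((j : ℝ) + 1) * a j
        ≤ ((n : ℝ))⁻¹ * ∑ k ∈ range n, ∑' j, a (j + k) := by
          exact mul_le_mul_of_nonneg_left hle hinv
      _ = ((n : ℝ))⁻¹ • ∑ k ∈ range n, ∑' j, a (j + k) := by rw [smul_eq_mul]

def glf (R : ℕ → Matrix (Fin 2) (Fin 2) ℝ) (n₀ : ℕ) (v : ℕ → Fin 2 → ℝ) (j : ℕ) :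
    Fin 2 → ℝ :=
  (R (j + n₀)).mulVec ((((j : ℝ) + (n₀ : ℝ) + 1)) • v j)

def Tfun (c : ℝ) (R : ℕ → Matrix (Fin 2) (Fin 2) ℝ) (n₀ : ℕ) (v : ℕ → Fin 2 → ℝ) (m : ℕ) :
    Fin 2 → ℝ :=
  ((m : ℝ) + (n₀ : ℝ) + 1)⁻¹ •
    (wv c n₀ m
      + ∑ k ∈ Finset.range m, (G1 c (k + n₀)).mulVec (glf R n₀ v k)
      - (G2 c (m + n₀)).mulVec (∑' k, glf R n₀ v (k + m)))

section Core

variable {c : ℝ} {R : ℕ → Matrix (Fin 2) (Fin 2) ℝ}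

local notation "afun" => fun j : ℕ => ((j : ℝ) + 1) * ‖R j‖

lemma afun_nonneg (j : ℕ) : 0 ≤ ((j : ℝ) + 1) * ‖R j‖ := by positivity

lemma glf_norm_le (n₀ : ℕ) (v : ℕ → Fin 2 → ℝ) (j : ℕ) :
    ‖glf R n₀ v j‖ ≤ 2 * (((j + n₀ : ℕ) : ℝ) + 1) * ‖R (j + n₀)‖ * ‖v j‖ := by
  have h1 := mulVec_norm_le (R (j + n₀)) ((((j : ℝ) + (n₀ : ℝ) + 1)) • v j)
  have h2 : ‖(((j : ℝ) + (n₀ : ℝ) + 1)) • v j‖ = ((j : ℝ) + (n₀ : ℝ) + 1) * ‖v j‖ := by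
    rw [norm_smul, Real.norm_eq_abs, abs_of_nonneg (by positivity)]
  have h3 : ((j + n₀ : ℕ) : ℝ) + 1 = (j : ℝ) + (n₀ : ℝ) + 1 := by push_cast; ring
  rw [glf, h3]
  calc ‖(R (j + n₀)).mulVec ((((j : ℝ) + (n₀ : ℝ) + 1)) • v j)‖
      ≤ 2 * ‖R (j + n₀)‖ * (((j : ℝ) + (n₀ : ℝ) + 1) * ‖v j‖) := by rw [← h2]; exact h1
    _ = 2 * ((j : ℝ) + (n₀ : ℝ) + 1) * ‖R (j + n₀)‖ * ‖v j‖ := by ring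

lemma glf_tail_summable (hR : Summable fun n : ℕ => ((n : ℝ) + 1) * ‖R n‖)
    (n₀ : ℕ) {v : ℕ → Fin 2 → ℝ} {N : ℝ} (hv : ∀ j, ‖v j‖ ≤ N) (m : ℕ) :
    Summable fun k => glf R n₀ v (k + m) := by
  have hs : Summable fun k : ℕ => 2 * N * (((k + (m + n₀) : ℕ) : ℝ) + 1) * ‖R (k + (m + n₀))‖ := by
    have := ((summable_nat_add_iff (f := fun n : ℕ => ((n : ℝ) + 1) * ‖R n‖) (m + n₀)).2 hR)
    exact (this.mul_left (2 * N)).congr fun k => by push_cast; ring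
  have hs' : Summable fun k : ℕ => 2 * N * (((k + m + n₀ : ℕ) : ℝ) + 1) * ‖R (k + m + n₀)‖ :=
    hs.congr fun k => by rw [show k + (m + n₀) = k + m + n₀ from by omega]
  refine Summable.of_norm_bounded hs' fun k => ?_
  calc ‖glf R n₀ v (k + m)‖
        ≤ 2 * (((k + m + n₀ : ℕ) : ℝ) + 1) * ‖R (k + m + n₀)‖ * ‖v (k + m)‖ :=
          glf_norm_le n₀ v (k + m)
      _ ≤ 2 * N * (((k + m + n₀ : ℕ) : ℝ) + 1) * ‖R (k + m + n₀)‖ := by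
          have h0 : (0:ℝ) ≤ ‖v (k+m)‖ := norm_nonneg _
          have hN : ‖v (k + m)‖ ≤ N := hv (k + m)
          have : (0:ℝ) ≤ 2 * (((k + m + n₀ : ℕ) : ℝ) + 1) * ‖R (k + m + n₀)‖ := by positivity
          nlinarith

lemma tail_le_tail {f : ℕ → ℝ} (hf : Summable f) (h0 : ∀ n, 0 ≤ f n) (m : ℕ) :
    ∑' k, f (k + m) ≤ ∑' k, f k := by
  have h := Summable.sum_add_tsum_nat_add m hf
  have hs : 0 ≤ ∑ i ∈ range m, f i := Finset.sum_nonneg fun i _ => h0 i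
  linarith

lemma glf_norms_summable (hR : Summable fun n : ℕ => ((n : ℝ) + 1) * ‖R n‖)
    (n₀ : ℕ) {v : ℕ → Fin 2 → ℝ} {N : ℝ} (hv : ∀ j, ‖v j‖ ≤ N) (m : ℕ) :
    Summable fun k => ‖glf R n₀ v (k + m)‖ := by
  have hs : Summable fun k : ℕ => 2 * N * (((k + m + n₀ : ℕ) : ℝ) + 1) * ‖R (k + m + n₀)‖ := by
    have h1 := ((summable_nat_add_iff (f := fun n : ℕ => ((n : ℝ) + 1) * ‖R n‖) (m + n₀)).2 hR)
    exact (h1.mul_left (2 * N)).congr fun k => by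
      rw [show k + (m + n₀) = k + m + n₀ from by omega]; push_cast; ring
  refine Summable.of_nonneg_of_le (fun k => norm_nonneg _) (fun k => ?_) hs
  calc ‖glf R n₀ v (k + m)‖
      ≤ 2 * (((k + m + n₀ : ℕ) : ℝ) + 1) * ‖R (k + m + n₀)‖ * ‖v (k + m)‖ :=
        glf_norm_le n₀ v (k + m)
    _ ≤ 2 * N * (((k + m + n₀ : ℕ) : ℝ) + 1) * ‖R (k + m + n₀)‖ := by
        have h0 : (0:ℝ) ≤ ‖v (k+m)‖ := norm_nonneg _
        have hN : ‖v (k + m)‖ ≤ N := hv (k + m)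
        have : (0:ℝ) ≤ 2 * (((k + m + n₀ : ℕ) : ℝ) + 1) * ‖R (k + m + n₀)‖ := by positivity
        nlinarith

lemma glf_tail_norm_le (hR : Summable fun n : ℕ => ((n : ℝ) + 1) * ‖R n‖)
    (n₀ : ℕ) {v : ℕ → Fin 2 → ℝ} {N : ℝ} (hN : 0 ≤ N) (hv : ∀ j, ‖v j‖ ≤ N) (m : ℕ) :
    ‖∑' k, glf R n₀ v (k + m)‖ ≤
      2 * N * ∑' k, (((k + n₀ : ℕ) : ℝ) + 1) * ‖R (k + n₀)‖ := by
  have hsm := glf_norms_summable hR n₀ hv m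
  have hsa : Summable fun k : ℕ => (((k + n₀ : ℕ) : ℝ) + 1) * ‖R (k + n₀)‖ :=
    ((summable_nat_add_iff (f := fun n : ℕ => ((n : ℝ) + 1) * ‖R n‖) n₀).2 hR).congr
      fun k => by push_cast; ring
  have hsam : Summable fun k : ℕ => (((k + m + n₀ : ℕ) : ℝ) + 1) * ‖R (k + m + n₀)‖ :=
    (((summable_nat_add_iff (f := fun n : ℕ => ((n : ℝ) + 1) * ‖R n‖) (m + n₀)).2 hR).congr
      fun k => by rw [show k + (m + n₀) = k + m + n₀ from by omega])
  have h1 : ‖∑' k, glf R n₀ v (k + m)‖ ≤ ∑' k, ‖glf R n₀ v (k + m)‖ :=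
    norm_tsum_le_tsum_norm hsm
  have h2 : ∑' k, ‖glf R n₀ v (k + m)‖ ≤
      ∑' k, 2 * N * ((((k + m + n₀ : ℕ) : ℝ)) + 1) * ‖R (k + m + n₀)‖ := by
    refine Summable.tsum_le_tsum (fun k => ?_) hsm ((hsam.mul_left (2 * N)).congr fun k => by ring)
    calc ‖glf R n₀ v (k + m)‖
        ≤ 2 * (((k + m + n₀ : ℕ) : ℝ) + 1) * ‖R (k + m + n₀)‖ * ‖v (k + m)‖ :=
          glf_norm_le n₀ v (k + m)
      _ ≤ 2 * N * (((k + m + n₀ : ℕ) : ℝ) + 1) * ‖R (k + m + n₀)‖ := by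
          have h0 : (0:ℝ) ≤ ‖v (k+m)‖ := norm_nonneg _
          have hNk : ‖v (k + m)‖ ≤ N := hv (k + m)
          have : (0:ℝ) ≤ 2 * (((k + m + n₀ : ℕ) : ℝ) + 1) * ‖R (k + m + n₀)‖ := by positivity
          nlinarith
  have h3 : ∑' k, 2 * N * ((((k + m + n₀ : ℕ) : ℝ)) + 1) * ‖R (k + m + n₀)‖ =
      2 * N * ∑' k, ((((k + m + n₀ : ℕ) : ℝ)) + 1) * ‖R (k + m + n₀)‖ := by
    rw [← tsum_mul_left]
    exact tsum_congr fun k => by ring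
  have h4 : ∑' k, ((((k + m + n₀ : ℕ) : ℝ)) + 1) * ‖R (k + m + n₀)‖ ≤
      ∑' k, (((k + n₀ : ℕ) : ℝ) + 1) * ‖R (k + n₀)‖ :=
    tail_le_tail hsa (fun k => by positivity) m
  have hτ : (0:ℝ) ≤ ∑' k, (((k + n₀ : ℕ) : ℝ) + 1) * ‖R (k + n₀)‖ :=
    tsum_nonneg fun k => by positivity
  nlinarith [h1, h2, h3, h4]

lemma Tfun_diff_norm_le (hR : Summable fun n : ℕ => ((n : ℝ) + 1) * ‖R n‖) (n₀ : ℕ)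
    {v₁ v₂ : ℕ → Fin 2 → ℝ} {N₁ N₂ D : ℝ}
    (hv₁ : ∀ j, ‖v₁ j‖ ≤ N₁) (hv₂ : ∀ j, ‖v₂ j‖ ≤ N₂) (hD : 0 ≤ D)
    (hd : ∀ j, ‖v₁ j - v₂ j‖ ≤ D) (m : ℕ) :
    ‖Tfun c R n₀ v₁ m - Tfun c R n₀ v₂ m‖ ≤
      8 * max 1 |c| * (∑' k, (((k + n₀ : ℕ) : ℝ) + 1) * ‖R (k + n₀)‖) * D := by
  set C := max 1 |c| with hCdef
  have hC1 : (1:ℝ) ≤ C := le_max_left _ _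
  have hC0 : (0:ℝ) ≤ C := le_trans zero_le_one hC1
  set τ := ∑' k, (((k + n₀ : ℕ) : ℝ) + 1) * ‖R (k + n₀)‖ with hτdef
  have hsa : Summable fun k : ℕ => (((k + n₀ : ℕ) : ℝ) + 1) * ‖R (k + n₀)‖ :=
    ((summable_nat_add_iff (f := fun n : ℕ => ((n : ℝ) + 1) * ‖R n‖) n₀).2 hR).congr
      fun k => by push_cast; ring
  have hτ0 : (0:ℝ) ≤ τ := tsum_nonneg fun k => by positivity
  set d : ℕ → Fin 2 → ℝ := fun j => v₁ j - v₂ j with hddef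
  have hglf_sub : ∀ j, glf R n₀ v₁ j - glf R n₀ v₂ j = glf R n₀ d j := by
    intro j
    rw [glf, glf, glf, ← Matrix.mulVec_sub, ← smul_sub]
  set Wm : ℝ := (m : ℝ) + (n₀ : ℝ) + 1 with hWdef
  have hWm1 : (1:ℝ) ≤ Wm := by
    have := Nat.cast_nonneg (α := ℝ) m; have := Nat.cast_nonneg (α := ℝ) n₀
    rw [hWdef]; linarith
  have hWm0 : (0:ℝ) < Wm := lt_of_lt_of_le zero_lt_one hWm1
  have hstep : Tfun c R n₀ v₁ m - Tfun c R n₀ v₂ m =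
      Wm⁻¹ • ((∑ k ∈ Finset.range m, (G1 c (k + n₀)).mulVec (glf R n₀ d k))
        - (G2 c (m + n₀)).mulVec (∑' k, glf R n₀ d (k + m))) := by
    rw [Tfun, Tfun, ← smul_sub]
    congr 1
    have hS : (∑ k ∈ Finset.range m, (G1 c (k + n₀)).mulVec (glf R n₀ v₁ k))
        - (∑ k ∈ Finset.range m, (G1 c (k + n₀)).mulVec (glf R n₀ v₂ k))
        = ∑ k ∈ Finset.range m, (G1 c (k + n₀)).mulVec (glf R n₀ d k) := by
      rw [← Finset.sum_sub_distrib]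
      exact Finset.sum_congr rfl fun k _ => by rw [← Matrix.mulVec_sub, hglf_sub k]
    have hB : (G2 c (m + n₀)).mulVec (∑' k, glf R n₀ v₁ (k + m))
        - (G2 c (m + n₀)).mulVec (∑' k, glf R n₀ v₂ (k + m))
        = (G2 c (m + n₀)).mulVec (∑' k, glf R n₀ d (k + m)) := by
      rw [← Matrix.mulVec_sub,
        ← Summable.tsum_sub (glf_tail_summable hR n₀ hv₁ m) (glf_tail_summable hR n₀ hv₂ m)]
      exact congrArg _ (tsum_congr fun k => hglf_sub (k + m))
    rw [← hS, ← hB]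
    abel
  rw [hstep]
  have hd' : ∀ j, ‖d j‖ ≤ D := hd
  have hSbound : ‖∑ k ∈ Finset.range m, (G1 c (k + n₀)).mulVec (glf R n₀ d k)‖ ≤
      4 * C * Wm * D * ∑ k ∈ Finset.range m, (((k + n₀ : ℕ) : ℝ) + 1) * ‖R (k + n₀)‖ := by
    refine le_trans (norm_sum_le _ _) ?_
    rw [Finset.mul_sum]
    refine Finset.sum_le_sum fun k hk => ?_
    have hkm : (k : ℝ) ≤ (m : ℝ) := by
      exact_mod_cast le_of_lt (Finset.mem_range.mp hk)
    have hkW : ((k + n₀ : ℕ) : ℝ) + 1 ≤ Wm := by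
      rw [hWdef]; push_cast; linarith
    have h1 : ‖(G1 c (k + n₀)).mulVec (glf R n₀ d k)‖ ≤
        2 * ‖G1 c (k + n₀)‖ * ‖glf R n₀ d k‖ := mulVec_norm_le _ _
    have h2 : ‖G1 c (k + n₀)‖ ≤ C * (((k + n₀ : ℕ) : ℝ) + 1) := norm_G1_le c (k + n₀)
    have h3 : ‖glf R n₀ d k‖ ≤ 2 * (((k + n₀ : ℕ) : ℝ) + 1) * ‖R (k + n₀)‖ * D := by
      refine le_trans (glf_norm_le n₀ d k) ?_
      have : (0:ℝ) ≤ 2 * (((k + n₀ : ℕ) : ℝ) + 1) * ‖R (k + n₀)‖ := by positivity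
      nlinarith [hd' k, norm_nonneg (d k)]
    have hWk0 : (0:ℝ) ≤ ((k + n₀ : ℕ) : ℝ) + 1 := by positivity
    have hR0 : (0:ℝ) ≤ ‖R (k + n₀)‖ := norm_nonneg _
    have hg0 : (0:ℝ) ≤ ‖glf R n₀ d k‖ := norm_nonneg _
    have hG0 : (0:ℝ) ≤ ‖G1 c (k + n₀)‖ := norm_nonneg _
    calc ‖(G1 c (k + n₀)).mulVec (glf R n₀ d k)‖
        ≤ 2 * ‖G1 c (k + n₀)‖ * ‖glf R n₀ d k‖ := h1
      _ ≤ 2 * (C * (((k + n₀ : ℕ) : ℝ) + 1)) * (2 * (((k + n₀ : ℕ) : ℝ) + 1) * ‖R (k + n₀)‖ * D) := by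
          nlinarith
      _ ≤ 4 * C * Wm * D * ((((k + n₀ : ℕ) : ℝ) + 1) * ‖R (k + n₀)‖) := by
          have hint := mul_le_mul_of_nonneg_left hkW
            (by positivity : (0:ℝ) ≤ 4 * C * D * ‖R (k + n₀)‖ * (((k + n₀ : ℕ) : ℝ) + 1))
          linarith [hint]
  have hSsum : ∑ k ∈ Finset.range m, (((k + n₀ : ℕ) : ℝ) + 1) * ‖R (k + n₀)‖ ≤ τ := by
    rw [hτdef]
    exact Summable.sum_le_tsum (Finset.range m) (fun k _ => by positivity) hsa
  have hBbound : ‖(G2 c (m + n₀)).mulVec (∑' k, glf R n₀ d (k + m))‖ ≤ 4 * C * Wm * D * τ := by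
    have h1 : ‖(G2 c (m + n₀)).mulVec (∑' k, glf R n₀ d (k + m))‖ ≤
        2 * ‖G2 c (m + n₀)‖ * ‖∑' k, glf R n₀ d (k + m)‖ := mulVec_norm_le _ _
    have h2 : ‖G2 c (m + n₀)‖ ≤ C * (((m + n₀ : ℕ) : ℝ) + 1) := norm_G2_le c (m + n₀)
    have h2' : C * (((m + n₀ : ℕ) : ℝ) + 1) = C * Wm := by rw [hWdef]; push_cast; ring
    have h3 : ‖∑' k, glf R n₀ d (k + m)‖ ≤ 2 * D * τ := glf_tail_norm_le hR n₀ hD hd' m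
    have hG0 : (0:ℝ) ≤ ‖G2 c (m + n₀)‖ := norm_nonneg _
    have ht0 : (0:ℝ) ≤ ‖∑' k, glf R n₀ d (k + m)‖ := norm_nonneg _
    calc ‖(G2 c (m + n₀)).mulVec (∑' k, glf R n₀ d (k + m))‖
        ≤ 2 * ‖G2 c (m + n₀)‖ * ‖∑' k, glf R n₀ d (k + m)‖ := h1
      _ ≤ 2 * (C * Wm) * (2 * D * τ) := by rw [← h2']; nlinarith
      _ = 4 * C * Wm * D * τ := by ring
  have hX : ‖(∑ k ∈ Finset.range m, (G1 c (k + n₀)).mulVec (glf R n₀ d k))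
      - (G2 c (m + n₀)).mulVec (∑' k, glf R n₀ d (k + m))‖ ≤ 8 * C * Wm * D * τ := by
    refine le_trans (norm_sub_le _ _) ?_
    have : ‖∑ k ∈ Finset.range m, (G1 c (k + n₀)).mulVec (glf R n₀ d k)‖ ≤ 4 * C * Wm * D * τ := by
      refine le_trans hSbound ?_
      have h4 : (0:ℝ) ≤ 4 * C * Wm * D := by positivity
      nlinarith
    linarith [hBbound]
  rw [norm_smul, Real.norm_eq_abs, abs_of_nonneg (le_of_lt (inv_pos.mpr hWm0))]
  calc Wm⁻¹ * ‖(∑ k ∈ Finset.range m, (G1 c (k + n₀)).mulVec (glf R n₀ d k))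
      - (G2 c (m + n₀)).mulVec (∑' k, glf R n₀ d (k + m))‖
      ≤ Wm⁻¹ * (8 * C * Wm * D * τ) := by
        exact mul_le_mul_of_nonneg_left hX (le_of_lt (inv_pos.mpr hWm0))
    _ = 8 * C * τ * D := by field_simp
  
lemma glf_tail_norm_le' (hR : Summable fun n : ℕ => ((n : ℝ) + 1) * ‖R n‖)
    (n₀ : ℕ) {v : ℕ → Fin 2 → ℝ} {N : ℝ} (hN : 0 ≤ N) (hv : ∀ j, ‖v j‖ ≤ N) (m : ℕ) :
    ‖∑' k, glf R n₀ v (k + m)‖ ≤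
      2 * N * ∑' k, (((k + m + n₀ : ℕ) : ℝ) + 1) * ‖R (k + m + n₀)‖ := by
  have hsm := glf_norms_summable hR n₀ hv m
  have hsam : Summable fun k : ℕ => (((k + m + n₀ : ℕ) : ℝ) + 1) * ‖R (k + m + n₀)‖ :=
    (((summable_nat_add_iff (f := fun n : ℕ => ((n : ℝ) + 1) * ‖R n‖) (m + n₀)).2 hR).congr
      fun k => by rw [show k + (m + n₀) = k + m + n₀ from by omega])
  have h1 : ‖∑' k, glf R n₀ v (k + m)‖ ≤ ∑' k, ‖glf R n₀ v (k + m)‖ :=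
    norm_tsum_le_tsum_norm hsm
  have h2 : ∑' k, ‖glf R n₀ v (k + m)‖ ≤
      ∑' k, 2 * N * ((((k + m + n₀ : ℕ) : ℝ)) + 1) * ‖R (k + m + n₀)‖ := by
    refine Summable.tsum_le_tsum (fun k => ?_) hsm ((hsam.mul_left (2 * N)).congr fun k => by ring)
    calc ‖glf R n₀ v (k + m)‖
        ≤ 2 * (((k + m + n₀ : ℕ) : ℝ) + 1) * ‖R (k + m + n₀)‖ * ‖v (k + m)‖ :=
          glf_norm_le n₀ v (k + m)
      _ ≤ 2 * N * (((k + m + n₀ : ℕ) : ℝ) + 1) * ‖R (k + m + n₀)‖ := by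
          have h0 : (0:ℝ) ≤ ‖v (k+m)‖ := norm_nonneg _
          have hNk : ‖v (k + m)‖ ≤ N := hv (k + m)
          have : (0:ℝ) ≤ 2 * (((k + m + n₀ : ℕ) : ℝ) + 1) * ‖R (k + m + n₀)‖ := by positivity
          nlinarith
  have h3 : ∑' k, 2 * N * ((((k + m + n₀ : ℕ) : ℝ)) + 1) * ‖R (k + m + n₀)‖ =
      2 * N * ∑' k, ((((k + m + n₀ : ℕ) : ℝ)) + 1) * ‖R (k + m + n₀)‖ := by
    rw [← tsum_mul_left]
    exact tsum_congr fun k => by ring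
  linarith [h1, h2, h3.le, h3.ge]

lemma Sbound2 (n₀ : ℕ) {v : ℕ → Fin 2 → ℝ} {N : ℝ} (hN : 0 ≤ N)
    (hv : ∀ j, ‖v j‖ ≤ N) (m : ℕ) :
    ‖∑ k ∈ Finset.range m, (G1 c (k + n₀)).mulVec (glf R n₀ v k)‖ ≤
      4 * max 1 |c| * N *
        ∑ k ∈ Finset.range m, (((k + n₀ : ℕ) : ℝ) + 1) * ((((k + n₀ : ℕ) : ℝ) + 1) * ‖R (k + n₀)‖) := by
  set C := max 1 |c| with hCdef
  have hC1 : (1:ℝ) ≤ C := le_max_left _ _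
  have hC0 : (0:ℝ) ≤ C := le_trans zero_le_one hC1
  refine le_trans (norm_sum_le _ _) ?_
  rw [Finset.mul_sum]
  refine Finset.sum_le_sum fun k _ => ?_
  have h1 : ‖(G1 c (k + n₀)).mulVec (glf R n₀ v k)‖ ≤
      2 * ‖G1 c (k + n₀)‖ * ‖glf R n₀ v k‖ := mulVec_norm_le _ _
  have h2 : ‖G1 c (k + n₀)‖ ≤ C * (((k + n₀ : ℕ) : ℝ) + 1) := norm_G1_le c (k + n₀)
  have h3 : ‖glf R n₀ v k‖ ≤ 2 * (((k + n₀ : ℕ) : ℝ) + 1) * ‖R (k + n₀)‖ * N := by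
    refine le_trans (glf_norm_le n₀ v k) ?_
    have : (0:ℝ) ≤ 2 * (((k + n₀ : ℕ) : ℝ) + 1) * ‖R (k + n₀)‖ := by positivity
    nlinarith [hv k, norm_nonneg (v k)]
  have hWk0 : (0:ℝ) ≤ ((k + n₀ : ℕ) : ℝ) + 1 := by positivity
  have hR0 : (0:ℝ) ≤ ‖R (k + n₀)‖ := norm_nonneg _
  have hg0 : (0:ℝ) ≤ ‖glf R n₀ v k‖ := norm_nonneg _
  have hG0 : (0:ℝ) ≤ ‖G1 c (k + n₀)‖ := norm_nonneg _
  calc ‖(G1 c (k + n₀)).mulVec (glf R n₀ v k)‖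
      ≤ 2 * ‖G1 c (k + n₀)‖ * ‖glf R n₀ v k‖ := h1
    _ ≤ 2 * (C * (((k + n₀ : ℕ) : ℝ) + 1)) * (2 * (((k + n₀ : ℕ) : ℝ) + 1) * ‖R (k + n₀)‖ * N) := by
        nlinarith
    _ = 4 * C * N * ((((k + n₀ : ℕ) : ℝ) + 1) * ((((k + n₀ : ℕ) : ℝ) + 1) * ‖R (k + n₀)‖)) := by
        ring

lemma exists_u (hR : Summable fun n : ℕ => ((n : ℝ) + 1) * ‖R n‖) (n₀ : ℕ)
    (hτ : 8 * max 1 |c| * (∑' k, (((k + n₀ : ℕ) : ℝ) + 1) * ‖R (k + n₀)‖) ≤ 1/2) :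
    ∃ u : ℕ → Fin 2 → ℝ, ∃ N : ℝ, 0 ≤ N ∧
      (∀ m, u (m + 1) = (Amat c + R (m + n₀)).mulVec (u m)) ∧
      (∀ m, ‖u m - wv c n₀ m‖ ≤
        4 * max 1 |c| * N *
          (∑ k ∈ Finset.range m, (((k + n₀ : ℕ) : ℝ) + 1) * ((((k + n₀ : ℕ) : ℝ) + 1) * ‖R (k + n₀)‖))
        + 4 * max 1 |c| * N * ((m : ℝ) + (n₀ : ℝ) + 1) *
            (∑' k, (((k + m + n₀ : ℕ) : ℝ) + 1) * ‖R (k + m + n₀)‖)) := by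
  set C := max 1 |c| with hCdef
  have hC1 : (1:ℝ) ≤ C := le_max_left _ _
  have hC0 : (0:ℝ) ≤ C := le_trans zero_le_one hC1
  set τ := ∑' k, (((k + n₀ : ℕ) : ℝ) + 1) * ‖R (k + n₀)‖ with hτdef
  have hτ0 : (0:ℝ) ≤ τ := tsum_nonneg fun k => by positivity
  have hW : ∀ m : ℕ, (0:ℝ) < (m : ℝ) + (n₀ : ℝ) + 1 := by
    intro m
    have := Nat.cast_nonneg (α := ℝ) m; have := Nat.cast_nonneg (α := ℝ) n₀
    linarith
  -- the map T on bounded functions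
  have hTbdd : ∀ v : BoundedContinuousFunction ℕ (Fin 2 → ℝ), ∀ m : ℕ,
      ‖Tfun c R n₀ (⇑v) m‖ ≤ C + 8 * C * τ * ‖v‖ := by
    intro v m
    have hz : ∀ j : ℕ, ‖(fun _ : ℕ => (0 : Fin 2 → ℝ)) j‖ ≤ (0:ℝ) := fun j => by simp
    have hd : ∀ j : ℕ, ‖(⇑v) j - (fun _ : ℕ => (0 : Fin 2 → ℝ)) j‖ ≤ ‖v‖ := fun j => by
      simpa using v.norm_coe_le_norm j
    have hdiff := Tfun_diff_norm_le (c := c) hR n₀ (fun j => v.norm_coe_le_norm j) hz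
      (norm_nonneg v) hd m
    have hTzero : Tfun c R n₀ (fun _ : ℕ => (0 : Fin 2 → ℝ)) m =
        ((m : ℝ) + (n₀ : ℝ) + 1)⁻¹ • wv c n₀ m := by
      simp [Tfun, glf]
    have hz2 : ‖Tfun c R n₀ (fun _ : ℕ => (0 : Fin 2 → ℝ)) m‖ ≤ C := by
      rw [hTzero, norm_smul, Real.norm_eq_abs, abs_of_nonneg (le_of_lt (inv_pos.mpr (hW m)))]
      have h1 : ‖wv c n₀ m‖ ≤ C * ((m : ℝ) + (n₀ : ℝ) + 1) := norm_wv_le c n₀ m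
      have h2 := hW m
      calc ((m : ℝ) + (n₀ : ℝ) + 1)⁻¹ * ‖wv c n₀ m‖
          ≤ ((m : ℝ) + (n₀ : ℝ) + 1)⁻¹ * (C * ((m : ℝ) + (n₀ : ℝ) + 1)) := by
            exact mul_le_mul_of_nonneg_left h1 (le_of_lt (inv_pos.mpr h2))
        _ = C := by field_simp
    calc ‖Tfun c R n₀ (⇑v) m‖
        ≤ ‖Tfun c R n₀ (⇑v) m - Tfun c R n₀ (fun _ : ℕ => (0 : Fin 2 → ℝ)) m‖
          + ‖Tfun c R n₀ (fun _ : ℕ => (0 : Fin 2 → ℝ)) m‖ := by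
          have h := norm_add_le (Tfun c R n₀ (⇑v) m - Tfun c R n₀ (fun _ : ℕ => (0 : Fin 2 → ℝ)) m)
            (Tfun c R n₀ (fun _ : ℕ => (0 : Fin 2 → ℝ)) m)
          rw [sub_add_cancel] at h
          exact h
      _ ≤ 8 * C * τ * ‖v‖ + C := by exact add_le_add hdiff hz2
      _ = C + 8 * C * τ * ‖v‖ := by ring
  set T : BoundedContinuousFunction ℕ (Fin 2 → ℝ) → BoundedContinuousFunction ℕ (Fin 2 → ℝ) :=
    fun v => BoundedContinuousFunction.ofNormedAddCommGroupDiscrete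
      (Tfun c R n₀ (⇑v)) (C + 8 * C * τ * ‖v‖) (hTbdd v) with hTdef
  have hTcoe : ∀ v, ⇑(T v) = Tfun c R n₀ (⇑v) := fun v => rfl
  have hCW : ContractingWith (1/2 : NNReal) T := by
    constructor
    · rw [← NNReal.coe_lt_coe]; norm_num
    · refine LipschitzWith.of_dist_le_mul fun v₁ v₂ => ?_
      have hK : ((1/2 : NNReal) : ℝ) = 1/2 := by norm_num
      rw [hK]
      have hdnn : (0:ℝ) ≤ 1/2 * dist v₁ v₂ := by positivity
      rw [BoundedContinuousFunction.dist_le hdnn]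
      intro m
      rw [hTcoe, hTcoe, dist_eq_norm]
      have hd : ∀ j : ℕ, ‖(⇑v₁) j - (⇑v₂) j‖ ≤ dist v₁ v₂ := fun j => by
        rw [← dist_eq_norm]; exact BoundedContinuousFunction.dist_coe_le_dist j
      have hdiff := Tfun_diff_norm_le (c := c) hR n₀ (fun j => v₁.norm_coe_le_norm j)
        (fun j => v₂.norm_coe_le_norm j) dist_nonneg hd m
      refine le_trans hdiff ?_
      exact mul_le_mul_of_nonneg_right hτ dist_nonneg
  set vstar := ContractingWith.fixedPoint T hCW with hvdef
  have hfix : T vstar = vstar := hCW.fixedPoint_isFixedPt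
  have hfix' : ∀ m, Tfun c R n₀ (⇑vstar) m = vstar m := by
    intro m
    conv_rhs => rw [← hfix]
    rfl
  set N := ‖vstar‖ with hNdef
  have hN0 : (0:ℝ) ≤ N := norm_nonneg _
  have hvN : ∀ m, ‖vstar m‖ ≤ N := fun m => vstar.norm_coe_le_norm m
  set u : ℕ → Fin 2 → ℝ := fun m => (((m : ℝ) + (n₀ : ℝ) + 1)) • vstar m with hudef
  have huN : ∀ m, u m = (((m : ℝ) + (n₀ : ℝ) + 1)) • vstar m := fun m => rfl
  have hgu : ∀ j, glf R n₀ (⇑vstar) j = (R (j + n₀)).mulVec (u j) := fun j => rfl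
  have hueq : ∀ m, u m = wv c n₀ m
      + (∑ k ∈ Finset.range m, (G1 c (k + n₀)).mulVec (glf R n₀ (⇑vstar) k))
      - (G2 c (m + n₀)).mulVec (∑' k, glf R n₀ (⇑vstar) (k + m)) := by
    intro m
    rw [huN m, ← hfix' m, Tfun, smul_inv_smul₀ (ne_of_gt (hW m))]
  refine ⟨u, N, hN0, ?_, ?_⟩
  · -- recursion
    intro m
    have hsum : Summable fun k => glf R n₀ (⇑vstar) (k + m) :=
      glf_tail_summable hR n₀ hvN m
    have ht : (∑' k, glf R n₀ (⇑vstar) (k + m)) = glf R n₀ (⇑vstar) m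
        + ∑' k, glf R n₀ (⇑vstar) (k + (m + 1)) := by
      rw [Summable.tsum_eq_zero_add hsum]
      congr 1
      · rw [Nat.zero_add]
      · exact tsum_congr fun k => by rw [show k + 1 + m = k + (m + 1) from by omega]
    have hAS : (Amat c).mulVec (∑ k ∈ Finset.range m, (G1 c (k + n₀)).mulVec (glf R n₀ (⇑vstar) k))
        = ∑ k ∈ Finset.range m, (G1 c (k + n₀)).mulVec (glf R n₀ (⇑vstar) k) := by
      have h1 : (Amat c).mulVec (∑ k ∈ Finset.range m, (G1 c (k + n₀)).mulVec (glf R n₀ (⇑vstar) k))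
          = ∑ k ∈ Finset.range m, (Amat c * G1 c (k + n₀)).mulVec (glf R n₀ (⇑vstar) k) := by
        have h2 := map_sum (Matrix.mulVecLin (Amat c))
          (fun k => (G1 c (k + n₀)).mulVec (glf R n₀ (⇑vstar) k)) (Finset.range m)
        simp only [Matrix.mulVecLin_apply, Matrix.mulVec_mulVec] at h2
        exact h2
      rw [h1]
      exact Finset.sum_congr rfl fun k _ => by rw [A_mul_G1]
    have hAu : (Amat c).mulVec (u m) = wv c n₀ (m + 1)
        + (∑ k ∈ Finset.range m, (G1 c (k + n₀)).mulVec (glf R n₀ (⇑vstar) k))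
        - (G2 c (m + n₀ + 1)).mulVec (∑' k, glf R n₀ (⇑vstar) (k + m)) := by
      rw [hueq m, Matrix.mulVec_sub, Matrix.mulVec_add, A_mulVec_w, hAS,
        Matrix.mulVec_mulVec, A_mul_G2]
    have hu1 : u (m + 1) = wv c n₀ (m + 1)
        + ((∑ k ∈ Finset.range m, (G1 c (k + n₀)).mulVec (glf R n₀ (⇑vstar) k))
            + (G1 c (m + n₀)).mulVec (glf R n₀ (⇑vstar) m))
        - (G2 c (m + n₀ + 1)).mulVec (∑' k, glf R n₀ (⇑vstar) (k + (m + 1))) := by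
      rw [hueq (m + 1), Finset.sum_range_succ,
        show m + 1 + n₀ = m + n₀ + 1 from by omega]
    have hone : (G1 c (m + n₀)).mulVec (glf R n₀ (⇑vstar) m)
        + (G2 c (m + n₀ + 1)).mulVec (glf R n₀ (⇑vstar) m) = glf R n₀ (⇑vstar) m := by
      rw [← Matrix.add_mulVec, G1_add_G2, Matrix.one_mulVec]
    have hfinal : ∀ (w' S' x y p q : Fin 2 → ℝ), p + q = x →
        w' + (S' + p) - y = w' + S' - (q + y) + x := by
      intro w' S' x y p q hpq
      rw [← hpq]; abel
    rw [Matrix.add_mulVec, ← hgu m, hAu, hu1, ht, Matrix.mulVec_add]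
    exact hfinal _ _ _ _ _ _ hone
  · -- error bound
    intro m
    have h0 : u m - wv c n₀ m =
        (∑ k ∈ Finset.range m, (G1 c (k + n₀)).mulVec (glf R n₀ (⇑vstar) k))
        - (G2 c (m + n₀)).mulVec (∑' k, glf R n₀ (⇑vstar) (k + m)) := by
      rw [hueq m]; abel
    rw [h0]
    have hS := Sbound2 (c := c) (R := R) n₀ hN0 hvN m
    have hG2 : ‖G2 c (m + n₀)‖ ≤ C * (((m + n₀ : ℕ) : ℝ) + 1) := norm_G2_le c (m + n₀)
    have htail := glf_tail_norm_le' hR n₀ hN0 hvN m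
    have hτm0 : (0:ℝ) ≤ ∑' k, (((k + m + n₀ : ℕ) : ℝ) + 1) * ‖R (k + m + n₀)‖ :=
      tsum_nonneg fun k => by positivity
    have hB : ‖(G2 c (m + n₀)).mulVec (∑' k, glf R n₀ (⇑vstar) (k + m))‖ ≤
        4 * C * N * ((m : ℝ) + (n₀ : ℝ) + 1) *
          (∑' k, (((k + m + n₀ : ℕ) : ℝ) + 1) * ‖R (k + m + n₀)‖) := by
      have h1 := mulVec_norm_le (G2 c (m + n₀)) (∑' k, glf R n₀ (⇑vstar) (k + m))
      have hcast : (((m + n₀ : ℕ) : ℝ) + 1) = (m : ℝ) + (n₀ : ℝ) + 1 := by push_cast; ring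
      have hG0 : (0:ℝ) ≤ ‖G2 c (m + n₀)‖ := norm_nonneg _
      have ht0 : (0:ℝ) ≤ ‖∑' k, glf R n₀ (⇑vstar) (k + m)‖ := norm_nonneg _
      calc ‖(G2 c (m + n₀)).mulVec (∑' k, glf R n₀ (⇑vstar) (k + m))‖
          ≤ 2 * ‖G2 c (m + n₀)‖ * ‖∑' k, glf R n₀ (⇑vstar) (k + m)‖ := h1
        _ ≤ 2 * (C * ((m : ℝ) + (n₀ : ℝ) + 1)) *
              (2 * N * ∑' k, (((k + m + n₀ : ℕ) : ℝ) + 1) * ‖R (k + m + n₀)‖) := by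
            rw [← hcast]
            have hx : (0:ℝ) ≤ C * (((m + n₀ : ℕ) : ℝ) + 1) := by positivity
            nlinarith
        _ = 4 * C * N * ((m : ℝ) + (n₀ : ℝ) + 1) *
              (∑' k, (((k + m + n₀ : ℕ) : ℝ) + 1) * ‖R (k + m + n₀)‖) := by ring
    calc ‖(∑ k ∈ Finset.range m, (G1 c (k + n₀)).mulVec (glf R n₀ (⇑vstar) k))
        - (G2 c (m + n₀)).mulVec (∑' k, glf R n₀ (⇑vstar) (k + m))‖
        ≤ ‖∑ k ∈ Finset.range m, (G1 c (k + n₀)).mulVec (glf R n₀ (⇑vstar) k)‖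
          + ‖(G2 c (m + n₀)).mulVec (∑' k, glf R n₀ (⇑vstar) (k + m))‖ := norm_sub_le _ _
      _ ≤ _ := add_le_add hS hB

end Core

end Stmt12Aux

theorem stmt12 (c : ℝ) (hc : c ≠ 0)
    (R : ℕ → Matrix (Fin 2) (Fin 2) ℝ)
    (hR : Summable fun n : ℕ => ((n : ℝ) + 1) * ‖R n‖)
    (hdet : ∀ n : ℕ, (!![(1 : ℝ), c; 0, 1] + R n).det ≠ 0) :
    ∃ ψ : ℕ → Fin 2 → ℝ,
      (∀ n : ℕ, ψ (n + 1) = (!![(1 : ℝ), c; 0, 1] + R n).mulVec (ψ n)) ∧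
      Filter.Tendsto (fun n : ℕ => (1 / (n : ℝ)) * ‖ψ n - ![c * n, 1]‖)
        Filter.atTop (nhds 0) := by
  classical
  open Stmt12Aux Filter Finset in
  set a : ℕ → ℝ := fun j => ((j : ℝ) + 1) * ‖R j‖ with hadef
  have hann : ∀ j, 0 ≤ a j := fun j => by rw [hadef]; positivity
  have hsa : Summable a := hR
  set C := max 1 |c| with hCdef
  have hC1 : (1:ℝ) ≤ C := le_max_left _ _
  have hC0 : (0:ℝ) < C := lt_of_lt_of_le zero_lt_one hC1
  -- choose n₀ with small tail
  have htail : Tendsto (fun i : ℕ => ∑' k, a (k + i)) atTop (nhds 0) :=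
    tendsto_sum_nat_add a
  have hεpos : (0:ℝ) < (16 * C)⁻¹ := by positivity
  have hev : ∀ᶠ i in atTop, (∑' k, a (k + i)) < (16 * C)⁻¹ := by
    have := htail.eventually (gt_mem_nhds hεpos)
    exact this
  obtain ⟨n₀, hn₀⟩ := hev.exists
  have hτ0 : (0:ℝ) ≤ ∑' k, a (k + n₀) := tsum_nonneg fun k => hann _
  have hτcond : 8 * C * (∑' k, (((k + n₀ : ℕ) : ℝ) + 1) * ‖R (k + n₀)‖) ≤ 1/2 := by
    have heq : (∑' k, (((k + n₀ : ℕ) : ℝ) + 1) * ‖R (k + n₀)‖) = ∑' k, a (k + n₀) := rfl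
    rw [heq]
    have h1 : 8 * C * (∑' k, a (k + n₀)) ≤ 8 * C * (16 * C)⁻¹ := by
      exact mul_le_mul_of_nonneg_left (le_of_lt hn₀) (by positivity)
    have h2 : 8 * C * (16 * C)⁻¹ = 1/2 := by field_simp; ring
    linarith
  obtain ⟨u, N, hN0, hrec, herr⟩ := Stmt12Aux.exists_u (c := c) (R := R) hR n₀ hτcond
  -- backward extension
  set B : ℕ → Matrix (Fin 2) (Fin 2) ℝ := fun n => Amat c + R n with hBdef
  have hBA : ∀ n, B n = !![(1 : ℝ), c; 0, 1] + R n := fun n => rfl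
  have hBinv : ∀ n, B n * (B n)⁻¹ = 1 := fun n =>
    Matrix.mul_nonsing_inv _ (isUnit_iff_ne_zero.2 (hdet n))
  obtain ⟨q, hq0, hqs⟩ : ∃ q : ℕ → Fin 2 → ℝ, q 0 = u 0 ∧
      ∀ j, q (j + 1) = ((B (n₀ - (j + 1)))⁻¹).mulVec (q j) :=
    ⟨fun j => Nat.rec (u 0) (fun j qj => ((B (n₀ - (j + 1)))⁻¹).mulVec qj) j, rfl, fun j => rfl⟩
  set ψ : ℕ → Fin 2 → ℝ := fun n => if n₀ ≤ n then u (n - n₀) else q (n₀ - n) with hψdef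
  have hψn : ∀ k, ψ k = if n₀ ≤ k then u (k - n₀) else q (n₀ - k) := fun k => rfl
  refine ⟨ψ, ?_, ?_⟩
  · -- recursion
    intro n
    by_cases h : n₀ ≤ n
    · have h1 : n₀ ≤ n + 1 := by omega
      rw [hψn (n + 1), hψn n, if_pos h1, if_pos h,
        show n + 1 - n₀ = (n - n₀) + 1 from by omega, hrec (n - n₀),
        show n - n₀ + n₀ = n from by omega]
      rfl
    · push_neg at h
      have hj1 : n₀ - n = (n₀ - n - 1) + 1 := by omega
      set j := n₀ - n - 1 with hjdef
      have hnn : n₀ - (j + 1) = n := by omega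
      have hq : q (j + 1) = ((B n)⁻¹).mulVec (q j) := by rw [hqs j, hnn]
      have hψn1 : ψ (n + 1) = q j := by
        rw [hψn (n + 1)]
        by_cases h2 : n₀ ≤ n + 1
        · have h3 : n + 1 = n₀ := by omega
          have h4 : j = 0 := by omega
          rw [if_pos h2, show n + 1 - n₀ = 0 from by omega, h4, hq0]
        · rw [if_neg h2, show n₀ - (n + 1) = j from by omega]
      have hψnn : ψ n = q (j + 1) := by
        rw [hψn n, if_neg (by omega), hj1]
      rw [hψn1, hψnn, hq, Matrix.mulVec_mulVec, ← hBA n, hBinv n, Matrix.one_mulVec]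
  · -- convergence
    set K := 4 * C * N with hKdef
    have hKnn : (0:ℝ) ≤ K := by positivity
    have hg : Tendsto (fun n : ℕ => K * (((n : ℝ))⁻¹ * ∑ j ∈ range n, ((j : ℝ) + 1) * a j)
        + 2 * K * (∑' k, a (k + n))) atTop (nhds 0) := by
      have h1 := (Stmt12Aux.kron hann hsa).const_mul K
      have h2 := htail.const_mul (2 * K)
      have := h1.add h2
      simpa using this
    refine squeeze_zero' (Eventually.of_forall fun n => by positivity) ?_ hg
    filter_upwards [Filter.eventually_ge_atTop (n₀ + 1)] with n hn
    have hn0 : n₀ ≤ n := by omega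
    have hn1 : 1 ≤ n := by omega
    have hnR : (1:ℝ) ≤ (n : ℝ) := by exact_mod_cast hn1
    have hnpos : (0:ℝ) < (n : ℝ) := by linarith
    set m := n - n₀ with hmdef
    have hmn : m + n₀ = n := by omega
    have hψeq : ψ n = u m := by rw [hψn n, if_pos hn0]
    have hwv : ![c * (n : ℝ), 1] = Stmt12Aux.wv c n₀ m := by
      rw [Stmt12Aux.wv]
      have : (n₀ : ℝ) + (m : ℝ) = (n : ℝ) := by
        rw [hmdef]; push_cast [Nat.cast_sub hn0]; ring
      rw [this]
    have hbound := herr m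
    -- massage the partial sum
    have hS2 : (∑ k ∈ Finset.range m, (((k + n₀ : ℕ) : ℝ) + 1) * ((((k + n₀ : ℕ) : ℝ) + 1) * ‖R (k + n₀)‖))
        ≤ ∑ j ∈ range n, ((j : ℝ) + 1) * a j := by
      have he : (∑ k ∈ Finset.range m, (((k + n₀ : ℕ) : ℝ) + 1) * ((((k + n₀ : ℕ) : ℝ) + 1) * ‖R (k + n₀)‖))
          = ∑ j ∈ Finset.Ico n₀ n, ((j : ℝ) + 1) * a j := by
        rw [Finset.sum_Ico_eq_sum_range, show n - n₀ = m from rfl]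
        exact Finset.sum_congr rfl fun k _ => by rw [Nat.add_comm n₀ k]
      rw [he]
      refine Finset.sum_le_sum_of_subset_of_nonneg ?_ (fun j _ _ => ?_)
      · intro x hx
        simp only [Finset.mem_Ico] at hx
        exact Finset.mem_range.mpr hx.2
      · have := hann j; positivity
    have hT2 : (∑' k, (((k + m + n₀ : ℕ) : ℝ) + 1) * ‖R (k + m + n₀)‖) = ∑' k, a (k + n) :=
      tsum_congr fun k => by rw [show k + m + n₀ = k + n from by omega]
    have hWm : (m : ℝ) + (n₀ : ℝ) + 1 = (n : ℝ) + 1 := by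
      rw [hmdef]; push_cast [Nat.cast_sub hn0]; ring
    have hτn0 : (0:ℝ) ≤ ∑' k, a (k + n) := tsum_nonneg fun k => hann _
    have hSn0 : (0:ℝ) ≤ ∑ j ∈ range n, ((j : ℝ) + 1) * a j :=
      Finset.sum_nonneg fun j _ => by have := hann j; positivity
    have hbound2 : ‖u m - Stmt12Aux.wv c n₀ m‖ ≤
        K * (∑ j ∈ range n, ((j : ℝ) + 1) * a j) + K * ((n : ℝ) + 1) * (∑' k, a (k + n)) := by
      refine le_trans hbound ?_
      rw [hT2, hWm]
      exact add_le_add (mul_le_mul_of_nonneg_left hS2 hKnn) (le_refl _)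
    rw [hψeq, hwv]
    calc (1 / (n : ℝ)) * ‖u m - Stmt12Aux.wv c n₀ m‖
        ≤ (1 / (n : ℝ)) * (K * (∑ j ∈ range n, ((j : ℝ) + 1) * a j)
            + K * ((n : ℝ) + 1) * (∑' k, a (k + n))) := by
          exact mul_le_mul_of_nonneg_left hbound2 (by positivity)
      _ ≤ K * (((n : ℝ))⁻¹ * ∑ j ∈ range n, ((j : ℝ) + 1) * a j)
            + 2 * K * (∑' k, a (k + n)) := by
          rw [mul_add]
          have he1 : (1 / (n : ℝ)) * (K * (∑ j ∈ range n, ((j : ℝ) + 1) * a j))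
              = K * (((n : ℝ))⁻¹ * ∑ j ∈ range n, ((j : ℝ) + 1) * a j) := by
            rw [one_div]; ring
          have he2 : (1 / (n : ℝ)) * (K * ((n : ℝ) + 1) * (∑' k, a (k + n)))
              ≤ 2 * K * (∑' k, a (k + n)) := by
            rw [one_div, inv_mul_le_iff₀ hnpos]
            have h1 : (n : ℝ) + 1 ≤ 2 * (n : ℝ) := by linarith
            have h2 : (0:ℝ) ≤ K * (∑' k, a (k + n)) := mul_nonneg hKnn hτn0
            nlinarith
          linarith [he1.le, he1.ge, he2]
end
end

section
/- Let λ ∈ ℝ with |λ| > 1, let c ∈ ℝ, set A = [[λ, c], [0, λ⁻¹]], and let R : ℕ → M₂(ℝ) satisfy Σ_{n≥0} ‖R(n)‖ < ∞ and det(A + R(n)) ≠ 0 for every n. Then for every ε > 0 there exists a solution φ : ℕ → ℝ² of φ(n+1) = (A + R(n))·φ(n) such that limsup_{n→∞} |λ|^{−n} · ‖φ(n) − (λⁿ, 0)ᵀ‖ ≤ ε. -/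
attribute [local instance] Matrix.normedAddCommGroup

noncomputable section

private def psiSeq (M : ℕ → Matrix (Fin 2) (Fin 2) ℝ) : ℕ → Fin 2 → ℝ
  | 0 => ![1, 0]
  | m + 1 => (M m).mulVec (psiSeq M m)

private def chiSeq (M : ℕ → Matrix (Fin 2) (Fin 2) ℝ) (v : Fin 2 → ℝ) : ℕ → Fin 2 → ℝ
  | 0 => v
  | j + 1 => (M j)⁻¹.mulVec (chiSeq M v j)

private def betaSeq (mu : ℝ) (r : ℕ → ℝ) : ℕ → ℝ
  | 0 => 0
  | m + 1 => (mu ^ 2)⁻¹ * betaSeq mu r m + 3 * r m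

private def alphaSeq (cc mu : ℝ) (r : ℕ → ℝ) : ℕ → ℝ
  | 0 => 0
  | m + 1 => alphaSeq cc mu r m + cc * betaSeq mu r m + 3 * r m

private lemma beta_nonneg {mu : ℝ} {r : ℕ → ℝ} (hmu : 1 < mu) (hr : ∀ k, 0 ≤ r k) :
    ∀ m, 0 ≤ betaSeq mu r m
  | 0 => le_refl _
  | m + 1 => by
    have h1 : (0:ℝ) < mu := lt_trans one_pos hmu
    have := beta_nonneg hmu hr m
    have h2 : (0:ℝ) ≤ (mu ^ 2)⁻¹ := by positivity
    have := hr m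
    simp only [betaSeq]
    nlinarith

private lemma beta_le {mu : ℝ} {r : ℕ → ℝ} (hmu : 1 < mu) (hr : ∀ k, 0 ≤ r k) :
    ∀ m, betaSeq mu r m ≤ 3 * ∑ k ∈ Finset.range m, r k
  | 0 => by simp [betaSeq]
  | m + 1 => by
    have ih := beta_le hmu hr m
    have hb := beta_nonneg hmu hr m
    have h1 : (1:ℝ) < mu ^ 2 := by nlinarith
    have h2 : (mu ^ 2)⁻¹ ≤ 1 := by
      rw [inv_le_one_iff₀]; right; linarith
    simp only [betaSeq, Finset.sum_range_succ]
    nlinarith [hr m]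

private lemma sum_beta_le {mu : ℝ} {r : ℕ → ℝ} (hmu : 1 < mu) (hr : ∀ k, 0 ≤ r k) (m : ℕ) :
    (1 - (mu ^ 2)⁻¹) * ∑ k ∈ Finset.range m, betaSeq mu r k ≤ 3 * ∑ k ∈ Finset.range m, r k := by
  have hS : ∑ k ∈ Finset.range m, betaSeq mu r k ≤ ∑ k ∈ Finset.range (m + 1), betaSeq mu r k := by
    rw [Finset.sum_range_succ]
    nlinarith [beta_nonneg hmu hr m]
  have h2 : ∑ k ∈ Finset.range (m + 1), betaSeq mu r k
      = (mu ^ 2)⁻¹ * ∑ k ∈ Finset.range m, betaSeq mu r k + 3 * ∑ k ∈ Finset.range m, r k := by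
    rw [Finset.sum_range_succ']
    simp only [betaSeq]
    rw [Finset.sum_add_distrib, Finset.mul_sum, Finset.mul_sum]
    ring
  nlinarith [hS, h2]

private lemma alpha_le {cc mu : ℝ} {r : ℕ → ℝ} (hcc : 0 ≤ cc) (hmu : 1 < mu) (hr : ∀ k, 0 ≤ r k) :
    ∀ m, alphaSeq cc mu r m ≤ cc * ∑ k ∈ Finset.range m, betaSeq mu r k
      + 3 * ∑ k ∈ Finset.range m, r k
  | 0 => by simp [alphaSeq]
  | m + 1 => by
    have ih := alpha_le hcc hmu hr m
    simp only [alphaSeq, Finset.sum_range_succ]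
    nlinarith [hr m, beta_nonneg hmu hr m]

private lemma alpha_nonneg {cc mu : ℝ} {r : ℕ → ℝ} (hcc : 0 ≤ cc) (hmu : 1 < mu) (hr : ∀ k, 0 ≤ r k) :
    ∀ m, 0 ≤ alphaSeq cc mu r m
  | 0 => le_refl _
  | m + 1 => by
    have := alpha_nonneg hcc hmu hr m
    have := beta_nonneg hmu hr m
    have := hr m
    simp only [alphaSeq]
    nlinarith

private lemma abs_add_four (w x y z : ℝ) : |w + x + y + z| ≤ |w| + |x| + |y| + |z| := by
  have h1 := abs_add_le (w + x + y) z
  have h2 := abs_add_le (w + x) y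
  have h3 := abs_add_le w x
  linarith


private lemma est1 {μ C a b r P : ℝ} (hμ : 1 < μ) (hP : 0 < P) (hC : 0 ≤ C)
    (hr0 : 0 ≤ r) (ha0 : 0 ≤ a) (hb0 : 0 ≤ b) (ha1 : a ≤ 1) (hb1 : b ≤ 1) :
    μ * (P * a) + C * (P * b) + r * (P * a + P) + r * (P * b)
      ≤ (P * μ) * (a + C * b + 3 * r) := by
  have k1 : 0 ≤ C * b * P * (μ - 1) :=
    mul_nonneg (mul_nonneg (mul_nonneg hC hb0) hP.le) (by linarith)
  have k2 : 0 ≤ r * P * (3 * μ - 1 - a - b) :=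
    mul_nonneg (mul_nonneg hr0 hP.le) (by linarith)
  nlinarith [k1, k2]

private lemma est2 {μ a b r P : ℝ} (hμ : 1 < μ) (hP : 0 < P)
    (hr0 : 0 ≤ r) (ha0 : 0 ≤ a) (hb0 : 0 ≤ b) (ha1 : a ≤ 1) (hb1 : b ≤ 1) :
    μ⁻¹ * (P * b) + r * (P * a + P) + r * (P * b)
      ≤ (P * μ) * ((μ ^ 2)⁻¹ * b + 3 * r) := by
  have hμ0 : (0:ℝ) < μ := lt_trans one_pos hμ
  have hid : (P * μ) * ((μ ^ 2)⁻¹ * b + 3 * r) = μ⁻¹ * (P * b) + 3 * r * μ * P := by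
    field_simp
  rw [hid]
  have k2 : 0 ≤ r * P * (3 * μ - 1 - a - b) :=
    mul_nonneg (mul_nonneg hr0 hP.le) (by linarith)
  nlinarith [k2]

set_option maxHeartbeats 1000000 in
private lemma key_bound (lam c : ℝ) (hlam : 1 < |lam|) (S : ℕ → Matrix (Fin 2) (Fin 2) ℝ)
    (ha0 : ∀ m, 0 ≤ alphaSeq |c| |lam| (fun k => ‖S k‖) m)
    (hb0 : ∀ m, 0 ≤ betaSeq |lam| (fun k => ‖S k‖) m)
    (hα : ∀ m, alphaSeq |c| |lam| (fun k => ‖S k‖) m ≤ 1)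
    (hβ : ∀ m, betaSeq |lam| (fun k => ‖S k‖) m ≤ 1) :
    ∀ m, |psiSeq (fun k => !![lam, c; 0, lam⁻¹] + S k) m 0 - lam ^ m|
        ≤ |lam| ^ m * alphaSeq |c| |lam| (fun k => ‖S k‖) m
      ∧ |psiSeq (fun k => !![lam, c; 0, lam⁻¹] + S k) m 1|
        ≤ |lam| ^ m * betaSeq |lam| (fun k => ‖S k‖) m
  | 0 => by simp [psiSeq, alphaSeq, betaSeq]
  | m + 1 => by
    obtain ⟨hX, hY⟩ := key_bound lam c hlam S ha0 hb0 hα hβ m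
    set ψ := psiSeq (fun k => !![lam, c; 0, lam⁻¹] + S k) with hψ
    set X := ψ m 0 with hXdef
    set Y := ψ m 1 with hYdef
    set a := alphaSeq |c| |lam| (fun k => ‖S k‖) m with hadef
    set b := betaSeq |lam| (fun k => ‖S k‖) m with hbdef
    set r := ‖S m‖ with hrdef
    set μ := |lam| with hμdef
    have hr0 : 0 ≤ r := norm_nonneg _
    have hμ0 : (0:ℝ) < μ := lt_trans one_pos hlam
    have hP : (0:ℝ) < μ ^ m := pow_pos hμ0 m
    have hc0 : (0:ℝ) ≤ |c| := abs_nonneg c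
    have hs : ∀ i j : Fin 2, |S m i j| ≤ r := fun i j => by
      have := (S m).norm_entry_le_entrywise_sup_norm (i := i) (j := j)
      rwa [Real.norm_eq_abs] at this
    have hXb : |X| ≤ μ ^ m * a + μ ^ m := by
      have h2 : |X| ≤ |X - lam ^ m| + |lam ^ m| := by
        calc |X| = |(X - lam ^ m) + lam ^ m| := by ring_nf
          _ ≤ |X - lam ^ m| + |lam ^ m| := abs_add_le _ _
      rw [abs_pow] at h2
      linarith
    -- component formulas
    have h0 : ψ (m + 1) 0 = (lam + S m 0 0) * X + (c + S m 0 1) * Y := by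
      rw [hψ]
      simp [psiSeq, Matrix.mulVec, dotProduct, Fin.sum_univ_two, Matrix.add_apply,
        ← hψ, ← hXdef, ← hYdef]
      try ring
    have h1 : ψ (m + 1) 1 = (0 + S m 1 0) * X + (lam⁻¹ + S m 1 1) * Y := by
      rw [hψ]
      simp [psiSeq, Matrix.mulVec, dotProduct, Fin.sum_univ_two, Matrix.add_apply,
        ← hψ, ← hXdef, ← hYdef]
      try ring
    constructor
    · -- first component
      have heq : (lam + S m 0 0) * X + (c + S m 0 1) * Y - lam ^ (m + 1)
          = lam * (X - lam ^ m) + c * Y + S m 0 0 * X + S m 0 1 * Y := by ring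
      rw [h0, heq]
      have habs := abs_add_four (lam * (X - lam ^ m)) (c * Y) (S m 0 0 * X) (S m 0 1 * Y)
      rw [abs_mul, abs_mul, abs_mul, abs_mul] at habs
      have e1 : |lam * (X - lam ^ m)| ≤ μ * (μ ^ m * a) := by
        rw [abs_mul]; exact mul_le_mul_of_nonneg_left hX (abs_nonneg lam)
      have e2 : |c| * |Y| ≤ |c| * (μ ^ m * b) := mul_le_mul_of_nonneg_left hY hc0
      have e3 : |S m 0 0| * |X| ≤ r * (μ ^ m * a + μ ^ m) :=
        mul_le_mul (hs 0 0) hXb (abs_nonneg _) hr0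
      have e4 : |S m 0 1| * |Y| ≤ r * (μ ^ m * b) :=
        mul_le_mul (hs 0 1) hY (abs_nonneg _) hr0
      have hgoal : μ * (μ ^ m * a) + |c| * (μ ^ m * b) + r * (μ ^ m * a + μ ^ m) + r * (μ ^ m * b)
          ≤ μ ^ (m + 1) * (a + |c| * b + 3 * r) := by
        rw [pow_succ]
        exact est1 hlam hP hc0 hr0 (ha0 m) (hb0 m) (hα m) (hβ m)
      have htarget : μ ^ (m + 1) * alphaSeq |c| |lam| (fun k => ‖S k‖) (m + 1)
          = μ ^ (m + 1) * (a + |c| * b + 3 * r) := by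
        simp only [alphaSeq, ← hadef, ← hbdef, ← hrdef]; rfl
      rw [htarget]
      calc |lam * (X - lam ^ m) + c * Y + S m 0 0 * X + S m 0 1 * Y|
          ≤ |lam| * |X - lam ^ m| + |c| * |Y| + |S m 0 0| * |X| + |S m 0 1| * |Y| := habs
        _ ≤ μ * (μ ^ m * a) + |c| * (μ ^ m * b) + r * (μ ^ m * a + μ ^ m) + r * (μ ^ m * b) := by
            have e1' : |lam| * |X - lam ^ m| ≤ μ * (μ ^ m * a) :=
              mul_le_mul_of_nonneg_left hX (abs_nonneg lam)
            linarith [e2, e3, e4, e1']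
        _ ≤ μ ^ (m + 1) * (a + |c| * b + 3 * r) := hgoal
    · -- second component
      rw [h1]
      have heq : (0 + S m 1 0) * X + (lam⁻¹ + S m 1 1) * Y
          = lam⁻¹ * Y + S m 1 0 * X + S m 1 1 * Y + 0 := by ring
      rw [heq]
      have habs := abs_add_four (lam⁻¹ * Y) (S m 1 0 * X) (S m 1 1 * Y) 0
      rw [abs_mul, abs_mul, abs_mul, abs_zero, abs_inv] at habs
      have e1 : μ⁻¹ * |Y| ≤ μ⁻¹ * (μ ^ m * b) :=
        mul_le_mul_of_nonneg_left hY (inv_nonneg.2 hμ0.le)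
      have e3 : |S m 1 0| * |X| ≤ r * (μ ^ m * a + μ ^ m) :=
        mul_le_mul (hs 1 0) hXb (abs_nonneg _) hr0
      have e4 : |S m 1 1| * |Y| ≤ r * (μ ^ m * b) :=
        mul_le_mul (hs 1 1) hY (abs_nonneg _) hr0
      have hgoal : μ⁻¹ * (μ ^ m * b) + r * (μ ^ m * a + μ ^ m) + r * (μ ^ m * b)
          ≤ μ ^ (m + 1) * ((μ ^ 2)⁻¹ * b + 3 * r) := by
        rw [pow_succ]
        exact est2 hlam hP hr0 (ha0 m) (hb0 m) (hα m) (hβ m)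
      have htarget : μ ^ (m + 1) * betaSeq |lam| (fun k => ‖S k‖) (m + 1)
          = μ ^ (m + 1) * ((μ ^ 2)⁻¹ * b + 3 * r) := by
        simp only [betaSeq, ← hbdef, ← hrdef]; rfl
      rw [htarget]
      calc |lam⁻¹ * Y + S m 1 0 * X + S m 1 1 * Y + 0|
          ≤ |lam|⁻¹ * |Y| + |S m 1 0| * |X| + |S m 1 1| * |Y| + 0 := habs
        _ ≤ μ⁻¹ * (μ ^ m * b) + r * (μ ^ m * a + μ ^ m) + r * (μ ^ m * b) := by
            linarith [e1, e3, e4]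
        _ ≤ μ ^ (m + 1) * ((μ ^ 2)⁻¹ * b + 3 * r) := hgoal


set_option maxHeartbeats 1000000 in
theorem stmt13 (lam c : ℝ) (hlam : 1 < |lam|)
    (R : ℕ → Matrix (Fin 2) (Fin 2) ℝ)
    (hR : Summable fun n : ℕ => ‖R n‖)
    (hdet : ∀ n : ℕ, (!![lam, c; 0, lam⁻¹] + R n).det ≠ 0)
    (ε : ℝ) (hε : 0 < ε) :
    ∃ φ : ℕ → Fin 2 → ℝ,
      (∀ n : ℕ, φ (n + 1) = (!![lam, c; 0, lam⁻¹] + R n).mulVec (φ n)) ∧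
      Filter.limsup (fun n : ℕ => (|lam| ^ n)⁻¹ * ‖φ n - ![lam ^ n, 0]‖)
        Filter.atTop ≤ ε := by
  classical
  set A : Matrix (Fin 2) (Fin 2) ℝ := !![lam, c; 0, lam⁻¹] with hA
  set μ : ℝ := |lam| with hμdef
  have hμ0 : (0:ℝ) < μ := lt_trans one_pos hlam
  have hμ2 : (1:ℝ) < μ ^ 2 := by nlinarith
  have hμ2' : (μ ^ 2)⁻¹ < 1 := by rw [inv_lt_one_iff₀]; right; exact hμ2
  have hgap : (0:ℝ) < 1 - (μ ^ 2)⁻¹ := by linarith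
  set D : ℝ := (1 - (μ ^ 2)⁻¹)⁻¹ with hDdef
  have hD0 : 0 < D := inv_pos.2 hgap
  set CC : ℝ := |c| * D + 1 with hCC
  have hCC1 : 1 ≤ CC := by
    have : 0 ≤ |c| * D := mul_nonneg (abs_nonneg c) hD0.le
    simp only [hCC]; linarith
  have hCC0 : 0 < CC := lt_of_lt_of_le one_pos hCC1
  set εm : ℝ := min ε 1 with hεm
  have hεm0 : 0 < εm := lt_min hε one_pos
  set t : ℝ := εm / (3 * CC) with ht
  have ht0 : 0 < t := div_pos hεm0 (by positivity)
  -- choose N with small tail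
  have htail := tendsto_sum_nat_add (fun n => ‖R n‖)
  obtain ⟨N, hN⟩ := (htail.eventually_lt_const ht0).exists
  set S : ℕ → Matrix (Fin 2) (Fin 2) ℝ := fun k => R (k + N) with hS
  have hSsum : Summable (fun k => ‖S k‖) := (summable_nat_add_iff N).2 hR
  set rr : ℕ → ℝ := fun k => ‖S k‖ with hrr
  have hr0 : ∀ k, 0 ≤ rr k := fun k => norm_nonneg _
  have hrt : ∀ m, ∑ k ∈ Finset.range m, rr k ≤ t := by
    intro m
    exact le_trans (Summable.sum_le_tsum _ (fun i _ => norm_nonneg _) hSsum) hN.le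
  -- bounds on majorants
  have hβ3 : ∀ m, betaSeq μ rr m ≤ 3 * t := by
    intro m
    refine le_trans (beta_le hlam hr0 m) ?_
    have := hrt m
    linarith
  have hSβ : ∀ m, ∑ k ∈ Finset.range m, betaSeq μ rr k ≤ 3 * t * D := by
    intro m
    have h1 := sum_beta_le hlam hr0 m
    have h2 : 3 * ∑ k ∈ Finset.range m, rr k ≤ 3 * t := by linarith [hrt m]
    have h3 : (1 - (μ ^ 2)⁻¹) * ∑ k ∈ Finset.range m, betaSeq μ rr k ≤ 3 * t :=
      le_trans h1 h2
    rw [hDdef, ← div_eq_mul_inv, le_div_iff₀ hgap]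
    linarith [h3]
  have hεmeq : 3 * t * CC = εm := by
    rw [ht]; field_simp
  have hαεm : ∀ m, alphaSeq |c| μ rr m ≤ εm := by
    intro m
    have h1 := alpha_le (abs_nonneg c) hlam hr0 m
    have h2 : |c| * ∑ k ∈ Finset.range m, betaSeq μ rr k ≤ |c| * (3 * t * D) :=
      mul_le_mul_of_nonneg_left (hSβ m) (abs_nonneg c)
    have h3 : 3 * ∑ k ∈ Finset.range m, rr k ≤ 3 * t := by linarith [hrt m]
    have : alphaSeq |c| μ rr m ≤ |c| * (3 * t * D) + 3 * t := by linarith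
    calc alphaSeq |c| μ rr m ≤ |c| * (3 * t * D) + 3 * t := this
      _ = 3 * t * CC := by rw [hCC]; ring
      _ = εm := hεmeq
  have hβεm : ∀ m, betaSeq μ rr m ≤ εm := by
    intro m
    have h1 := hβ3 m
    have h2 : 3 * t ≤ 3 * t * CC := by nlinarith
    linarith [hεmeq ▸ h2]
  have hα1 : ∀ m, alphaSeq |c| μ rr m ≤ 1 := fun m => le_trans (hαεm m) (min_le_right _ _)
  have hβ1 : ∀ m, betaSeq μ rr m ≤ 1 := fun m => le_trans (hβεm m) (min_le_right _ _)
  have hαε : ∀ m, alphaSeq |c| μ rr m ≤ ε := fun m => le_trans (hαεm m) (min_le_left _ _)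
  have hβε : ∀ m, betaSeq μ rr m ≤ ε := fun m => le_trans (hβεm m) (min_le_left _ _)
  have key := key_bound lam c hlam S (alpha_nonneg (abs_nonneg c) hlam hr0)
    (beta_nonneg hlam hr0) hα1 hβ1
  set ψ := psiSeq (fun k => A + S k) with hψ
  set M' : ℕ → Matrix (Fin 2) (Fin 2) ℝ := fun j => A + R (N - 1 - j) with hM'
  set v : Fin 2 → ℝ := lam ^ N • ![(1:ℝ), 0] with hv
  refine ⟨fun n => if N ≤ n then lam ^ N • ψ (n - N) else chiSeq M' v (N - n), ?_, ?_⟩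
  · intro n
    by_cases hn : N ≤ n
    · have h1 : N ≤ n + 1 := le_trans hn (Nat.le_succ n)
      simp only [if_pos hn, if_pos h1]
      have h2 : n + 1 - N = (n - N) + 1 := by omega
      rw [h2]
      have h3 : ψ ((n - N) + 1) = (A + S (n - N)).mulVec (ψ (n - N)) := rfl
      rw [h3]
      have h4 : S (n - N) = R n := by
        have e : n - N + N = n := by omega
        simp only [hS, e]
      rw [h4, Matrix.mulVec_smul]
    · push_neg at hn
      have hne : ¬ N ≤ n := by omega
      have hφ1 : (if N ≤ n + 1 then lam ^ N • ψ (n + 1 - N) else chiSeq M' v (N - (n + 1)))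
          = chiSeq M' v (N - n - 1) := by
        by_cases h2 : N ≤ n + 1
        · have hNeq : N = n + 1 := by omega
          have h3 : N - n - 1 = 0 := by omega
          have h4 : n + 1 - N = 0 := by omega
          rw [if_pos h2, h3, h4]
          simp only [hψ, psiSeq, chiSeq, hv]
        · have h3 : N - (n + 1) = N - n - 1 := by omega
          rw [if_neg h2, h3]
      simp only [if_neg hne]
      rw [hφ1]
      have h5 : N - n = N - n - 1 + 1 := by omega
      conv_rhs => rw [h5]
      rw [show chiSeq M' v (N - n - 1 + 1)
          = (M' (N - n - 1))⁻¹.mulVec (chiSeq M' v (N - n - 1)) from rfl]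
      have h7 : M' (N - n - 1) = A + R n := by
        have e : N - 1 - (N - n - 1) = n := by omega
        simp only [hM', e]
      rw [h7, Matrix.mulVec_mulVec, Matrix.mul_nonsing_inv _ (isUnit_iff_ne_zero.2 (hdet n)),
        Matrix.one_mulVec]
  · apply Filter.limsup_le_of_le
    · apply Filter.IsBoundedUnder.isCoboundedUnder_le
      apply Filter.isBoundedUnder_of
      refine ⟨0, fun n => ?_⟩
      have : 0 ≤ (μ ^ n)⁻¹ * ‖(if N ≤ n then lam ^ N • ψ (n - N) else chiSeq M' v (N - n)) - ![lam ^ n, 0]‖ := by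
        positivity
      exact this
    · filter_upwards [Filter.eventually_ge_atTop N] with n hn
      simp only [if_pos hn]
      set m := n - N with hm
      have hnm : n = m + N := by omega
      have hsub : lam ^ N • ψ m - ![lam ^ n, 0] = lam ^ N • (ψ m - ![lam ^ m, 0]) := by
        rw [smul_sub]
        congr 1
        funext i
        fin_cases i <;>
          simp [hnm, pow_add, Pi.smul_apply, smul_eq_mul] <;> ring
      rw [hsub]
      have hw : ‖ψ m - ![lam ^ m, 0]‖ ≤ μ ^ m * ε := by
        rw [pi_norm_le_iff_of_nonneg (by positivity)]
        intro i
        fin_cases i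
        · have h1 : (ψ m - ![lam ^ m, 0]) 0 = ψ m 0 - lam ^ m := by
            simp [Pi.sub_apply]
          rw [Real.norm_eq_abs]
          show |(ψ m - ![lam ^ m, 0]) 0| ≤ μ ^ m * ε
          rw [h1]
          refine le_trans (key m).1 ?_
          exact mul_le_mul_of_nonneg_left (hαε m) (by positivity)
        · have h1 : (ψ m - ![lam ^ m, 0]) 1 = ψ m 1 := by
            simp [Pi.sub_apply]
          rw [Real.norm_eq_abs]
          show |(ψ m - ![lam ^ m, 0]) 1| ≤ μ ^ m * ε
          rw [h1]
          refine le_trans (key m).2 ?_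
          exact mul_le_mul_of_nonneg_left (hβε m) (by positivity)
      have hns : ‖lam ^ N • (ψ m - ![lam ^ m, 0])‖ = μ ^ N * ‖ψ m - ![lam ^ m, 0]‖ := by
        rw [norm_smul, Real.norm_eq_abs, abs_pow]
      rw [hns]
      have hfin : μ ^ N * ‖ψ m - ![lam ^ m, 0]‖ ≤ μ ^ n * ε := by
        calc μ ^ N * ‖ψ m - ![lam ^ m, 0]‖ ≤ μ ^ N * (μ ^ m * ε) :=
              mul_le_mul_of_nonneg_left hw (by positivity)
          _ = μ ^ n * ε := by rw [hnm, pow_add]; ring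
      calc (μ ^ n)⁻¹ * (μ ^ N * ‖ψ m - ![lam ^ m, 0]‖) ≤ (μ ^ n)⁻¹ * (μ ^ n * ε) :=
            mul_le_mul_of_nonneg_left hfin (by positivity)
        _ = ε := by field_simp
end
end

section
/- Let d ≥ 1, α, θ ∈ ℝ^d, v : ℝ^d → ℝ, E ∈ ℝ, a ∈ {1, −1}, c ∈ ℝ, and let B : ℝ^d → M₂(ℝ) satisfy det B(x) = 1 and B(x+α)⁻¹ · S_E(x) · B(x) = [[a, c], [0, a]] for every x ∈ ℝ^d. Then u(n) := aⁿ · (B(θ + nα))₁₁ defines a solution of the eigenvalue equation u(n+1) + u(n−1) + v(θ+nα)·u(n) = E·u(n) for all n ∈ ℤ (a quasi-periodic solution when a = 1, an anti-quasi-periodic solution when a = −1). -/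
noncomputable section

theorem stmt14 (d : ℕ) (hd : 1 ≤ d) (α θ : Fin d → ℝ) (v : (Fin d → ℝ) → ℝ) (E : ℝ)
    (a c : ℝ) (ha : a = 1 ∨ a = -1)
    (B : (Fin d → ℝ) → Matrix (Fin 2) (Fin 2) ℝ)
    (hdetB : ∀ x, (B x).det = 1)
    (hconj : ∀ x : Fin d → ℝ,
      (B (x + α))⁻¹ * !![E - v x, -1; 1, 0] * B x = !![a, c; 0, a]) :
    ∃ u : ℤ → ℝ,
      (∀ n : ℤ, u n = a ^ n * B (θ + (n : ℝ) • α) 0 0) ∧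
      ∀ n : ℤ, u (n + 1) + u (n - 1) + v (θ + (n : ℝ) • α) * u n = E * u n := by
  have ha0 : a ≠ 0 := by rcases ha with h | h <;> simp [h]
  have haa : a * a = 1 := by rcases ha with h | h <;> norm_num [h]
  have key : ∀ x, !![E - v x, -1; 1, 0] * B x = B (x + α) * !![a, c; 0, a] := by
    intro x
    have hu : IsUnit (B (x + α)).det := by rw [hdetB]; exact isUnit_one
    calc !![E - v x, -1; 1, 0] * B x
        = B (x + α) * ((B (x + α))⁻¹ * !![E - v x, -1; 1, 0] * B x) := by
          rw [← Matrix.mul_assoc, ← Matrix.mul_assoc, Matrix.mul_nonsing_inv _ hu,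
            Matrix.one_mul]
      _ = B (x + α) * !![a, c; 0, a] := by rw [hconj x]
  have e00 : ∀ x, (E - v x) * B x 0 0 + (-1) * B x 1 0 = B (x + α) 0 0 * a := by
    intro x
    have h := congrFun (congrFun (key x) 0) 0
    simpa [Matrix.mul_apply, Fin.sum_univ_two] using h
  have e10 : ∀ x, B x 0 0 = B (x + α) 1 0 * a := by
    intro x
    have h := congrFun (congrFun (key x) 1) 0
    simpa [Matrix.mul_apply, Fin.sum_univ_two] using h
  refine ⟨fun n => a ^ n * B (θ + (n : ℝ) • α) 0 0, fun n => rfl, ?_⟩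
  intro n
  simp only []
  have h1 : θ + ((n : ℤ) : ℝ) • α + α = θ + (((n + 1 : ℤ)) : ℝ) • α := by
    push_cast
    module
  have h2 : θ + (((n - 1 : ℤ)) : ℝ) • α + α = θ + ((n : ℤ) : ℝ) • α := by
    push_cast
    module
  have A := e00 (θ + ((n : ℤ) : ℝ) • α)
  rw [h1] at A
  have Bq := e10 (θ + (((n - 1 : ℤ)) : ℝ) • α)
  rw [h2] at Bq
  have hz1 : (a : ℝ) ^ (n + 1) = a ^ n * a := by
    rw [zpow_add₀ ha0, zpow_one]
  have hz2 : (a : ℝ) ^ (n - 1) = a ^ n * a := by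
    rw [zpow_sub₀ ha0, zpow_one, div_eq_mul_inv]
    have : a⁻¹ = a := by rcases ha with h | h <;> norm_num [h]
    rw [this]
  rw [hz1, hz2]
  set b1 := B (θ + (((n + 1 : ℤ)) : ℝ) • α) 0 0
  set b0 := B (θ + ((n : ℤ) : ℝ) • α) 0 0
  set bm := B (θ + (((n - 1 : ℤ)) : ℝ) • α) 0 0
  set t := B (θ + ((n : ℤ) : ℝ) • α) 1 0
  have A2 : a * ((E - v (θ + ((n : ℤ) : ℝ) • α)) * b0 + (-1) * t) = b1 := by
    linear_combination a * A + b1 * haa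
  have Bq2 : a * bm = t := by
    linear_combination a * Bq + t * haa
  linear_combination (-(a ^ n * a)) * A2 + (a ^ n) * Bq2 +
    (a ^ n * ((E - v (θ + ((n : ℤ) : ℝ) • α)) * b0 - t)) * haa
end
end

section
/- Let d ≥ 1, α, θ ∈ ℝ^d, v : ℝ^d → ℝ, E ∈ ℝ, a ∈ {1, −1}, c ∈ ℝ, and let B : ℝ^d → M₂(ℝ) satisfy det B(x) = 1, sup_x ‖B(x)‖ < ∞, and B(x+α)⁻¹ · S_E(x) · B(x) = [[a, c], [0, a]] for every x ∈ ℝ^d. Let g : ℤ → ℝ satisfy Σ_{n∈ℤ} (1+|n|)·|g(n)| < ∞. Then for every ε > 0 there exists ũ : ℤ → ℝ satisfying the perturbed eigenvalue equation ũ(n+1) + ũ(n−1) + (v(θ+nα) + g(n))·ũ(n) = E·ũ(n) for all n ∈ ℤ, such that limsup_{n→+∞} |ũ(n) − aⁿ·(B(θ+nα))₁₁| ≤ ε. -/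
attribute [local instance] Matrix.normedAddCommGroup

noncomputable section

open Filter Topology

private lemma aux_iter_u0 (E a c vn : ℝ) (ha2 : a * a = 1) (ha0 : a ≠ 0) (n : ℤ)
    (P00 P10 Q00 R00 : ℝ)
    (h00 : (E - vn) * P00 - P10 = a * Q00)
    (h10R : R00 = a * P10) :
    a ^ (n+1) * Q00 + a ^ (n-1) * R00 + (vn - E) * (a ^ n * P00) = 0 := by
  have hA1 : a ^ (n + 1) = a ^ n * a := by rw [zpow_add_one₀ ha0]
  have hAm : a ^ (n - 1) = a ^ n * a := by
    rw [zpow_sub_one₀ ha0, inv_eq_of_mul_eq_one_right ha2]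
  rw [hA1, hAm]
  linear_combination (-(a:ℝ)^n) * h00 + (a^n*a) * h10R + (a^n * P10) * ha2

private lemma aux_iter_w0 (E a c vn : ℝ) (ha2 : a * a = 1) (ha0 : a ≠ 0) (n : ℤ)
    (P00 P01 P10 P11 Q00 Q01 R00 R01 : ℝ)
    (h00 : (E - vn) * P00 - P10 = a * Q00)
    (h01 : (E - vn) * P01 - P11 = Q00 * c + Q01 * a)
    (h10R : R00 = a * P10)
    (h11R : R01 = P10 * c + P11 * a) :
    a ^ (n+1) * (((n:ℝ)+1) * c * a * Q00 + Q01) + a ^ (n-1) * (((n:ℝ)-1) * c * a * R00 + R01)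
      + (vn - E) * (a ^ n * ((n:ℝ) * c * a * P00 + P01)) = 0 := by
  have hA1 : a ^ (n + 1) = a ^ n * a := by rw [zpow_add_one₀ ha0]
  have hAm : a ^ (n - 1) = a ^ n * a := by
    rw [zpow_sub_one₀ ha0, inv_eq_of_mul_eq_one_right ha2]
  rw [hA1, hAm]
  linear_combination (-(a:ℝ)^n * c * (n:ℝ) * a) * h00 + (-(a:ℝ)^n) * h01
    + ((a:ℝ)^n * ((n:ℝ)-1) * c * a^2) * h10R + ((a:ℝ)^n * a) * h11R
    + ((a:ℝ)^n * c * Q00 + (a:ℝ)^n * P11 + (a:ℝ)^n * c * a * ((n:ℝ)-1) * P10) * ha2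

private lemma aux_wronskian (a c : ℝ) (ha2 : a * a = 1) (ha0 : a ≠ 0) (n : ℤ)
    (P00 P01 Q00 Q01 Q10 Q11 : ℝ)
    (h10 : P00 = a * Q10)
    (h11 : P01 = Q10 * c + Q11 * a)
    (hdetQ : Q00 * Q11 - Q01 * Q10 = 1) :
    (a ^ (n+1) * Q00) * (a ^ n * ((n:ℝ) * c * a * P00 + P01))
      - (a ^ n * P00) * (a ^ (n+1) * (((n:ℝ)+1) * c * a * Q00 + Q01)) = 1 := by
  have hA1 : a ^ (n + 1) = a ^ n * a := by rw [zpow_add_one₀ ha0]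
  have hAsq : a ^ n * a ^ n = 1 := by rw [← mul_zpow, ha2, one_zpow]
  rw [hA1]
  linear_combination (-(a:ℝ)^n*(a:ℝ)^n*a^2*c*Q00 - (a:ℝ)^n*(a:ℝ)^n*a*Q01) * h10
    + ((a:ℝ)^n*(a:ℝ)^n*a*Q00) * h11 + ((a:ℝ)^n*(a:ℝ)^n*a^2) * hdetQ
    + (-(a:ℝ)^n*(a:ℝ)^n*a*c*Q00*Q10 + (a:ℝ)^n*(a:ℝ)^n) * ha2 + (1:ℝ) * hAsq

/-- two-step iteration helper -/
private def iter2 (step : ℕ → ℝ × ℝ → ℝ × ℝ) (init : ℝ × ℝ) : ℕ → ℝ × ℝ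
  | 0 => init
  | k+1 => step k (iter2 step init k)

set_option maxHeartbeats 2000000 in
theorem stmt15 (d : ℕ) (hd : 1 ≤ d) (α θ : Fin d → ℝ) (v : (Fin d → ℝ) → ℝ) (E : ℝ)
    (a c : ℝ) (ha : a = 1 ∨ a = -1)
    (B : (Fin d → ℝ) → Matrix (Fin 2) (Fin 2) ℝ)
    (hdetB : ∀ x, (B x).det = 1)
    (hBbd : ∃ Cb : ℝ, ∀ x, ‖B x‖ ≤ Cb)
    (hconj : ∀ x : Fin d → ℝ,
      (B (x + α))⁻¹ * !![E - v x, -1; 1, 0] * B x = !![a, c; 0, a])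
    (g : ℤ → ℝ) (hg : Summable fun n : ℤ => (1 + |(n : ℝ)|) * |g n|)
    (ε : ℝ) (hε : 0 < ε) :
    ∃ u : ℤ → ℝ,
      (∀ n : ℤ, u (n + 1) + u (n - 1) + (v (θ + (n : ℝ) • α) + g n) * u n = E * u n) ∧
      Filter.limsup (fun n : ℤ => |u n - a ^ n * B (θ + (n : ℝ) • α) 0 0|)
        Filter.atTop ≤ ε := by
  obtain ⟨Cb, hCb⟩ := hBbd
  have hCb0 : 0 ≤ Cb := le_trans (norm_nonneg _) (hCb θ)
  have ha2 : a * a = 1 := by rcases ha with h | h <;> simp [h]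
  have ha0 : a ≠ 0 := by rcases ha with h | h <;> simp [h]
  have haabs : |a| = 1 := by rcases ha with h | h <;> simp [h]
  set x : ℤ → (Fin d → ℝ) := fun n => θ + (n : ℝ) • α with hxdef
  have hxx : ∀ n : ℤ, θ + (n : ℝ) • α = x n := fun n => rfl
  have hxs : ∀ n : ℤ, x n + α = x (n + 1) := by
    intro n
    simp only [hxdef]
    push_cast
    rw [add_smul, one_smul]
    abel
  have hM : ∀ n : ℤ, !![E - v (x n), -1; 1, 0] * B (x n) = B (x (n + 1)) * !![a, c; 0, a] := by
    intro n
    have h := hconj (x n)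
    rw [hxs n] at h
    have hu : IsUnit (B (x (n + 1))).det := by rw [hdetB]; exact isUnit_one
    calc !![E - v (x n), -1; 1, 0] * B (x n)
        = (B (x (n+1)) * (B (x (n+1)))⁻¹) * (!![E - v (x n), -1; 1, 0] * B (x n)) := by
          rw [Matrix.mul_nonsing_inv _ hu, Matrix.one_mul]
      _ = B (x (n+1)) * ((B (x (n+1)))⁻¹ * !![E - v (x n), -1; 1, 0] * B (x n)) := by
          rw [mul_assoc, ← mul_assoc ((B (x (n+1)))⁻¹)]
      _ = B (x (n+1)) * !![a, c; 0, a] := by rw [h]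
  have h00 : ∀ n : ℤ, (E - v (x n)) * B (x n) 0 0 - B (x n) 1 0 = a * B (x (n + 1)) 0 0 := by
    intro n
    have h := congrArg (fun A : Matrix (Fin 2) (Fin 2) ℝ => A 0 0) (hM n)
    simp [Matrix.mul_apply, Fin.sum_univ_two] at h
    linarith [h]
  have h10 : ∀ n : ℤ, B (x n) 0 0 = a * B (x (n + 1)) 1 0 := by
    intro n
    have h := congrArg (fun A : Matrix (Fin 2) (Fin 2) ℝ => A 1 0) (hM n)
    simp [Matrix.mul_apply, Fin.sum_univ_two] at h
    linarith [h]
  have h01 : ∀ n : ℤ, (E - v (x n)) * B (x n) 0 1 - B (x n) 1 1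
      = B (x (n + 1)) 0 0 * c + B (x (n + 1)) 0 1 * a := by
    intro n
    have h := congrArg (fun A : Matrix (Fin 2) (Fin 2) ℝ => A 0 1) (hM n)
    simp [Matrix.mul_apply, Fin.sum_univ_two] at h
    linarith [h]
  have h11 : ∀ n : ℤ, B (x n) 0 1 = B (x (n + 1)) 1 0 * c + B (x (n + 1)) 1 1 * a := by
    intro n
    have h := congrArg (fun A : Matrix (Fin 2) (Fin 2) ℝ => A 1 1) (hM n)
    simp [Matrix.mul_apply, Fin.sum_univ_two] at h
    linarith [h]
  have hdet : ∀ n : ℤ, B (x n) 0 0 * B (x n) 1 1 - B (x n) 0 1 * B (x n) 1 0 = 1 := by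
    intro n
    have h := hdetB (x n)
    rw [Matrix.det_fin_two] at h
    linarith [h]
  -- the two basic solutions of the unperturbed equation
  set u0 : ℤ → ℝ := fun n => a ^ n * B (x n) 0 0 with hu0def
  set w0 : ℤ → ℝ := fun n => a ^ n * ((n:ℝ) * c * a * B (x n) 0 0 + B (x n) 0 1) with hw0def
  have hmm : ∀ n : ℤ, n - 1 + 1 = n := fun n => by omega
  have hu0eq : ∀ n : ℤ, u0 (n+1) + u0 (n-1) + (v (x n) - E) * u0 n = 0 := by
    intro n
    have h10' := h10 (n-1)
    rw [hmm n] at h10'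
    exact aux_iter_u0 E a c (v (x n)) ha2 ha0 n _ _ _ _ (h00 n) h10'
  have hw0eq : ∀ n : ℤ, w0 (n+1) + w0 (n-1) + (v (x n) - E) * w0 n = 0 := by
    intro n
    have h10' := h10 (n-1)
    rw [hmm n] at h10'
    have h11' := h11 (n-1)
    rw [hmm n] at h11'
    have := aux_iter_w0 E a c (v (x n)) ha2 ha0 n _ _ _ _ _ _ _ _ (h00 n) (h01 n) h10' h11'
    simp only [hu0def, hw0def]
    push_cast
    push_cast at this
    convert this using 3 <;> ring
  have hW : ∀ n : ℤ, u0 (n+1) * w0 n - u0 n * w0 (n+1) = 1 := by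
    intro n
    have := aux_wronskian a c ha2 ha0 n _ _ _ _ _ _ (h10 n) (h11 n) (hdet (n+1))
    simp only [hu0def, hw0def]
    push_cast
    push_cast at this
    convert this using 3 <;> ring
  -- Green's function
  set G : ℤ → ℤ → ℝ := fun p m => u0 m * w0 p - w0 m * u0 p with hGdef
  have hGeq : ∀ p m : ℤ, G (p+1) m + G (p-1) m + (v (x p) - E) * G p m = 0 := by
    intro p m
    simp only [hGdef]
    linear_combination (u0 m) * hw0eq p - (w0 m) * hu0eq p
  have hGdiag : ∀ m : ℤ, G m m = 0 := by intro m; simp only [hGdef]; ring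
  have hGsub : ∀ m : ℤ, G (m-1) m = 1 := by
    intro m
    have h := hW (m-1)
    rw [hmm m] at h
    simp only [hGdef]
    linarith [h]
  -- bounds
  have hentry : ∀ (n : ℤ) (i j : Fin 2), |B (x n) i j| ≤ Cb := by
    intro n i j
    have h1 : ‖B (x n) i j‖ ≤ ‖B (x n)‖ := Matrix.norm_entry_le_entrywise_sup_norm _
    rw [Real.norm_eq_abs] at h1
    exact le_trans h1 (hCb _)
  have habsA : ∀ n : ℤ, |a ^ n| = 1 := by
    intro n
    have hsq : a ^ n * a ^ n = 1 := by rw [← mul_zpow, ha2, one_zpow]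
    have habs2 : |a ^ n| * |a ^ n| = 1 := by rw [← abs_mul, hsq, abs_one]
    nlinarith [abs_nonneg (a ^ n)]
  have hu0bd : ∀ n : ℤ, |u0 n| ≤ Cb := by
    intro n
    simp only [hu0def]
    rw [abs_mul, habsA, one_mul]
    exact hentry n 0 0
  have hw0bd : ∀ n : ℤ, |w0 n| ≤ Cb * (1+|c|) * (1 + |(n:ℝ)|) := by
    intro n
    simp only [hw0def]
    rw [abs_mul, habsA, one_mul]
    have h1 : |(n:ℝ) * c * a * B (x n) 0 0 + B (x n) 0 1|
        ≤ |(n:ℝ)| * |c| * Cb + Cb := by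
      calc |(n:ℝ) * c * a * B (x n) 0 0 + B (x n) 0 1|
          ≤ |(n:ℝ) * c * a * B (x n) 0 0| + |B (x n) 0 1| := abs_add_le _ _
        _ ≤ |(n:ℝ)| * |c| * Cb + Cb := by
            rw [abs_mul, abs_mul, abs_mul, haabs, mul_one]
            have := hentry n 0 0
            have h2 := hentry n 0 1
            have h3 : 0 ≤ |(n:ℝ)| * |c| := by positivity
            nlinarith [abs_nonneg ((n:ℝ)), abs_nonneg c, abs_nonneg (B (x n) 0 0)]
    have h4 : |(n:ℝ)| * |c| * Cb + Cb ≤ Cb * (1+|c|) * (1 + |(n:ℝ)|) := by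
      nlinarith [abs_nonneg ((n:ℝ)), abs_nonneg c]
    linarith
  set K0 : ℝ := 2*Cb*Cb*(1+|c|) + 1 with hK0def
  have hK0 : 0 < K0 := by
    have : 0 ≤ 2*Cb*Cb*(1+|c|) := by positivity
    simp only [hK0def]; linarith
  have hGbd : ∀ p m : ℤ, |G p m| ≤ Cb*Cb*(1+|c|) * ((1+|(p:ℝ)|) + (1+|(m:ℝ)|)) := by
    intro p m
    simp only [hGdef]
    calc |u0 m * w0 p - w0 m * u0 p| ≤ |u0 m| * |w0 p| + |w0 m| * |u0 p| := by
          rw [← abs_mul, ← abs_mul]; exact abs_sub _ _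
      _ ≤ Cb * (Cb * (1+|c|) * (1 + |(p:ℝ)|)) + Cb * (1+|c|) * (1 + |(m:ℝ)|) * Cb := by
          have := hu0bd m; have := hu0bd p; have := hw0bd p; have := hw0bd m
          have hcp : (0:ℝ) ≤ 1 + |c| := by positivity
          nlinarith [abs_nonneg (u0 m), abs_nonneg (u0 p), abs_nonneg (w0 p), abs_nonneg (w0 m),
            abs_nonneg ((p:ℝ)), abs_nonneg ((m:ℝ))]
      _ = Cb*Cb*(1+|c|) * ((1+|(p:ℝ)|) + (1+|(m:ℝ)|)) := by ring
  have hGbd' : ∀ p m : ℤ, 0 ≤ p → p ≤ m → |G p m| ≤ K0 * (1 + |(m:ℝ)|) := by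
    intro p m hp hpm
    have h1 := hGbd p m
    have h2 : |(p:ℝ)| ≤ |(m:ℝ)| := by
      rw [abs_of_nonneg (by exact_mod_cast hp), abs_of_nonneg (by exact_mod_cast le_trans hp hpm)]
      exact_mod_cast hpm
    have h3 : (0:ℝ) ≤ Cb*Cb*(1+|c|) := by positivity
    simp only [hK0def]
    nlinarith [abs_nonneg ((m:ℝ))]
  have hGbdp : ∀ p m : ℤ, |G p m| ≤ (K0 * (2 + |(p:ℝ)|)) * (1 + |(m:ℝ)|) := by
    intro p m
    have h1 := hGbd p m
    have h3 : (0:ℝ) ≤ Cb*Cb*(1+|c|) := by positivity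
    simp only [hK0def]
    nlinarith [abs_nonneg ((m:ℝ)), abs_nonneg ((p:ℝ)), mul_nonneg (abs_nonneg ((p:ℝ))) (abs_nonneg ((m:ℝ)))]
  -- the weight and its tails
  set w : ℤ → ℝ := fun m => (1 + |(m:ℝ)|) * |g m| with hwdef
  have hw0' : ∀ m, 0 ≤ w m := by intro m; simp only [hwdef]; positivity
  have hwsum : Summable w := hg
  have hsummap : ∀ n : ℤ, Summable (fun k : ℕ => w (n + 1 + k)) := by
    intro n
    have hinj : Function.Injective (fun k : ℕ => n + 1 + (k : ℤ)) := by
      intro i j h; simp at h; exact h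
    exact hwsum.comp_injective hinj
  set t : ℤ → ℝ := fun n => ∑' k : ℕ, w (n + 1 + k) with htdef
  have ht0 : ∀ n, 0 ≤ t n := fun n => tsum_nonneg fun k => hw0' _
  have tail_le : ∀ n m : ℤ, n ≤ m → t m ≤ t n := by
    intro n m hnm
    simp only [htdef]
    set j := (m - n).toNat with hj
    have hjz : (j : ℤ) = m - n := Int.toNat_of_nonneg (by omega)
    have hre : (fun k : ℕ => w (m + 1 + k)) = fun k : ℕ => w (n + 1 + (k + j : ℕ)) := by
      funext k; congr 1; push_cast [hjz]; ring
    rw [hre]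
    have hkey := Summable.sum_add_tsum_nat_add j (hsummap n)
    have hfin : 0 ≤ ∑ i ∈ Finset.range j, w (n + 1 + i) := Finset.sum_nonneg fun i _ => hw0' _
    push_cast at hkey ⊢
    linarith
  have httend : Tendsto t atTop (𝓝 0) := by
    have hwn : Summable (fun k : ℕ => w k) := by
      have hinj : Function.Injective (fun k : ℕ => (k : ℤ)) := fun i j h => by simpa using h
      exact hwsum.comp_injective hinj
    have h1 : Tendsto (fun i : ℕ => ∑' k : ℕ, w (k + i)) atTop (𝓝 0) := by
      have := tendsto_sum_nat_add (fun k : ℕ => w k)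
      simpa using this
    have h2 : Tendsto (fun n : ℤ => n.toNat + 1) atTop atTop := by
      apply tendsto_atTop_atTop.mpr
      intro b
      exact ⟨b, fun n hn => by omega⟩
    apply (h1.comp h2).congr'
    filter_upwards [eventually_ge_atTop (0 : ℤ)] with n hn
    simp only [Function.comp_apply, htdef]
    apply tsum_congr
    intro k
    congr 1
    push_cast [Int.toNat_of_nonneg hn]
    ring
  -- pointwise term bound
  have hptwise : ∀ (p m : ℤ) (Kc : ℝ), 0 ≤ Kc → ∀ (fm Cf : ℝ), 0 ≤ Cf → |fm| ≤ Cf →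
      |G p m| ≤ Kc * (1 + |(m:ℝ)|) → |G p m * g m * fm| ≤ (Kc * Cf) * w m := by
    intro p m Kc hKc fm Cf hCf hfm hGb
    calc |G p m * g m * fm| = (|G p m| * |fm|) * |g m| := by rw [abs_mul, abs_mul]; ring
      _ ≤ ((Kc * (1 + |(m:ℝ)|)) * Cf) * |g m| := by
          apply mul_le_mul_of_nonneg_right _ (abs_nonneg _)
          exact mul_le_mul hGb hfm (abs_nonneg _) (mul_nonneg hKc (by positivity))
      _ = (Kc * Cf) * w m := by simp only [hwdef]; ring
  have hKp0 : ∀ p : ℤ, 0 ≤ K0 * (2 + |(p:ℝ)|) := fun p => mul_nonneg hK0.le (by positivity)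
  have hsummable : ∀ (p nn : ℤ) (f : ℤ → ℝ) (Cf : ℝ), 0 ≤ Cf → (∀ m, |f m| ≤ Cf) →
      Summable (fun k : ℕ => |G p (nn + 1 + k) * g (nn + 1 + k) * f (nn + 1 + k)|) := by
    intro p nn f Cf hCf hf
    exact Summable.of_nonneg_of_le (fun k => abs_nonneg _)
      (fun k => hptwise p _ _ (hKp0 p) _ _ hCf (hf _) (hGbdp p _))
      ((hsummap nn).mul_left ((K0 * (2 + |(p:ℝ)|)) * Cf))
  have hsum : ∀ (p nn : ℤ) (f : ℤ → ℝ) (Cf : ℝ), 0 ≤ Cf → (∀ m, |f m| ≤ Cf) →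
      Summable (fun k : ℕ => G p (nn + 1 + k) * g (nn + 1 + k) * f (nn + 1 + k)) :=
    fun p nn f Cf h1 h2 => (hsummable p nn f Cf h1 h2).of_abs
  -- uniform estimate on the tail sums
  have hS_gen : ∀ nn : ℤ, 0 ≤ nn → ∀ (f : ℤ → ℝ) (Cf : ℝ), 0 ≤ Cf → (∀ m, |f m| ≤ Cf) →
      |∑' k : ℕ, G nn (nn + 1 + k) * g (nn + 1 + k) * f (nn + 1 + k)| ≤ (K0 * Cf) * t nn := by
    intro nn hnn f Cf hCf hf
    have h1 : |∑' k : ℕ, G nn (nn+1+k) * g (nn+1+k) * f (nn+1+k)|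
        ≤ ∑' k : ℕ, |G nn (nn+1+k) * g (nn+1+k) * f (nn+1+k)| := by
      rw [← Real.norm_eq_abs]
      have := norm_tsum_le_tsum_norm (f := fun k : ℕ => G nn (nn+1+k) * g (nn+1+k) * f (nn+1+k))
        (by simpa only [Real.norm_eq_abs] using hsummable nn nn f Cf hCf hf)
      simpa only [Real.norm_eq_abs] using this
    have h2 : ∑' k : ℕ, |G nn (nn+1+k) * g (nn+1+k) * f (nn+1+k)|
        ≤ ∑' k : ℕ, (K0 * Cf) * w (nn+1+k) := by
      apply Summable.tsum_le_tsum _ (hsummable nn nn f Cf hCf hf) ((hsummap nn).mul_left _)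
      intro k
      exact hptwise nn _ K0 hK0.le _ Cf hCf (hf _) (hGbd' nn _ hnn (by omega))
    have h3 : ∑' k : ℕ, (K0 * Cf) * w (nn+1+k) = (K0 * Cf) * t nn := by
      exact tsum_mul_left
    linarith
  -- choice of N
  obtain ⟨N, hN0, hNt⟩ : ∃ N : ℤ, 0 ≤ N ∧ K0 * t N ≤ 1/2 := by
    have hpos : (0:ℝ) < 1/(2*K0) := by positivity
    have hev : ∀ᶠ n : ℤ in atTop, t n < 1/(2*K0) := httend.eventually (gt_mem_nhds hpos)
    obtain ⟨N, h1, h2⟩ := (hev.and (eventually_ge_atTop (0:ℤ))).exists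
    refine ⟨N, h2, ?_⟩
    rw [div_eq_mul_inv, one_mul] at h1
    have := ht0 N
    calc K0 * t N ≤ K0 * (2*K0)⁻¹ := by nlinarith
      _ = 1/2 := by
          rw [mul_comm 2 K0, mul_inv, ← mul_assoc, mul_inv_cancel₀ (ne_of_gt hK0), one_mul]
          norm_num
  -- the fixed point map
  have hfb : ∀ (f : BoundedContinuousFunction ℤ ℝ) (m : ℤ), |f m| ≤ ‖f‖ := fun f m => by
    rw [← Real.norm_eq_abs]; exact f.norm_coe_le_norm m
  set S : BoundedContinuousFunction ℤ ℝ → ℤ → ℝ :=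
    fun f nn => ∑' k : ℕ, G nn (nn + 1 + k) * g (nn + 1 + k) * f (nn + 1 + k) with hSdef
  have hS_le : ∀ (f : BoundedContinuousFunction ℤ ℝ) (nn : ℤ), 0 ≤ nn →
      |S f nn| ≤ (K0 * ‖f‖) * t nn :=
    fun f nn hnn => hS_gen nn hnn (⇑f) ‖f‖ (norm_nonneg f) (hfb f)
  have hΦbdd : ∀ f : BoundedContinuousFunction ℤ ℝ, ∀ nn : ℤ,
      ‖(if N ≤ nn then u0 nn - S f nn else u0 nn)‖ ≤ Cb + (K0 * ‖f‖) * t N := by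
    intro f nn
    rw [Real.norm_eq_abs]
    have hKf : 0 ≤ K0 * ‖f‖ := mul_nonneg hK0.le (norm_nonneg f)
    split_ifs with h
    · have h1 := hS_le f nn (le_trans hN0 h)
      have h2 : (K0*‖f‖) * t nn ≤ (K0*‖f‖) * t N := mul_le_mul_of_nonneg_left (tail_le N nn h) hKf
      calc |u0 nn - S f nn| ≤ |u0 nn| + |S f nn| := abs_sub _ _
        _ ≤ Cb + (K0*‖f‖) * t N := by linarith [hu0bd nn]
    · have h3 : 0 ≤ (K0*‖f‖) * t N := mul_nonneg hKf (ht0 N)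
      linarith [hu0bd nn]
  set Φ : BoundedContinuousFunction ℤ ℝ → BoundedContinuousFunction ℤ ℝ := fun f =>
    BoundedContinuousFunction.ofNormedAddCommGroup
      (fun nn => if N ≤ nn then u0 nn - S f nn else u0 nn)
      continuous_of_discreteTopology (Cb + (K0 * ‖f‖) * t N) (hΦbdd f) with hΦdef
  have hΦcoe : ∀ f nn, Φ f nn = if N ≤ nn then u0 nn - S f nn else u0 nn := fun f nn => rfl
  have hcontr : ContractingWith (1/2 : NNReal) Φ := by
    constructor
    · exact NNReal.coe_lt_coe.mp (by norm_num)
    · apply LipschitzWith.of_dist_le_mul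
      intro f f'
      have hhalf : ((1/2 : NNReal) : ℝ) = 1/2 := by norm_num
      rw [hhalf]
      apply (BoundedContinuousFunction.dist_le (by positivity)).mpr
      intro nn
      rw [Real.dist_eq, hΦcoe, hΦcoe]
      split_ifs with h
      · have hfb' : ∀ m : ℤ, |f m - f' m| ≤ dist f f' := by
          intro m
          have hdc := BoundedContinuousFunction.dist_coe_le_dist (f := f) (g := f') m
          rw [Real.dist_eq] at hdc
          exact hdc
        have hsumf := hsum nn nn (⇑f) ‖f‖ (norm_nonneg f) (hfb f)
        have hsumf' := hsum nn nn (⇑f') ‖f'‖ (norm_nonneg f') (hfb f')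
        have hdiff : (u0 nn - S f nn) - (u0 nn - S f' nn)
            = ∑' k : ℕ, G nn (nn+1+k) * g (nn+1+k) * (f' (nn+1+k) - f (nn+1+k)) := by
          have heq : S f' nn - S f nn
              = ∑' k : ℕ, G nn (nn+1+k) * g (nn+1+k) * (f' (nn+1+k) - f (nn+1+k)) := by
            simp only [hSdef]
            rw [← Summable.tsum_sub hsumf' hsumf]
            apply tsum_congr; intro k; ring
          rw [← heq]; ring
        rw [hdiff]
        have hbd := hS_gen nn (le_trans hN0 h) (fun m => f' m - f m) (dist f f')
          dist_nonneg (fun m => by rw [abs_sub_comm]; exact hfb' m)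
        have h2 : (K0 * dist f f') * t nn ≤ (K0 * dist f f') * t N :=
          mul_le_mul_of_nonneg_left (tail_le N nn h) (mul_nonneg hK0.le dist_nonneg)
        have h3 : (K0 * dist f f') * t N ≤ (1/2) * dist f f' := by
          have hd := dist_nonneg (x := f) (y := f')
          nlinarith [ht0 N]
        calc |∑' k : ℕ, G nn (nn+1+k) * g (nn+1+k) * (f' (nn+1+k) - f (nn+1+k))|
            ≤ (K0 * dist f f') * t nn := hbd
          _ ≤ 1/2 * dist f f' := le_trans h2 h3
      · simp only [sub_self, abs_zero]
        positivity
  set F : BoundedContinuousFunction ℤ ℝ := ContractingWith.fixedPoint Φ hcontr with hFdef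
  have hFfixed : Φ F = F := hcontr.fixedPoint_isFixedPt
  have hFfix : ∀ nn : ℤ, N ≤ nn → F nn = u0 nn - S F nn := by
    intro nn hnn
    have h := congrArg (fun ff : BoundedContinuousFunction ℤ ℝ => ff nn) hFfixed
    rw [hΦcoe F nn, if_pos hnn] at h
    exact h.symm
  -- the perturbed eigenvalue equation for F in the range n ≥ N+1
  have hFeq : ∀ nn : ℤ, N + 1 ≤ nn →
      F (nn+1) + F (nn-1) + (v (x nn) + g nn) * F nn = E * F nn := by
    intro nn hnn
    have hsF : ∀ p nn' : ℤ,
        Summable (fun k : ℕ => G p (nn' + 1 + k) * g (nn' + 1 + k) * F (nn' + 1 + k)) :=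
      fun p nn' => hsum p nn' (⇑F) ‖F‖ (norm_nonneg F) (hfb F)
    set Hs : ℤ → ℕ → ℝ := fun p k => G p (nn + 1 + k) * g (nn + 1 + k) * F (nn + 1 + k)
      with hHsdef
    have hsHs : ∀ p, Summable (Hs p) := fun p => hsF p nn
    have key2 : S F (nn+1) = ∑' k : ℕ, Hs (nn+1) k := by
      have h1 : ∑' k : ℕ, Hs (nn+1) k = Hs (nn+1) 0 + ∑' k : ℕ, Hs (nn+1) (k+1) :=
        Summable.tsum_eq_zero_add (hsHs (nn+1))
      have h2 : Hs (nn+1) 0 = 0 := by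
        simp only [hHsdef, Nat.cast_zero, add_zero]
        rw [hGdiag]
        ring
      have h3 : S F (nn+1) = ∑' k : ℕ, Hs (nn+1) (k+1) := by
        simp only [hSdef, hHsdef]
        apply tsum_congr
        intro k
        have hidx : nn + 1 + 1 + (k:ℤ) = nn + 1 + ((k+1 : ℕ) : ℤ) := by push_cast; ring
        rw [hidx]
      rw [h3, h1, h2, zero_add]
    have key1 : S F (nn-1) = g nn * F nn + ∑' k : ℕ, Hs (nn-1) k := by
      have hSm1 : S F (nn-1) = ∑' k : ℕ, G (nn-1) (nn + k) * g (nn + k) * F (nn + k) := by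
        simp only [hSdef]
        apply tsum_congr
        intro k
        have hidx : nn - 1 + 1 + (k:ℤ) = nn + (k:ℤ) := by ring
        rw [hidx]
      have hJ : Summable (fun k : ℕ => G (nn-1) (nn + k) * g (nn + k) * F (nn + k)) := by
        apply (hsF (nn-1) (nn-1)).congr
        intro k
        have hidx : nn - 1 + 1 + (k:ℤ) = nn + (k:ℤ) := by ring
        rw [hidx]
      have h1 : ∑' k : ℕ, G (nn-1) (nn + k) * g (nn + k) * F (nn + k)
          = G (nn-1) (nn + ((0:ℕ):ℤ)) * g (nn + ((0:ℕ):ℤ)) * F (nn + ((0:ℕ):ℤ))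
            + ∑' k : ℕ, G (nn-1) (nn + ((k+1 : ℕ):ℤ)) * g (nn + ((k+1 : ℕ):ℤ)) * F (nn + ((k+1 : ℕ):ℤ)) :=
        Summable.tsum_eq_zero_add hJ
      have h2 : G (nn-1) (nn + ((0:ℕ):ℤ)) * g (nn + ((0:ℕ):ℤ)) * F (nn + ((0:ℕ):ℤ))
          = g nn * F nn := by
        simp only [Nat.cast_zero, add_zero]
        rw [hGsub nn]
        ring
      have h3 : ∑' k : ℕ, G (nn-1) (nn + ((k+1 : ℕ):ℤ)) * g (nn + ((k+1 : ℕ):ℤ)) * F (nn + ((k+1 : ℕ):ℤ))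
          = ∑' k : ℕ, Hs (nn-1) k := by
        apply tsum_congr
        intro k
        simp only [hHsdef]
        have hidx : nn + ((k+1 : ℕ):ℤ) = nn + 1 + (k:ℤ) := by push_cast; ring
        rw [hidx]
      rw [hSm1, h1, h2, h3]
    have key3 : (∑' k : ℕ, Hs (nn+1) k) + (∑' k : ℕ, Hs (nn-1) k)
        + (v (x nn) - E) * (∑' k : ℕ, Hs nn k) = 0 := by
      have e1 : ∀ k : ℕ, Hs (nn+1) k + Hs (nn-1) k + (v (x nn) - E) * Hs nn k = 0 := by
        intro k
        simp only [hHsdef]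
        linear_combination (g (nn+1+(k:ℤ)) * F (nn+1+(k:ℤ))) * hGeq nn (nn+1+(k:ℤ))
      have e2 : ∑' k : ℕ, (Hs (nn+1) k + Hs (nn-1) k + (v (x nn) - E) * Hs nn k) = 0 := by
        rw [tsum_congr e1, tsum_zero]
      have e3 : ∑' k : ℕ, (Hs (nn+1) k + Hs (nn-1) k + (v (x nn) - E) * Hs nn k)
          = (∑' k : ℕ, Hs (nn+1) k) + (∑' k : ℕ, Hs (nn-1) k)
            + (∑' k : ℕ, (v (x nn) - E) * Hs nn k) := by
        rw [Summable.tsum_add ((hsHs (nn+1)).add (hsHs (nn-1))) ((hsHs nn).mul_left _),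
          Summable.tsum_add (hsHs (nn+1)) (hsHs (nn-1))]
      have e4 : ∑' k : ℕ, (v (x nn) - E) * Hs nn k = (v (x nn) - E) * ∑' k : ℕ, Hs nn k :=
        tsum_mul_left
      rw [← e4]
      linarith [e2, e3]
    have hSn : S F nn = ∑' k : ℕ, Hs nn k := by simp only [hSdef, hHsdef]
    have hcomb : S F (nn+1) + S F (nn-1) + (v (x nn) - E) * S F nn = g nn * F nn := by
      rw [key1, key2, hSn]
      linarith [key3]
    have hFn : F nn = u0 nn - S F nn := hFfix nn (by omega)
    have hF1 : F (nn+1) = u0 (nn+1) - S F (nn+1) := hFfix (nn+1) (by omega)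
    have hFm1 : F (nn-1) = u0 (nn-1) - S F (nn-1) := hFfix (nn-1) (by omega)
    linear_combination hF1 + hFm1 + hu0eq nn - hcomb + (v (x nn) - E) * hFn
  -- extend backwards
  set P : ℕ → ℝ × ℝ :=
    iter2 (fun k p => (p.2, (E - v (x (N - (k:ℤ))) - g (N - (k:ℤ))) * p.2 - p.1)) (F (N+1), F N)
    with hPdef
  set q : ℕ → ℝ := fun k => (P k).1 with hqdef
  have hq0 : q 0 = F (N+1) := rfl
  have hq1 : q 1 = F N := rfl
  have hqrec : ∀ k : ℕ, q (k+2) = (E - v (x (N - (k:ℤ))) - g (N - (k:ℤ))) * q (k+1) - q k :=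
    fun k => rfl
  set u : ℤ → ℝ := fun n => if N ≤ n then F n else q (N + 1 - n).toNat with hudef
  have hu_ge : ∀ n : ℤ, N ≤ n → u n = F n := by
    intro n hn; simp only [hudef]; rw [if_pos hn]
  have hu_q : ∀ n : ℤ, n ≤ N + 1 → u n = q (N + 1 - n).toNat := by
    intro n hn
    simp only [hudef]
    split_ifs with hc
    · have hcase : n = N ∨ n = N + 1 := by omega
      rcases hcase with h | h
      · rw [h, show (N + 1 - N).toNat = 1 from by omega]; exact hq1.symm
      · rw [h, show (N + 1 - (N+1)).toNat = 0 from by omega]; exact hq0.symm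
    · rfl
  refine ⟨u, ?_, ?_⟩
  · intro n
    rw [hxx n]
    by_cases hc : N + 1 ≤ n
    · rw [hu_ge (n+1) (by omega), hu_ge (n-1) (by omega), hu_ge n (by omega)]
      exact hFeq n hc
    · push_neg at hc
      set k : ℕ := (N - n).toNat with hkdef
      have hk : (k:ℤ) = N - n := Int.toNat_of_nonneg (by omega)
      have e1 : u (n+1) = q k := by
        rw [hu_q (n+1) (by omega)]
        congr 1
        omega
      have e2 : u n = q (k+1) := by
        rw [hu_q n (by omega)]
        congr 1
        omega
      have e3 : u (n-1) = q (k+2) := by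
        rw [hu_q (n-1) (by omega)]
        congr 1
        omega
      have e4 := hqrec k
      have hNk : N - (k:ℤ) = n := by omega
      rw [hNk] at e4
      rw [e1, e2, e3, e4]
      ring
  · have hbound : ∀ᶠ n : ℤ in atTop,
        |u n - a ^ n * B (θ + (n:ℝ) • α) 0 0| ≤ (K0 * ‖F‖) * t n := by
      filter_upwards [eventually_ge_atTop N] with n hn
      rw [hxx n]
      have h1 : u n - a ^ n * B (x n) 0 0 = -(S F n) := by
        rw [hu_ge n hn, hFfix n hn]
        simp only [hu0def]
        ring
      rw [h1, abs_neg]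
      exact hS_le F n (le_trans hN0 hn)
    have htendzero : Tendsto (fun n : ℤ => |u n - a ^ n * B (θ + (n:ℝ) • α) 0 0|)
        atTop (𝓝 0) := by
      have hzero : Tendsto (fun n : ℤ => (K0 * ‖F‖) * t n) atTop (𝓝 0) := by
        have h := httend.const_mul (K0 * ‖F‖)
        simpa using h
      exact squeeze_zero' (Eventually.of_forall fun n => abs_nonneg _) hbound hzero
    rw [htendzero.limsup_eq]
    exact hε.le
end
end
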